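/- arXiv:1810.11885 — 3 statements merged into one kernel-verified Lean document; each statement's English description precedes it below -/
import Mathlib

section
/- The fused transfer matrices have central zeroes: for every m ∈ {1, …, n}, every a ∈ {1, …, N}, and every integer r with 1 ≤ r ≤ m−1, one has T_m^{(K)}(ξ_a + rη) = 0 as an operator on H. -/
open Matrix BigOperators

noncomputable section

namespace GLnSoV

/-- The permutation operator on `ℂ^n ⊗ ℂ^n`. -/
def permOp (n : ℕ) : Matrix (Fin n × Fin n) (Fin n × Fin n) ℂ :=
  Matrix.of fun p q => if p.1 = q.2 ∧ p.2 = q.1 then (1 : ℂ) else 0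

/-- The rational `gl_n` R-matrix `R(λ) = λ·Id + η·P`. -/
def Rmat (n : ℕ) (η lam : ℂ) : Matrix (Fin n × Fin n) (Fin n × Fin n) ℂ :=
  lam • (1 : Matrix (Fin n × Fin n) (Fin n × Fin n) ℂ) + η • permOp n

/-- `R(λ)` acting on the `a`-th and `b`-th factors of a tensor product of copies of `ℂ^n`. -/
def Rab (n : ℕ) (η : ℂ) {ι : Type} [Fintype ι] [DecidableEq ι] (a b : ι) (lam : ℂ) :
    Matrix (ι → Fin n) (ι → Fin n) ℂ :=
  Matrix.of fun x y =>
    Rmat n η lam (x a, x b) (y a, y b) *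
      ∏ c ∈ Finset.univ.filter (fun c => c ≠ a ∧ c ≠ b), (if x c = y c then (1 : ℂ) else 0)

/-- `R(λ)` acting on the auxiliary space and the `j`-th site of the quantum space. -/
def Raux (n N : ℕ) (η : ℂ) (lam : ℂ) (j : Fin N) :
    Matrix (Fin n × (Fin N → Fin n)) (Fin n × (Fin N → Fin n)) ℂ :=
  Matrix.of fun p q =>
    Rmat n η lam (p.1, p.2 j) (q.1, q.2 j) *
      ∏ c ∈ Finset.univ.filter (fun c => c ≠ j), (if p.2 c = q.2 c then (1 : ℂ) else 0)

/-- The twist matrix `K` acting on the auxiliary space. -/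
def Kaux (n N : ℕ) (K : Matrix (Fin n) (Fin n) ℂ) :
    Matrix (Fin n × (Fin N → Fin n)) (Fin n × (Fin N → Fin n)) ℂ :=
  Matrix.of fun p q => K p.1 q.1 * (if p.2 = q.2 then (1 : ℂ) else 0)

/-- The twisted monodromy matrix `M^{(K)}(λ) = K_a R_{a,N}(λ-ξ_N) ⋯ R_{a,1}(λ-ξ_1)`. -/
def monodromy (n N : ℕ) (η : ℂ) (ξ : Fin N → ℂ) (K : Matrix (Fin n) (Fin n) ℂ) (lam : ℂ) :
    Matrix (Fin n × (Fin N → Fin n)) (Fin n × (Fin N → Fin n)) ℂ :=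
  Kaux n N K * (List.ofFn (fun j : Fin N => Raux n N η (lam - ξ j.rev) j.rev)).prod

/-- The operator permuting the tensor factors of `(ℂ^n)^{⊗m}` according to `π`. -/
def permTensorOp (n m : ℕ) (π : Equiv.Perm (Fin m)) :
    Matrix (Fin m → Fin n) (Fin m → Fin n) ℂ :=
  Matrix.of fun v w => if v = w ∘ π then (1 : ℂ) else 0

/-- The antisymmetrizer `P⁻_{1…m}` on `(ℂ^n)^{⊗m}`. -/
def antisym (n m : ℕ) : Matrix (Fin m → Fin n) (Fin m → Fin n) ℂ :=
  (m.factorial : ℂ)⁻¹ •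
    ∑ π : Equiv.Perm (Fin m), ((Equiv.Perm.sign π : ℤ) : ℂ) • permTensorOp n m π

/-- The monodromy matrix with the `j`-th copy of `(ℂ^n)^{⊗m}` as auxiliary space. -/
def MauxJ (n N : ℕ) (η : ℂ) (ξ : Fin N → ℂ) (K : Matrix (Fin n) (Fin n) ℂ) (m : ℕ)
    (j : Fin m) (lam : ℂ) :
    Matrix ((Fin m → Fin n) × (Fin N → Fin n)) ((Fin m → Fin n) × (Fin N → Fin n)) ℂ :=
  Matrix.of fun p q =>
    monodromy n N η ξ K lam (p.1 j, p.2) (q.1 j, q.2) *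
      ∏ c ∈ Finset.univ.filter (fun c => c ≠ j), (if p.1 c = q.1 c then (1 : ℂ) else 0)

/-- The antisymmetrizer tensored with the identity of the quantum space. -/
def antisymH (n N m : ℕ) :
    Matrix ((Fin m → Fin n) × (Fin N → Fin n)) ((Fin m → Fin n) × (Fin N → Fin n)) ℂ :=
  Matrix.of fun p q => antisym n m p.1 q.1 * (if p.2 = q.2 then (1 : ℂ) else 0)

/-- The fused transfer matrix `T_m^{(K)}(λ)`, the trace over the `m` auxiliary copies of `ℂ^n`
of `P⁻_{1…m} M₁(λ) M₂(λ-η) ⋯ M_m(λ-(m-1)η)`. -/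
def transfer (n N : ℕ) (η : ℂ) (ξ : Fin N → ℂ) (K : Matrix (Fin n) (Fin n) ℂ)
    (m : ℕ) (lam : ℂ) : Matrix (Fin N → Fin n) (Fin N → Fin n) ℂ :=
  Matrix.of fun x y =>
    ∑ v : Fin m → Fin n,
      (antisymH n N m *
        (List.ofFn (fun j : Fin m => MauxJ n N η ξ K m j (lam - (j : ℕ) * η))).prod)
        (v, x) (v, y)

/-- `K ⊗ ⋯ ⊗ K` on `(ℂ^n)^{⊗m}`. -/
def Ktensor (n : ℕ) (K : Matrix (Fin n) (Fin n) ℂ) (m : ℕ) :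
    Matrix (Fin m → Fin n) (Fin m → Fin n) ℂ :=
  Matrix.of fun v w => ∏ j, K (v j) (w j)

/-- The asymptotic coefficient `tr(P⁻_{1…m} K₁ ⋯ K_m)`. -/
def asymCoef (n : ℕ) (K : Matrix (Fin n) (Fin n) ℂ) (m : ℕ) : ℂ :=
  (antisym n m * Ktensor n K m).trace

/-- The scalar quantum determinant. -/
def qdet (n N : ℕ) (η : ℂ) (ξ : Fin N → ℂ) (K : Matrix (Fin n) (Fin n) ℂ) (lam : ℂ) : ℂ :=
  K.det * ∏ b, ((lam - ξ b + η) * ∏ m ∈ Finset.Icc 1 (n - 1), (lam - ξ b - (m : ℂ) * η))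

/-- The candidate eigenvalue function `t₁^{(K,x)}(λ)`. -/
def t1fun (n N : ℕ) (ξ : Fin N → ℂ) (K : Matrix (Fin n) (Fin n) ℂ) (x : Fin N → ℂ)
    (lam : ℂ) : ℂ :=
  K.trace * ∏ a, (lam - ξ a) +
    ∑ a, x a * ∏ b ∈ Finset.univ.erase a, (lam - ξ b) / (ξ a - ξ b)

/-- The interpolation coefficients `g_a^{(m+1)}(λ)` (second argument is `m`). -/
def gfun (N : ℕ) (η : ℂ) (ξ : Fin N → ℂ) (m : ℕ) (a : Fin N) (lam : ℂ) : ℂ :=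
  (∏ b ∈ Finset.univ.erase a, (lam - ξ b) / (ξ a - ξ b)) *
    ∏ b, ∏ r ∈ Finset.Icc 1 m, (ξ a - ξ b - (r : ℂ) * η)⁻¹

/-- The candidate eigenvalue functions `t_m^{(K,x)}(λ)`, defined recursively. -/
def tfun (n N : ℕ) (η : ℂ) (ξ : Fin N → ℂ) (K : Matrix (Fin n) (Fin n) ℂ)
    (x : Fin N → ℂ) : ℕ → ℂ → ℂ
  | 0, _ => 1
  | 1, lam => t1fun n N ξ K x lam
  | m + 2, lam =>
      (∏ b, ∏ r ∈ Finset.Icc 1 (m + 1), (lam - ξ b - (r : ℂ) * η)) *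
        (asymCoef n K (m + 2) * ∏ b, (lam - ξ b) +
          ∑ a, gfun N η ξ (m + 1) a lam * x a * tfun n N η ξ K x (m + 1) (ξ a - η))

/-- The SoV operator `∏_{a} (T₁^{(K)}(ξ_a))^{h_a}`. -/
def sovOp (n N : ℕ) (η : ℂ) (ξ : Fin N → ℂ) (K : Matrix (Fin n) (Fin n) ℂ)
    (h : Fin N → Fin n) : Matrix (Fin N → Fin n) (Fin N → Fin n) ℂ :=
  (List.ofFn (fun a : Fin N => transfer n N η ξ K 1 (ξ a) ^ (h a : ℕ))).prod

/-- The SoV covector `⟨h| = ⟨S| ∏_a (T₁^{(K)}(ξ_a))^{h_a}`. -/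
def sovCovector (n N : ℕ) (η : ℂ) (ξ : Fin N → ℂ) (K : Matrix (Fin n) (Fin n) ℂ)
    (S : (Fin N → Fin n) → ℂ) (h : Fin N → Fin n) : (Fin N → Fin n) → ℂ :=
  S ᵥ* sovOp n N η ξ K h

/-- The SoV basis hypothesis: the covectors `⟨h|` form a basis of the dual space. -/
def sovBasisHyp (n N : ℕ) (η : ℂ) (ξ : Fin N → ℂ) (K : Matrix (Fin n) (Fin n) ℂ)
    (S : (Fin N → Fin n) → ℂ) : Prop :=
  ∃ B : Module.Basis (Fin N → Fin n) ℂ ((Fin N → Fin n) → ℂ),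
    ∀ h, B h = sovCovector n N η ξ K S h

/-- The coefficient `α₁(λ) = ᾱ ∏_a (λ + η - ξ_a)`. -/
def alpha1 (N : ℕ) (η : ℂ) (ξ : Fin N → ℂ) (abar lam : ℂ) : ℂ :=
  abar * ∏ a, (lam + η - ξ a)

/-- The coefficients `α_b(λ)` of the quantum spectral curve. -/
def alphaF (N : ℕ) (η : ℂ) (ξ : Fin N → ℂ) (abar : ℂ) : ℕ → ℂ → ℂ
  | 0, _ => -1
  | j + 1, lam =>
      (-1 : ℂ) ^ j * ∏ h ∈ Finset.range (j + 1), alpha1 N η ξ abar (lam - (h : ℂ) * η)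


/-! ### Auxiliary machinery for the proof of the central zeroes -/

section AuxMachinery

open Sum

variable {n N m : ℕ}

/-- View a pair of tuples as a single function on a sum type. -/
def uu (p : (Fin m → Fin n) × (Fin N → Fin n)) : Fin m ⊕ Fin N → Fin n :=
  Sum.elim p.1 p.2

/-- Inverse of `uu`. -/
def vvv (h : Fin m ⊕ Fin N → Fin n) : (Fin m → Fin n) × (Fin N → Fin n) :=
  (fun j => h (Sum.inl j), fun i => h (Sum.inr i))

lemma uu_vvv (h : Fin m ⊕ Fin N → Fin n) : uu (n := n) (vvv h) = h := by
  funext s; cases s <;> rfl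

lemma vvv_uu (p : (Fin m → Fin n) × (Fin N → Fin n)) : vvv (uu p) = p := rfl

lemma uu_eq_iff {p : (Fin m → Fin n) × (Fin N → Fin n)} {h : Fin m ⊕ Fin N → Fin n} :
    uu p = h ↔ p = vvv h :=
  ⟨fun e => by rw [← vvv_uu p, e], fun e => by rw [e, uu_vvv]⟩

/-- The permutation operator on the full space associated to a permutation of all
tensor slots. -/
def PF (e : Equiv.Perm (Fin m ⊕ Fin N)) :
    Matrix ((Fin m → Fin n) × (Fin N → Fin n)) ((Fin m → Fin n) × (Fin N → Fin n)) ℂ :=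
  Matrix.of fun p q => if uu p = uu q ∘ e then 1 else 0

lemma PF_apply (e : Equiv.Perm (Fin m ⊕ Fin N)) (p q) :
    PF (n := n) e p q = if uu p = uu q ∘ e then 1 else 0 := rfl

lemma PF_apply_left (e : Equiv.Perm (Fin m ⊕ Fin N)) (p q) :
    PF (n := n) e p q = if p = vvv (uu q ∘ e) then 1 else 0 := by
  rw [PF_apply]; exact if_congr uu_eq_iff rfl rfl

lemma comp_symm_iff {f g : Fin m ⊕ Fin N → Fin n} {e : Equiv.Perm (Fin m ⊕ Fin N)} :
    f = g ∘ e ↔ g = f ∘ e.symm := by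
  constructor
  · intro h; funext s; rw [h]; simp
  · intro h; funext s; rw [h]; simp

lemma PF_apply_right (e : Equiv.Perm (Fin m ⊕ Fin N)) (p q) :
    PF (n := n) e p q = if q = vvv (uu p ∘ e.symm) then 1 else 0 := by
  rw [PF_apply]; exact if_congr (comp_symm_iff.trans uu_eq_iff) rfl rfl

lemma PF_one : PF (n := n) (N := N) (m := m) (Equiv.refl _) = 1 := by
  ext p q
  rw [PF_apply, Matrix.one_apply]
  have h : (uu p = uu q ∘ ⇑(Equiv.refl (Fin m ⊕ Fin N))) ↔ p = q := by
    rw [Equiv.coe_refl, Function.comp_id, uu_eq_iff, vvv_uu]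
  exact if_congr h rfl rfl

lemma PF_mul (e f : Equiv.Perm (Fin m ⊕ Fin N)) :
    PF (n := n) e * PF f = PF (e.trans f) := by
  ext p q
  rw [Matrix.mul_apply, Fintype.sum_eq_single (vvv (uu q ∘ f))]
  · rw [PF_apply, PF_apply, PF_apply, uu_vvv, if_pos rfl, mul_one, Equiv.coe_trans,
      ← Function.comp_assoc]
  · intro w hw
    rw [PF_apply e p w, PF_apply_left f w q, if_neg hw, mul_zero]

lemma prodIte {α : Type*} (s : Finset α) (P : α → Prop) [DecidablePred P] :
    (∏ c ∈ s, if P c then (1 : ℂ) else 0) = if ∀ c ∈ s, P c then 1 else 0 := by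
  by_cases h : ∀ c ∈ s, P c
  · rw [if_pos h, Finset.prod_eq_one]
    intro c hc; rw [if_pos (h c hc)]
  · rw [if_neg h]
    push_neg at h
    obtain ⟨c, hc, hPc⟩ := h
    exact Finset.prod_eq_zero hc (by rw [if_neg hPc])

/-- Embedding of an operator on `ℂ^n ⊗ H` acting on the `j`-th auxiliary slot. -/
def iota (j : Fin m) (A : Matrix (Fin n × (Fin N → Fin n)) (Fin n × (Fin N → Fin n)) ℂ) :
    Matrix ((Fin m → Fin n) × (Fin N → Fin n)) ((Fin m → Fin n) × (Fin N → Fin n)) ℂ :=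
  Matrix.of fun p q =>
    A (p.1 j, p.2) (q.1 j, q.2) *
      ∏ c ∈ Finset.univ.filter (fun c => c ≠ j), (if p.1 c = q.1 c then (1 : ℂ) else 0)

lemma iota_one (j : Fin m) : iota (n := n) (N := N) j 1 = 1 := by
  ext p q
  simp only [iota, Matrix.of_apply, Matrix.one_apply, prodIte]
  by_cases h1 : (p.1 j, p.2) = (q.1 j, q.2)
  · by_cases h2 : ∀ c ∈ Finset.univ.filter (fun c => c ≠ j), p.1 c = q.1 c
    · have hpq : p = q := by
        obtain ⟨h1a, h1b⟩ := Prod.mk.injEq _ _ _ _ ▸ h1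
        refine Prod.ext ?_ h1b
        funext c
        by_cases hc : c = j
        · subst hc; exact h1a
        · exact h2 c (by simp [hc])
      rw [if_pos h1, if_pos h2, if_pos hpq, one_mul]
    · have hpq : p ≠ q := fun h => h2 (by subst h; simp)
      rw [if_neg h2, mul_zero, if_neg hpq]
  · have hpq : p ≠ q := fun h => h1 (by rw [h])
    rw [if_neg h1, zero_mul, if_neg hpq]

lemma sum_eq_sum_update {j : Fin m} (x : Fin m → Fin n) (F : (Fin m → Fin n) → ℂ) :
    ∑ w1 : Fin m → Fin n,
        F w1 * (if ∀ c ∈ Finset.univ.filter (fun c => c ≠ j), x c = w1 c then (1 : ℂ) else 0)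
      = ∑ k : Fin n, F (Function.update x j k) := by
  classical
  have h1 : ∀ w1 : Fin m → Fin n,
      F w1 * (if ∀ c ∈ Finset.univ.filter (fun c => c ≠ j), x c = w1 c then (1 : ℂ) else 0)
        = if (∀ c ∈ Finset.univ.filter (fun c => c ≠ j), x c = w1 c) then F w1 else 0 := by
    intro w1; split_ifs <;> simp
  simp only [h1]
  rw [← Finset.sum_filter]
  refine Finset.sum_nbij' (i := fun w1 => w1 j) (j := fun k => Function.update x j k)
    (fun w1 _ => Finset.mem_univ _) ?memj ?li ?ri ?val
  case memj =>
    intro k _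
    simp only [Finset.mem_filter, Finset.mem_univ, true_and]
    intro c hc
    exact (Function.update_of_ne hc _ _).symm
  case li =>
    intro w1 hw1
    simp only [Finset.mem_filter, Finset.mem_univ, true_and] at hw1
    show Function.update x j (w1 j) = w1
    funext c
    by_cases hc : c = j
    · subst hc; simp
    · rw [Function.update_of_ne hc]
      exact hw1 c hc
  case ri =>
    intro k _
    show Function.update x j k j = k
    simp
  case val =>
    intro w1 hw1
    simp only [Finset.mem_filter, Finset.mem_univ, true_and] at hw1
    show F w1 = F (Function.update x j (w1 j))
    congr 1
    funext c
    by_cases hc : c = j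
    · subst hc; simp
    · rw [Function.update_of_ne hc]
      exact (hw1 c hc).symm

lemma iota_mul (j : Fin m)
    (A B : Matrix (Fin n × (Fin N → Fin n)) (Fin n × (Fin N → Fin n)) ℂ) :
    iota (N := N) j (A * B) = iota j A * iota j B := by
  ext p q
  simp only [iota, Matrix.of_apply, Matrix.mul_apply]
  have hR : ∑ w : (Fin m → Fin n) × (Fin N → Fin n),
        (A (p.1 j, p.2) (w.1 j, w.2) *
          ∏ c ∈ Finset.univ.filter (fun c => c ≠ j), (if p.1 c = w.1 c then (1:ℂ) else 0)) *
        (B (w.1 j, w.2) (q.1 j, q.2) *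
          ∏ c ∈ Finset.univ.filter (fun c => c ≠ j), (if w.1 c = q.1 c then (1:ℂ) else 0))
      = ∑ w2 : Fin N → Fin n, ∑ k : Fin n,
          A (p.1 j, p.2) (k, w2) * (B (k, w2) (q.1 j, q.2) *
            ∏ c ∈ Finset.univ.filter (fun c => c ≠ j), (if p.1 c = q.1 c then (1:ℂ) else 0)) := by
    rw [Fintype.sum_prod_type, Finset.sum_comm]
    refine Finset.sum_congr rfl fun w2 _ => ?_
    have hstep : ∀ w1 : Fin m → Fin n,
        (A (p.1 j, p.2) (w1 j, w2) *
          ∏ c ∈ Finset.univ.filter (fun c => c ≠ j), (if p.1 c = w1 c then (1:ℂ) else 0)) *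
        (B (w1 j, w2) (q.1 j, q.2) *
          ∏ c ∈ Finset.univ.filter (fun c => c ≠ j), (if w1 c = q.1 c then (1:ℂ) else 0))
        = (A (p.1 j, p.2) (w1 j, w2) * (B (w1 j, w2) (q.1 j, q.2) *
            ∏ c ∈ Finset.univ.filter (fun c => c ≠ j), (if w1 c = q.1 c then (1:ℂ) else 0))) *
          (if ∀ c ∈ Finset.univ.filter (fun c => c ≠ j), p.1 c = w1 c then (1:ℂ) else 0) := by
      intro w1
      rw [prodIte]
      ring
    simp only [hstep]
    rw [sum_eq_sum_update (j := j) p.1]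
    refine Finset.sum_congr rfl fun k _ => ?_
    rw [Function.update_self]
    congr 2
    refine Finset.prod_congr rfl fun c hc => ?_
    simp only [Finset.mem_filter, Finset.mem_univ, true_and] at hc
    rw [Function.update_of_ne hc]
  rw [hR, Fintype.sum_prod_type, Finset.sum_comm, Finset.sum_mul]
  refine Finset.sum_congr rfl fun w2 _ => ?_
  rw [Finset.sum_mul]
  refine Finset.sum_congr rfl fun k _ => ?_
  ring

lemma iota_list_prod (j : Fin m)
    (L : List (Matrix (Fin n × (Fin N → Fin n)) (Fin n × (Fin N → Fin n)) ℂ)) :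
    iota j L.prod = (L.map (iota j)).prod := by
  induction L with
  | nil => simpa using iota_one j
  | cons X L ih => rw [List.prod_cons, iota_mul, ih, List.map_cons, List.prod_cons]

/-- The embedded R-matrix acting on auxiliary slot `j` and quantum site `b`. -/
def RF (η : ℂ) (j : Fin m) (b : Fin N) (ν : ℂ) :
    Matrix ((Fin m → Fin n) × (Fin N → Fin n)) ((Fin m → Fin n) × (Fin N → Fin n)) ℂ :=
  ν • (1 : Matrix ((Fin m → Fin n) × (Fin N → Fin n)) ((Fin m → Fin n) × (Fin N → Fin n)) ℂ)
    + η • PF (Equiv.swap (Sum.inl j) (Sum.inr b))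

lemma swap_cond_iff {p q : (Fin m → Fin n) × (Fin N → Fin n)} {j : Fin m} {b : Fin N} :
    (uu p = uu q ∘ (Equiv.swap (Sum.inl j) (Sum.inr b) : Equiv.Perm (Fin m ⊕ Fin N))) ↔
      ((p.1 j = q.2 b ∧ p.2 b = q.1 j) ∧ (∀ c, c ≠ j → p.1 c = q.1 c) ∧
        ∀ c, c ≠ b → p.2 c = q.2 c) := by
  rw [funext_iff, Sum.forall]
  constructor
  · rintro ⟨hl, hr⟩
    refine ⟨⟨?_, ?_⟩, ?_, ?_⟩
    · simpa [uu] using hl j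
    · simpa [uu] using hr b
    · intro c hc
      have := hl c
      rwa [Function.comp_apply, Equiv.swap_apply_of_ne_of_ne (by simpa using hc) (by simp)]
        at this
    · intro c hc
      have := hr c
      rwa [Function.comp_apply, Equiv.swap_apply_of_ne_of_ne (by simp) (by simpa using hc)]
        at this
  · rintro ⟨⟨h1, h2⟩, h3, h4⟩
    constructor
    · intro c
      by_cases hc : c = j
      · subst hc; simpa [uu] using h1
      · rw [Function.comp_apply, Equiv.swap_apply_of_ne_of_ne (by simpa using hc) (by simp)]
        exact h3 c hc
    · intro c
      by_cases hc : c = b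
      · subst hc; simpa [uu] using h2
      · rw [Function.comp_apply, Equiv.swap_apply_of_ne_of_ne (by simp) (by simpa using hc)]
        exact h4 c hc

lemma eq_cond_iff {p q : (Fin m → Fin n) × (Fin N → Fin n)} {j : Fin m} {b : Fin N} :
    p = q ↔ ((p.1 j = q.1 j ∧ p.2 b = q.2 b) ∧ (∀ c, c ≠ j → p.1 c = q.1 c) ∧
      ∀ c, c ≠ b → p.2 c = q.2 c) := by
  constructor
  · rintro rfl; exact ⟨⟨rfl, rfl⟩, fun _ _ => rfl, fun _ _ => rfl⟩
  · rintro ⟨⟨h1, h2⟩, h3, h4⟩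
    refine Prod.ext (funext fun c => ?_) (funext fun c => ?_)
    · by_cases hc : c = j
      · subst hc; exact h1
      · exact h3 c hc
    · by_cases hc : c = b
      · subst hc; exact h2
      · exact h4 c hc

lemma iota_Raux (η : ℂ) (j : Fin m) (b : Fin N) (ν : ℂ) :
    iota j (Raux n N η ν b) = RF η j b ν := by
  ext p q
  simp only [iota, Raux, Rmat, permOp, RF, Matrix.of_apply, Matrix.add_apply,
    Matrix.smul_apply, Matrix.one_apply, smul_eq_mul, PF_apply, prodIte]
  rw [mul_ite, mul_one, mul_zero, mul_ite, mul_one, mul_zero]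
  by_cases h3 : ∀ c ∈ Finset.univ.filter (fun c => c ≠ b), p.2 c = q.2 c
  · by_cases h4 : ∀ c ∈ Finset.univ.filter (fun c => c ≠ j), p.1 c = q.1 c
    · rw [if_pos h3, if_pos h4]
      try simp only [mul_one]
      simp only [Finset.mem_filter, Finset.mem_univ, true_and] at h3 h4
      have e1 : ((p.1 j, p.2 b) = (q.1 j, q.2 b)) ↔ p = q := by
        rw [Prod.mk.injEq, eq_cond_iff (j := j) (b := b)]
        exact ⟨fun h => ⟨h, h4, h3⟩, fun h => h.1⟩
      have e2 : (p.1 j = q.2 b ∧ p.2 b = q.1 j) ↔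
          (uu p = uu q ∘ (Equiv.swap (Sum.inl j) (Sum.inr b) : Equiv.Perm (Fin m ⊕ Fin N))) := by
        rw [swap_cond_iff]
        exact ⟨fun h => ⟨h, h4, h3⟩, fun h => h.1⟩
      rw [if_congr e1 rfl rfl, if_congr e2 rfl rfl]
    · rw [if_neg h4]
      try simp only [mul_zero]
      simp only [Finset.mem_filter, Finset.mem_univ, true_and] at h4
      push_neg at h4
      obtain ⟨c, hc, hne⟩ := h4
      have hpq : p ≠ q := fun h => hne (by rw [h])
      have hsw : ¬(uu p = uu q ∘ (Equiv.swap (Sum.inl j) (Sum.inr b) : Equiv.Perm (Fin m ⊕ Fin N))) := by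
        rw [swap_cond_iff]
        rintro ⟨-, h3', -⟩
        exact hne (h3' c hc)
      rw [if_neg hpq, if_neg hsw]
      try simp only [mul_zero, add_zero]
  · rw [if_neg h3]
    try simp only [mul_zero, ite_self]
    simp only [Finset.mem_filter, Finset.mem_univ, true_and] at h3
    push_neg at h3
    obtain ⟨c, hc, hne⟩ := h3
    have hpq : p ≠ q := fun h => hne (by rw [h])
    have hsw : ¬(uu p = uu q ∘ (Equiv.swap (Sum.inl j) (Sum.inr b) : Equiv.Perm (Fin m ⊕ Fin N))) := by
      rw [swap_cond_iff]
      rintro ⟨-, -, h4'⟩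
      exact hne (h4' c hc)
    rw [if_neg hpq, if_neg hsw]
    try simp only [mul_zero, add_zero]

section SwapAlgebra

variable {α : Type*} [DecidableEq α]

lemma swap_trans_self (x y : α) : (Equiv.swap x y).trans (Equiv.swap x y) = Equiv.refl α := by
  ext u; simp

lemma swapL_a {x y z : α} (hxy : x ≠ y) (hxz : x ≠ z) (hyz : y ≠ z) :
    (Equiv.swap x z).trans (Equiv.swap y z) = (Equiv.swap x y).trans (Equiv.swap x z) := by
  ext u
  simp only [Equiv.trans_apply, Equiv.swap_apply_def]
  split_ifs <;> simp_all

lemma swapL_b {x y z : α} (hxy : x ≠ y) (hxz : x ≠ z) (hyz : y ≠ z) :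
    (Equiv.swap y z).trans (Equiv.swap x z) = (Equiv.swap x y).trans (Equiv.swap y z) := by
  ext u
  simp only [Equiv.trans_apply, Equiv.swap_apply_def]
  split_ifs <;> simp_all

lemma swapL_c {x y z : α} (hxy : x ≠ y) (hxz : x ≠ z) (hyz : y ≠ z) :
    (Equiv.swap x z).trans (Equiv.swap x y) = (Equiv.swap x y).trans (Equiv.swap y z) := by
  ext u
  simp only [Equiv.trans_apply, Equiv.swap_apply_def]
  split_ifs <;> simp_all

lemma swapL_d {x y z : α} (hxy : x ≠ y) (hxz : x ≠ z) (hyz : y ≠ z) :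
    (Equiv.swap y z).trans (Equiv.swap x y) = (Equiv.swap x y).trans (Equiv.swap x z) := by
  ext u
  simp only [Equiv.trans_apply, Equiv.swap_apply_def]
  split_ifs <;> simp_all

lemma swapL_e {x y z : α} (hxy : x ≠ y) (hxz : x ≠ z) (hyz : y ≠ z) :
    ((Equiv.swap x y).trans (Equiv.swap x z)).trans (Equiv.swap y z) = Equiv.swap x z := by
  ext u
  simp only [Equiv.trans_apply, Equiv.swap_apply_def]
  split_ifs <;> simp_all

lemma swapL_f {x y z : α} (hxy : x ≠ y) (hxz : x ≠ z) (hyz : y ≠ z) :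
    ((Equiv.swap x y).trans (Equiv.swap y z)).trans (Equiv.swap x y) = Equiv.swap x z := by
  ext u
  simp only [Equiv.trans_apply, Equiv.swap_apply_def]
  split_ifs <;> simp_all

lemma swap_disjoint_comm {x y z w : α} (h1 : x ≠ z) (h2 : x ≠ w) (h3 : y ≠ z) (h4 : y ≠ w) :
    (Equiv.swap x y).trans (Equiv.swap z w) = (Equiv.swap z w).trans (Equiv.swap x y) := by
  ext u
  simp only [Equiv.trans_apply, Equiv.swap_apply_def]
  split_ifs <;> simp_all

end SwapAlgebra

lemma comm_PF_PF_disjoint {s t : Equiv.Perm (Fin m ⊕ Fin N)}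
    (h : s.trans t = t.trans s) : PF (n := n) s * PF t = PF t * PF s := by
  rw [PF_mul, PF_mul, h]

/-- Commutation of embedded `R`-matrices acting on disjoint slots. -/
lemma comm_RF_RF {j j' : Fin m} {b b' : Fin N} (hj : j ≠ j') (hb : b ≠ b') (η ν ν' : ℂ) :
    Commute (RF (n := n) η j b ν) (RF η j' b' ν') := by
  have hPF : PF (n := n) (Equiv.swap (Sum.inl j) (Sum.inr b)) *
      PF (Equiv.swap (Sum.inl j') (Sum.inr b')) =
      PF (Equiv.swap (Sum.inl j') (Sum.inr b')) * PF (Equiv.swap (Sum.inl j) (Sum.inr b)) := by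
    refine comm_PF_PF_disjoint (swap_disjoint_comm ?_ ?_ ?_ ?_) <;> simp [hj, hb]
  show _ = _
  unfold RF
  simp only [add_mul, mul_add, smul_mul_assoc, mul_smul_comm, one_mul, mul_one, smul_smul]
  rw [hPF]
  module

/-- `1 + P_{i₀ i₁}` commutes with `R`-matrices not touching slots `i₀, i₁`. -/
lemma comm_onePF_RF {i₀ i₁ j : Fin m} (h0 : j ≠ i₀) (h1 : j ≠ i₁) (b : Fin N) (η ν : ℂ) :
    Commute (1 + PF (n := n) (N := N) (Equiv.swap (Sum.inl i₀) (Sum.inl i₁))) (RF η j b ν) := by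
  have hPF : PF (n := n) (Equiv.swap (Sum.inl i₀) (Sum.inl i₁)) *
      PF (Equiv.swap (Sum.inl j) (Sum.inr b)) =
      PF (Equiv.swap (Sum.inl j) (Sum.inr b)) *
        PF (Equiv.swap (Sum.inl i₀) (Sum.inl i₁)) := by
    refine comm_PF_PF_disjoint (swap_disjoint_comm ?_ ?_ ?_ ?_) <;> simp [h0.symm, h1.symm]
  show _ = _
  unfold RF
  simp only [add_mul, mul_add, smul_mul_assoc, mul_smul_comm, one_mul, mul_one]
  rw [hPF]
  module

/-- The key exchange relation derived from the Yang–Baxter equation, at argument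
difference `η`. -/
lemma exchange {i₀ i₁ : Fin m} (h01 : i₀ ≠ i₁) (b : Fin N) (η ν : ℂ) :
    (1 + PF (n := n) (Equiv.swap (Sum.inl i₀) (Sum.inl i₁))) * (RF η i₀ b ν * RF η i₁ b (ν - η))
      = (RF η i₁ b (ν - η) * RF η i₀ b ν) *
          (1 + PF (Equiv.swap (Sum.inl i₀) (Sum.inl i₁))) := by
  have hxy : (Sum.inl i₀ : Fin m ⊕ Fin N) ≠ Sum.inl i₁ := by simp [h01]
  have hxz : (Sum.inl i₀ : Fin m ⊕ Fin N) ≠ Sum.inr b := by simp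
  have hyz : (Sum.inl i₁ : Fin m ⊕ Fin N) ≠ Sum.inr b := by simp
  set x : Fin m ⊕ Fin N := Sum.inl i₀
  set y : Fin m ⊕ Fin N := Sum.inl i₁
  set z : Fin m ⊕ Fin N := Sum.inr b
  have expand : ∀ (c₁ c₂ : ℂ) (U V : Matrix ((Fin m → Fin n) × (Fin N → Fin n))
      ((Fin m → Fin n) × (Fin N → Fin n)) ℂ),
      (c₁ • 1 + η • U) * (c₂ • 1 + η • V)
        = (c₁ * c₂) • (1 : Matrix _ _ ℂ) + (c₁ * η) • V + (η * c₂) • U + (η * η) • (U * V) := by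
    intro c₁ c₂ U V
    simp only [add_mul, mul_add, smul_mul_assoc, mul_smul_comm, one_mul, mul_one, smul_smul]
    module
  unfold RF
  rw [expand, expand]
  set S := PF (n := n) (N := N) (Equiv.swap x y) with hS
  set A := PF (n := n) (N := N) (Equiv.swap x z) with hA
  set B := PF (n := n) (N := N) (Equiv.swap y z) with hB
  have hAB : A * B = PF ((Equiv.swap x y).trans (Equiv.swap x z)) := by
    rw [hA, hB, PF_mul, swapL_a hxy hxz hyz]
  have hBA : B * A = PF ((Equiv.swap x y).trans (Equiv.swap y z)) := by
    rw [hA, hB, PF_mul, swapL_b hxy hxz hyz]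
  have hSA : S * A = PF ((Equiv.swap x y).trans (Equiv.swap x z)) := PF_mul _ _
  have hSB : S * B = PF ((Equiv.swap x y).trans (Equiv.swap y z)) := PF_mul _ _
  have hAS : A * S = PF ((Equiv.swap x y).trans (Equiv.swap y z)) := by
    rw [hA, hS, PF_mul, swapL_c hxy hxz hyz]
  have hBS : B * S = PF ((Equiv.swap x y).trans (Equiv.swap x z)) := by
    rw [hB, hS, PF_mul, swapL_d hxy hxz hyz]
  have hSAB : S * PF ((Equiv.swap x y).trans (Equiv.swap x z)) = A := by
    rw [hS, PF_mul, ← Equiv.trans_assoc, swap_trans_self, Equiv.refl_trans]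
  have hBAS : PF ((Equiv.swap x y).trans (Equiv.swap y z)) * S = A := by
    rw [hS, PF_mul, swapL_f hxy hxz hyz]
  simp only [add_mul, mul_add, one_mul, mul_one, mul_smul_comm, smul_mul_assoc]
  rw [hAB, hBA, hSA, hSB, hAS, hBS, hSAB, hBAS]
  module

/-- Embedding of a permutation of auxiliary slots into the full slot type. -/
def emb (m N : ℕ) (σ : Equiv.Perm (Fin m)) : Equiv.Perm (Fin m ⊕ Fin N) :=
  Equiv.sumCongr σ (Equiv.refl (Fin N))

lemma emb_swap {i₀ i₁ : Fin m} :
    emb m N (Equiv.swap i₀ i₁) = Equiv.swap (Sum.inl i₀) (Sum.inl i₁) := by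
  ext s
  cases s with
  | inl a =>
    by_cases h0 : a = i₀
    · subst h0; simp [emb]
    · by_cases h1 : a = i₁
      · subst h1; simp [emb]
      · have e1 : (Sum.inl a : Fin m ⊕ Fin N) ≠ Sum.inl i₀ := by simp [h0]
        have e2 : (Sum.inl a : Fin m ⊕ Fin N) ≠ Sum.inl i₁ := by simp [h1]
        rw [show (emb m N (Equiv.swap i₀ i₁)) (Sum.inl a)
            = Sum.inl ((Equiv.swap i₀ i₁) a) from rfl,
          Equiv.swap_apply_of_ne_of_ne h0 h1, Equiv.swap_apply_of_ne_of_ne e1 e2]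
  | inr i =>
    have e1 : (Sum.inr i : Fin m ⊕ Fin N) ≠ Sum.inl i₀ := by simp
    have e2 : (Sum.inr i : Fin m ⊕ Fin N) ≠ Sum.inl i₁ := by simp
    rw [show (emb m N (Equiv.swap i₀ i₁)) (Sum.inr i) = Sum.inr i from rfl,
      Equiv.swap_apply_of_ne_of_ne e1 e2]

lemma ite_and_mul (Pp Q : Prop) [Decidable Pp] [Decidable Q] :
    (if Pp ∧ Q then (1 : ℂ) else 0) = (if Pp then (1:ℂ) else 0) * (if Q then (1:ℂ) else 0) := by
  by_cases hP : Pp <;> by_cases hQ : Q <;> simp [hP, hQ]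

lemma PF_emb_apply (σ : Equiv.Perm (Fin m)) (p q : (Fin m → Fin n) × (Fin N → Fin n)) :
    PF (emb m N σ) p q
      = (if p.1 = q.1 ∘ σ then (1:ℂ) else 0) * (if p.2 = q.2 then (1:ℂ) else 0) := by
  rw [PF_apply, ← ite_and_mul]
  refine if_congr ⟨fun hc => ⟨funext fun c => ?_, funext fun i => ?_⟩,
    fun hc => funext fun s => ?_⟩ rfl rfl
  · exact congrFun hc (Sum.inl c)
  · exact congrFun hc (Sum.inr i)
  · obtain ⟨h1, h2⟩ := hc
    cases s with
    | inl c => exact congrFun h1 c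
    | inr i => exact congrFun h2 i

lemma antisymH_eq :
    antisymH n N m = (m.factorial : ℂ)⁻¹ •
      ∑ π : Equiv.Perm (Fin m), ((Equiv.Perm.sign π : ℤ) : ℂ) • PF (n := n) (emb m N π) := by
  ext p q
  simp only [antisymH, antisym, Matrix.of_apply, Matrix.smul_apply, Matrix.sum_apply,
    smul_eq_mul, permTensorOp, PF_emb_apply]
  rw [mul_assoc, Finset.sum_mul]
  congr 1
  refine Finset.sum_congr rfl fun π _ => ?_
  ring

lemma PF_swap_mul_antisymH {i₀ i₁ : Fin m} (h : i₀ ≠ i₁) :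
    PF (n := n) (N := N) (Equiv.swap (Sum.inl i₀) (Sum.inl i₁)) * antisymH n N m
      = - antisymH n N m := by
  rw [antisymH_eq, ← emb_swap, Matrix.mul_smul, Finset.mul_sum]
  have step : ∀ π : Equiv.Perm (Fin m),
      PF (n := n) (N := N) (emb m N (Equiv.swap i₀ i₁)) *
          (((Equiv.Perm.sign π : ℤ) : ℂ) • PF (emb m N π))
        = ((Equiv.Perm.sign π : ℤ) : ℂ) • PF (emb m N (π * Equiv.swap i₀ i₁)) := by
    intro π
    rw [Matrix.mul_smul, PF_mul]
    congr 2
    unfold emb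
    rw [Equiv.sumCongr_trans, Equiv.Perm.mul_def]
    congr 1
  simp only [step]
  have reindex : ∑ π : Equiv.Perm (Fin m),
      ((Equiv.Perm.sign π : ℤ) : ℂ) • PF (n := n) (N := N) (emb m N (π * Equiv.swap i₀ i₁))
      = ∑ π : Equiv.Perm (Fin m), -(((Equiv.Perm.sign π : ℤ) : ℂ) • PF (emb m N π)) := by
    refine Fintype.sum_equiv (Equiv.mulRight (Equiv.swap i₀ i₁)) _ _ fun π => ?_
    simp only [Equiv.coe_mulRight]
    rw [Equiv.Perm.sign_mul, Equiv.Perm.sign_swap h]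
    push_cast
    module
  rw [reindex, Finset.sum_neg_distrib, smul_neg]

lemma one_add_PF_swap_mul_antisymH {i₀ i₁ : Fin m} (h : i₀ ≠ i₁) :
    (1 + PF (n := n) (N := N) (Equiv.swap (Sum.inl i₀) (Sum.inl i₁))) * antisymH n N m = 0 := by
  rw [add_mul, one_mul, PF_swap_mul_antisymH h, add_neg_cancel]

lemma traceFlip (σ : Equiv.Perm (Fin m))
    (Amat : Matrix ((Fin m → Fin n) × (Fin N → Fin n)) ((Fin m → Fin n) × (Fin N → Fin n)) ℂ)
    (x y : Fin N → Fin n) :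
    ∑ v : Fin m → Fin n, (Amat * PF (n := n) (emb m N σ)) (v, x) (v, y)
      = ∑ v : Fin m → Fin n, (PF (n := n) (emb m N σ) * Amat) (v, x) (v, y) := by
  have hL : ∀ v : Fin m → Fin n,
      (Amat * PF (n := n) (emb m N σ)) (v, x) (v, y) = Amat (v, x) (fun c => v (σ c), y) := by
    intro v
    rw [Matrix.mul_apply, Fintype.sum_eq_single ((fun c => v (σ c), y) :
      (Fin m → Fin n) × (Fin N → Fin n))]
    · rw [PF_apply, if_pos ?_, mul_one]
      funext s; cases s <;> rfl
    · intro w hw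
      rw [PF_apply_left, if_neg ?_, mul_zero]
      intro hww
      exact hw (by rw [hww]; rfl)
  have hR : ∀ v : Fin m → Fin n,
      (PF (n := n) (emb m N σ) * Amat) (v, x) (v, y)
        = Amat (fun c => v (σ.symm c), x) (v, y) := by
    intro v
    rw [Matrix.mul_apply, Fintype.sum_eq_single ((fun c => v (σ.symm c), x) :
      (Fin m → Fin n) × (Fin N → Fin n))]
    · rw [PF_apply, if_pos ?_, one_mul]
      funext s; cases s <;> simp [emb, uu]
    · intro w hw
      rw [PF_apply_right, if_neg ?_, zero_mul]
      intro hww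
      apply hw
      rw [hww]
      refine Prod.ext (funext fun c => ?_) rfl
      simp [emb, vvv, uu]
  simp only [hL, hR]
  refine Fintype.sum_equiv ⟨fun v => v ∘ σ, fun v => v ∘ σ.symm,
      fun v => by funext c; simp, fun v => by funext c; simp⟩ _ _ fun v => ?_
  show Amat (v, x) (fun c => v (σ c), y)
      = Amat (fun c => v (σ (σ.symm c)), x) (fun c => v (σ c), y)
  congr 1
  exact Prod.ext (funext fun c => (congrArg v (σ.apply_symm_apply c)).symm) rfl

lemma traceFlipS (σ : Equiv.Perm (Fin m))
    (Amat : Matrix ((Fin m → Fin n) × (Fin N → Fin n)) ((Fin m → Fin n) × (Fin N → Fin n)) ℂ)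
    (x y : Fin N → Fin n) :
    ∑ v : Fin m → Fin n, (Amat * (1 + PF (n := n) (emb m N σ))) (v, x) (v, y)
      = ∑ v : Fin m → Fin n, ((1 + PF (n := n) (emb m N σ)) * Amat) (v, x) (v, y) := by
  simp only [mul_add, add_mul, mul_one, one_mul, Matrix.add_apply, Finset.sum_add_distrib]
  rw [traceFlip]

lemma comm_KF_PF {j j' : Fin m} (hjj : j ≠ j') (b : Fin N) (K : Matrix (Fin n) (Fin n) ℂ) :
    iota (N := N) j (Kaux n N K) * PF (Equiv.swap (Sum.inl j') (Sum.inr b))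
      = PF (Equiv.swap (Sum.inl j') (Sum.inr b)) * iota j (Kaux n N K) := by
  have hsymm : (Equiv.swap (Sum.inl j') (Sum.inr b) : Equiv.Perm (Fin m ⊕ Fin N)).symm
      = Equiv.swap (Sum.inl j') (Sum.inr b) := Equiv.symm_swap _ _
  ext p q
  rw [Matrix.mul_apply, Matrix.mul_apply]
  set s : Equiv.Perm (Fin m ⊕ Fin N) := Equiv.swap (Sum.inl j') (Sum.inr b) with hsdef
  rw [Fintype.sum_eq_single (vvv (uu q ∘ s))]
  rotate_left
  · intro w hw
    rw [PF_apply_left, if_neg hw, mul_zero]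
  rw [Fintype.sum_eq_single (vvv (uu p ∘ s))]
  rotate_left
  · intro w hw
    rw [PF_apply_right, if_neg (by rw [hsymm]; exact hw), zero_mul]
  rw [PF_apply, uu_vvv, if_pos rfl, mul_one, PF_apply_right, hsymm, if_pos rfl, one_mul]
  -- now a pure pointwise computation
  set w : (Fin m → Fin n) × (Fin N → Fin n) := vvv (uu q ∘ s) with hwdef
  set w' : (Fin m → Fin n) × (Fin N → Fin n) := vvv (uu p ∘ s) with hwdef'
  have hw1 : ∀ c : Fin m, c ≠ j' → w.1 c = q.1 c := by
    intro c hc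
    show uu q (s (Sum.inl c)) = q.1 c
    rw [hsdef, Equiv.swap_apply_of_ne_of_ne (by simp [hc]) (by simp)]
    rfl
  have hw1' : w.1 j' = q.2 b := by
    show uu q (s (Sum.inl j')) = q.2 b
    rw [hsdef, Equiv.swap_apply_left]
    rfl
  have hw2 : ∀ i : Fin N, i ≠ b → w.2 i = q.2 i := by
    intro i hi
    show uu q (s (Sum.inr i)) = q.2 i
    rw [hsdef, Equiv.swap_apply_of_ne_of_ne (by simp) (by simp [hi])]
    rfl
  have hw2' : w.2 b = q.1 j' := by
    show uu q (s (Sum.inr b)) = q.1 j'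
    rw [hsdef, Equiv.swap_apply_right]
    rfl
  have hv1 : ∀ c : Fin m, c ≠ j' → w'.1 c = p.1 c := by
    intro c hc
    show uu p (s (Sum.inl c)) = p.1 c
    rw [hsdef, Equiv.swap_apply_of_ne_of_ne (by simp [hc]) (by simp)]
    rfl
  have hv1' : w'.1 j' = p.2 b := by
    show uu p (s (Sum.inl j')) = p.2 b
    rw [hsdef, Equiv.swap_apply_left]
    rfl
  have hv2 : ∀ i : Fin N, i ≠ b → w'.2 i = p.2 i := by
    intro i hi
    show uu p (s (Sum.inr i)) = p.2 i
    rw [hsdef, Equiv.swap_apply_of_ne_of_ne (by simp) (by simp [hi])]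
    rfl
  have hv2' : w'.2 b = p.1 j' := by
    show uu p (s (Sum.inr b)) = p.1 j'
    rw [hsdef, Equiv.swap_apply_right]
    rfl
  simp only [iota, Kaux, Matrix.of_apply]
  have hCond : Prop := True
  by_cases h1 : p.1 j' = q.2 b
  case pos =>
   by_cases h2 : p.2 b = q.1 j'
   case pos =>
    by_cases h3 : ∀ c, c ≠ j → c ≠ j' → p.1 c = q.1 c
    case pos =>
     by_cases h4 : ∀ i, i ≠ b → p.2 i = q.2 i
     case pos =>
      have e2 : p.2 = w.2 := funext fun i => by
        by_cases hib : i = b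
        · subst hib; rw [hw2']; exact h2
        · rw [hw2 i hib]; exact h4 i hib
      have e3 : ∀ c ∈ Finset.univ.filter (fun c => c ≠ j), p.1 c = w.1 c := by
        intro c hc
        simp only [Finset.mem_filter, Finset.mem_univ, true_and] at hc
        by_cases hcj : c = j'
        · subst hcj; rw [hw1']; exact h1
        · rw [hw1 c hcj]; exact h3 c hc hcj
      have f2 : w'.2 = q.2 := funext fun i => by
        by_cases hib : i = b
        · subst hib; rw [hv2']; exact h1
        · rw [hv2 i hib]; exact h4 i hib
      have f3 : ∀ c ∈ Finset.univ.filter (fun c => c ≠ j), w'.1 c = q.1 c := by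
        intro c hc
        simp only [Finset.mem_filter, Finset.mem_univ, true_and] at hc
        by_cases hcj : c = j'
        · subst hcj; rw [hv1']; exact h2
        · rw [hv1 c hcj]; exact h3 c hc hcj
      rw [prodIte, prodIte, if_pos e2, if_pos e3, if_pos f2, if_pos f3, mul_one, mul_one,
        mul_one, mul_one, hw1 j hjj, hv1 j hjj]
     case neg =>
      obtain ⟨i, hib, hne⟩ := by push_neg at h4; exact h4
      have e2 : ¬(p.2 = w.2) := fun h => hne (by rw [congrFun h i, hw2 i hib])
      have f2 : ¬(w'.2 = q.2) := fun h => hne (by rw [← congrFun h i, hv2 i hib])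
      rw [if_neg e2, mul_zero, zero_mul, if_neg f2, mul_zero, zero_mul]
    case neg =>
     obtain ⟨c, hcj, hcj', hne⟩ := by push_neg at h3; exact h3
     have e3 : ¬(∀ c ∈ Finset.univ.filter (fun c => c ≠ j), p.1 c = w.1 c) := by
       intro h
       exact hne (by rw [h c (by simp [hcj]), hw1 c hcj'])
     have f3 : ¬(∀ c ∈ Finset.univ.filter (fun c => c ≠ j), w'.1 c = q.1 c) := by
       intro h
       exact hne (by rw [← h c (by simp [hcj]), hv1 c hcj'])
     rw [prodIte, prodIte, if_neg e3, mul_zero, if_neg f3, mul_zero]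
   case neg =>
    have e2 : ¬(p.2 = w.2) := fun h => h2 (by rw [congrFun h b, hw2'])
    have f3 : ¬(∀ c ∈ Finset.univ.filter (fun c => c ≠ j), w'.1 c = q.1 c) := by
      intro h
      exact h2 (by rw [← h j' (by simp [Ne.symm hjj]), hv1'])
    rw [prodIte, prodIte, if_neg e2, mul_zero, zero_mul, if_neg f3, mul_zero]
  case neg =>
   have e3 : ¬(∀ c ∈ Finset.univ.filter (fun c => c ≠ j), p.1 c = w.1 c) := by
     intro h
     exact h1 (by rw [h j' (by simp [Ne.symm hjj]), hw1'])
   have f2 : ¬(w'.2 = q.2) := fun h => h1 (by rw [← congrFun h b, hv2'])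
   rw [prodIte, prodIte, if_neg e3, mul_zero, if_neg f2, mul_zero, zero_mul]

lemma comm_KF_RF {j j' : Fin m} (hjj : j ≠ j') (b : Fin N) (η ν : ℂ)
    (K : Matrix (Fin n) (Fin n) ℂ) :
    Commute (iota (N := N) j (Kaux n N K)) (RF η j' b ν) := by
  show _ = _
  unfold RF
  simp only [mul_add, add_mul, mul_smul_comm, smul_mul_assoc, mul_one, one_mul]
  rw [comm_KF_PF hjj b K]

section ListMachinery

variable {M : Type*} [Monoid M]

lemma ofFn_mul_prod : ∀ {k : ℕ} (a r : Fin k → M),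
    (∀ j j' : Fin k, j' < j → Commute (a j) (r j')) →
    (List.ofFn fun j => a j * r j).prod = (List.ofFn a).prod * (List.ofFn r).prod := by
  intro k
  induction k with
  | zero => intro a r _; simp
  | succ k ih =>
    intro a r h
    rw [List.ofFn_succ, List.ofFn_succ (f := a), List.ofFn_succ (f := r),
      List.prod_cons, List.prod_cons, List.prod_cons]
    rw [ih (fun j => a j.succ) (fun j => r j.succ)
      (fun j j' hj => h j.succ j'.succ (by simpa using hj))]
    have hc : Commute (r 0) (List.ofFn fun j : Fin k => a j.succ).prod := by
      apply Commute.list_prod_right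
      intro x hx
      rw [List.mem_ofFn] at hx
      obtain ⟨i, rfl⟩ := hx
      exact (h i.succ 0 (Fin.succ_pos i)).symm
    rw [mul_assoc, ← mul_assoc (r 0), hc.eq, mul_assoc, ← mul_assoc, ← mul_assoc]

lemma rows_eq_cols : ∀ {Nn k : ℕ} (f : Fin k → Fin Nn → M),
    (∀ (j j' : Fin k) (i i' : Fin Nn), j ≠ j' → i ≠ i' → Commute (f j i) (f j' i')) →
    (List.ofFn fun j => (List.ofFn fun i => f j i).prod).prod
      = (List.ofFn fun i => (List.ofFn fun j => f j i).prod).prod := by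
  intro Nn
  induction Nn with
  | zero =>
    intro k f _
    simp [List.ofFn_zero]
  | succ Nn ih =>
    intro k f h
    have hsplit : (fun j : Fin k => (List.ofFn fun i => f j i).prod)
        = fun j => f j 0 * (List.ofFn fun i : Fin Nn => f j i.succ).prod := by
      funext j
      rw [List.ofFn_succ, List.prod_cons]
    rw [hsplit, ofFn_mul_prod _ _ ?hcomm,
      ih (fun j i => f j i.succ) (fun j j' i i' hj hi => h j j' i.succ i'.succ hj (by simpa using hi)),
      List.ofFn_succ (f := fun i : Fin (Nn+1) => (List.ofFn fun j => f j i).prod), List.prod_cons]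
    case hcomm =>
      intro j j' hj
      apply Commute.list_prod_right
      intro x hx
      rw [List.mem_ofFn] at hx
      obtain ⟨i, rfl⟩ := hx
      exact h j j' 0 i.succ (Fin.ne_of_lt hj).symm (Fin.succ_ne_zero i).symm

lemma mem_take_ofFn {k : ℕ} {g : Fin k → M} {t : ℕ} {X : M}
    (hX : X ∈ (List.ofFn g).take t) : ∃ j : Fin k, (j : ℕ) < t ∧ X = g j := by
  obtain ⟨i, hi, hEq⟩ := List.mem_iff_getElem.mp hX
  have hlen : i < t ∧ i < k := by
    simpa [List.length_take, List.length_ofFn, Nat.lt_min] using hi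
  refine ⟨⟨i, hlen.2⟩, hlen.1, ?_⟩
  rw [← hEq, List.getElem_take, List.getElem_ofFn]

lemma mem_drop_ofFn {k : ℕ} {g : Fin k → M} {t : ℕ} {X : M}
    (hX : X ∈ (List.ofFn g).drop t) : ∃ j : Fin k, t ≤ (j : ℕ) ∧ X = g j := by
  obtain ⟨i, hi, hEq⟩ := List.mem_iff_getElem.mp hX
  simp only [List.length_drop, List.length_ofFn] at hi
  have hlen : t + i < k := by omega
  refine ⟨⟨t + i, hlen⟩, by simp, ?_⟩
  rw [← hEq, List.getElem_drop, List.getElem_ofFn]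

lemma moveS (S : M) : ∀ (L : List M), (∀ X ∈ L, ∃ X', S * X = X' * S) →
    ∃ E, S * L.prod = E * S := by
  intro L
  induction L with
  | nil => exact fun _ => ⟨1, by simp⟩
  | cons X L ih =>
    intro h
    obtain ⟨X', hX'⟩ := h X List.mem_cons_self
    obtain ⟨E, hE⟩ := ih fun Y hY => h Y (List.mem_cons_of_mem X hY)
    exact ⟨X' * E, by rw [List.prod_cons, ← mul_assoc, hX', mul_assoc, hE, ← mul_assoc]⟩

lemma movePair {S X Y X' Y' : M} (hX : S * X = X' * S) (hY : S * Y = Y' * S) :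
    S * (X * Y) = (X' * Y') * S := by
  rw [← mul_assoc, hX, mul_assoc, hY, ← mul_assoc]

end ListMachinery

lemma MauxJ_decomp (η : ℂ) (ξ : Fin N → ℂ) (K : Matrix (Fin n) (Fin n) ℂ)
    (j : Fin m) (μ : ℂ) :
    MauxJ n N η ξ K m j μ
      = iota j (Kaux n N K) * (List.ofFn fun i : Fin N => RF η j i.rev (μ - ξ i.rev)).prod := by
  have h0 : MauxJ n N η ξ K m j μ = iota j (monodromy n N η ξ K μ) := rfl
  rw [h0, monodromy, iota_mul, iota_list_prod, List.map_ofFn,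
    show (iota j ∘ fun i : Fin N => Raux n N η (μ - ξ i.rev) i.rev)
        = (fun i : Fin N => RF η j i.rev (μ - ξ i.rev)) from
      funext fun i => iota_Raux η j i.rev (μ - ξ i.rev)]

end AuxMachinery


/-- the fused transfer matrices have central zeroes at `ξ_a + rη`,
`1 ≤ r ≤ m-1`. -/
theorem transfer_central_zeroes (n N : ℕ) (hn : 2 ≤ n) (hN : 1 ≤ N) (η : ℂ)
    (ξ : Fin N → ℂ) (K : Matrix (Fin n) (Fin n) ℂ) :
    ∀ m : ℕ, 1 ≤ m → m ≤ n → ∀ a : Fin N, ∀ r : ℕ, 1 ≤ r → r ≤ m - 1 →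
      transfer n N η ξ K m (ξ a + (r : ℂ) * η) = 0 := by
  intro m hm1 hmn a r hr1 hrm1
  have hm2 : 2 ≤ m := by omega
  have hrm : r < m := by omega
  have hr1m : r - 1 < m := by omega
  set lam : ℂ := ξ a + (r : ℂ) * η with hlam
  set i₀ : Fin m := ⟨r - 1, hr1m⟩ with hi₀
  set i₁ : Fin m := ⟨r, hrm⟩ with hi₁
  have h01 : i₀ ≠ i₁ := by
    refine Fin.ne_of_val_ne ?_
    show r - 1 ≠ r
    omega
  set T : Matrix ((Fin m → Fin n) × (Fin N → Fin n)) ((Fin m → Fin n) × (Fin N → Fin n)) ℂ :=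
    1 + PF (n := n) (Equiv.swap (Sum.inl i₀) (Sum.inl i₁)) with hT
  -- column split
  have colsplit : ∀ b : Fin N,
      (List.ofFn fun j : Fin m => RF (n := n) η j b (lam - (j : ℕ) * η - ξ b)).prod
        = ((List.ofFn fun j : Fin m => RF (n := n) η j b (lam - (j : ℕ) * η - ξ b)).take
            (r - 1)).prod *
          ((RF η i₀ b (lam - ((i₀ : ℕ) : ℂ) * η - ξ b) *
            RF η i₁ b (lam - ((i₁ : ℕ) : ℂ) * η - ξ b)) *
           ((List.ofFn fun j : Fin m => RF (n := n) η j b (lam - (j : ℕ) * η - ξ b)).drop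
            (r + 1)).prod) := by
    intro b
    have hlen : (List.ofFn fun j : Fin m =>
        RF (n := n) η j b (lam - (j : ℕ) * η - ξ b)).length = m := List.length_ofFn
    rw [← List.prod_take_mul_prod_drop (List.ofFn fun j : Fin m =>
      RF (n := n) η j b (lam - (j : ℕ) * η - ξ b)) (r - 1)]
    congr 1
    rw [List.drop_eq_getElem_cons (by omega), List.prod_cons,
      show r - 1 + 1 = r from by omega,
      List.drop_eq_getElem_cons (by omega), List.prod_cons,
      ← mul_assoc]
    congr 2
    · exact List.getElem_ofFn _
    · exact List.getElem_ofFn _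
  -- argument bookkeeping
  have hcast0 : ((i₀ : ℕ) : ℂ) = (r : ℂ) - 1 := by
    rw [show (i₀ : ℕ) = r - 1 from rfl, Nat.cast_sub hr1, Nat.cast_one]
  have hcast1 : ((i₁ : ℕ) : ℂ) = (r : ℂ) := by rw [show (i₁ : ℕ) = r from rfl]
  have hargs : ∀ b : Fin N, lam - ((i₁ : ℕ) : ℂ) * η - ξ b
      = (lam - ((i₀ : ℕ) : ℂ) * η - ξ b) - η := by
    intro b
    rw [hcast0, hcast1]
    ring
  -- moving T through a whole column
  have colmove : ∀ b : Fin N, ∃ E,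
      T * (List.ofFn fun j : Fin m => RF (n := n) η j b (lam - (j : ℕ) * η - ξ b)).prod
        = E * T := by
    intro b
    obtain ⟨E₁, hE₁⟩ := moveS T
      ((List.ofFn fun j : Fin m => RF (n := n) η j b (lam - (j : ℕ) * η - ξ b)).take (r - 1))
      (by
        intro X hX
        obtain ⟨j, hj, rfl⟩ := mem_take_ofFn hX
        refine ⟨_, (comm_onePF_RF ?_ ?_ b η _).eq⟩
        · exact Fin.ne_of_val_ne (by show (j : ℕ) ≠ r - 1; omega)
        · exact Fin.ne_of_val_ne (by show (j : ℕ) ≠ r; omega))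
    obtain ⟨E₂, hE₂⟩ := moveS T
      ((List.ofFn fun j : Fin m => RF (n := n) η j b (lam - (j : ℕ) * η - ξ b)).drop (r + 1))
      (by
        intro X hX
        obtain ⟨j, hj, rfl⟩ := mem_drop_ofFn hX
        refine ⟨_, (comm_onePF_RF ?_ ?_ b η _).eq⟩
        · exact Fin.ne_of_val_ne (by show (j : ℕ) ≠ r - 1; omega)
        · exact Fin.ne_of_val_ne (by show (j : ℕ) ≠ r; omega))
    have hmid : T * (RF η i₀ b (lam - ((i₀ : ℕ) : ℂ) * η - ξ b) *
        RF η i₁ b (lam - ((i₁ : ℕ) : ℂ) * η - ξ b))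
        = (RF η i₁ b (lam - ((i₁ : ℕ) : ℂ) * η - ξ b) *
            RF η i₀ b (lam - ((i₀ : ℕ) : ℂ) * η - ξ b)) * T := by
      rw [hargs b, hT]
      exact exchange h01 b η _
    refine ⟨E₁ * ((RF η i₁ b (lam - ((i₁ : ℕ) : ℂ) * η - ξ b) *
      RF η i₀ b (lam - ((i₀ : ℕ) : ℂ) * η - ξ b)) * E₂), ?_⟩
    rw [colsplit b]
    exact movePair hE₁ (movePair hmid hE₂)
  -- decomposition of the big product into twist part and columns
  have hPidecomp : (List.ofFn fun j : Fin m => MauxJ n N η ξ K m j (lam - (j : ℕ) * η)).prod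
      = (List.ofFn fun j : Fin m => iota j (Kaux n N K)).prod *
        (List.ofFn fun i : Fin N =>
          (List.ofFn fun j : Fin m =>
            RF (n := n) η j i.rev (lam - (j : ℕ) * η - ξ i.rev)).prod).prod := by
    have e1 : (fun j : Fin m => MauxJ n N η ξ K m j (lam - (j : ℕ) * η))
        = fun j : Fin m => iota j (Kaux n N K) *
            (List.ofFn fun i : Fin N => RF (n := n) η j i.rev (lam - (j : ℕ) * η - ξ i.rev)).prod :=
      funext fun j => MauxJ_decomp η ξ K j (lam - (j : ℕ) * η)
    rw [e1, ofFn_mul_prod _ _ ?kcomm,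
      rows_eq_cols (fun j i => RF (n := n) η j i.rev (lam - (j : ℕ) * η - ξ i.rev)) ?rcomm]
    case kcomm =>
      intro j j' hjj
      apply Commute.list_prod_right
      intro X hX
      rw [List.mem_ofFn] at hX
      obtain ⟨i, rfl⟩ := hX
      exact comm_KF_RF (Fin.ne_of_lt hjj).symm i.rev η _ K
    case rcomm =>
      intro j j' i i' hj hi
      exact comm_RF_RF hj (fun h => hi (Fin.rev_injective h)) η _ _
  -- the degenerate factorization of column `a`
  have hνa0 : lam - ((i₀ : ℕ) : ℂ) * η - ξ a = η := by rw [hcast0, hlam]; ring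
  have hνa1 : lam - ((i₁ : ℕ) : ℂ) * η - ξ a = 0 := by rw [hcast1, hlam]; ring
  have hxy : (Sum.inl i₀ : Fin m ⊕ Fin N) ≠ Sum.inl i₁ := by simp [h01]
  have hxz : (Sum.inl i₀ : Fin m ⊕ Fin N) ≠ Sum.inr a := by simp
  have hyz : (Sum.inl i₁ : Fin m ⊕ Fin N) ≠ Sum.inr a := by simp
  have hmidA : RF (n := n) η i₀ a (lam - ((i₀ : ℕ) : ℂ) * η - ξ a) *
      RF η i₁ a (lam - ((i₁ : ℕ) : ℂ) * η - ξ a)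
      = (η * η) • (PF (n := n) (Equiv.swap (Sum.inl i₁) (Sum.inr a)) * T) := by
    rw [hνa0, hνa1]
    have hg0 : RF (n := n) η i₀ a η
        = η • (1 + PF (n := n) (Equiv.swap (Sum.inl i₀) (Sum.inr a))) := by
      unfold RF
      exact (smul_add η 1 _).symm
    have hg1 : RF (n := n) η i₁ a 0
        = η • PF (n := n) (Equiv.swap (Sum.inl i₁) (Sum.inr a)) := by
      unfold RF
      rw [zero_smul, zero_add]
    have hperm : ((Equiv.swap (Sum.inl i₀) (Sum.inr a)).trans
          (Equiv.swap (Sum.inl i₁) (Sum.inr a)) : Equiv.Perm (Fin m ⊕ Fin N))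
        = (Equiv.swap (Sum.inl i₁) (Sum.inr a)).trans
            (Equiv.swap (Sum.inl i₀) (Sum.inl i₁)) := by
      rw [swapL_a hxy hxz hyz, ← swapL_d hxy hxz hyz]
    rw [hg0, hg1, smul_mul_assoc, mul_smul_comm, smul_smul]
    congr 1
    rw [hT, add_mul, one_mul, mul_add, mul_one, PF_mul, PF_mul, hperm]
  -- move `T` through the tail of column `a`
  obtain ⟨E₂, hE₂⟩ := moveS T
    ((List.ofFn fun j : Fin m => RF (n := n) η j a (lam - (j : ℕ) * η - ξ a)).drop (r + 1))
    (by
      intro X hX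
      obtain ⟨j, hj, rfl⟩ := mem_drop_ofFn hX
      refine ⟨_, (comm_onePF_RF ?_ ?_ a η _).eq⟩
      · exact Fin.ne_of_val_ne (by show (j : ℕ) ≠ r - 1; omega)
      · exact Fin.ne_of_val_ne (by show (j : ℕ) ≠ r; omega))
  -- move `T` through the columns to the right of column `a`
  obtain ⟨E₃, hE₃⟩ := moveS T
    ((List.ofFn fun i : Fin N =>
      (List.ofFn fun j : Fin m =>
        RF (n := n) η j i.rev (lam - (j : ℕ) * η - ξ i.rev)).prod).drop
          (((a.rev : Fin N) : ℕ) + 1))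
    (by
      intro X hX
      have hX' := List.mem_of_mem_drop hX
      rw [List.mem_ofFn] at hX'
      obtain ⟨i, rfl⟩ := hX'
      exact colmove i.rev)
  -- split the list of columns at the column of site `a`
  have hLsplit : (List.ofFn fun i : Fin N =>
        (List.ofFn fun j : Fin m =>
          RF (n := n) η j i.rev (lam - (j : ℕ) * η - ξ i.rev)).prod).prod
      = ((List.ofFn fun i : Fin N =>
          (List.ofFn fun j : Fin m =>
            RF (n := n) η j i.rev (lam - (j : ℕ) * η - ξ i.rev)).prod).take
              ((a.rev : Fin N) : ℕ)).prod *
        ((List.ofFn fun j : Fin m => RF (n := n) η j a (lam - (j : ℕ) * η - ξ a)).prod *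
         ((List.ofFn fun i : Fin N =>
          (List.ofFn fun j : Fin m =>
            RF (n := n) η j i.rev (lam - (j : ℕ) * η - ξ i.rev)).prod).drop
              (((a.rev : Fin N) : ℕ) + 1)).prod) := by
    have hlen : (List.ofFn fun i : Fin N =>
        (List.ofFn fun j : Fin m =>
          RF (n := n) η j i.rev (lam - (j : ℕ) * η - ξ i.rev)).prod).length = N :=
      List.length_ofFn
    rw [← List.prod_take_mul_prod_drop (List.ofFn fun i : Fin N =>
      (List.ofFn fun j : Fin m =>
        RF (n := n) η j i.rev (lam - (j : ℕ) * η - ξ i.rev)).prod) ((a.rev : Fin N) : ℕ)]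
    congr 1
    rw [List.drop_eq_getElem_cons (by rw [hlen]; exact (a.rev).isLt), List.prod_cons]
    congr 1
    rw [List.getElem_ofFn]
    simp only [Fin.eta, Fin.rev_rev]
  -- the big product has `T` as a right factor
  have hV : ∃ V, (List.ofFn fun j : Fin m => MauxJ n N η ξ K m j (lam - (j : ℕ) * η)).prod
      = V * T := by
    refine ⟨(List.ofFn fun j : Fin m => iota j (Kaux n N K)).prod *
      (((List.ofFn fun i : Fin N => (List.ofFn fun j : Fin m =>
          RF (n := n) η j i.rev (lam - (j : ℕ) * η - ξ i.rev)).prod).take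
            ((a.rev : Fin N) : ℕ)).prod *
        (((List.ofFn fun j : Fin m =>
            RF (n := n) η j a (lam - (j : ℕ) * η - ξ a)).take (r - 1)).prod *
          ((η * η) • (PF (n := n) (Equiv.swap (Sum.inl i₁) (Sum.inr a)) * (E₂ * E₃))))), ?_⟩
    rw [hPidecomp, hLsplit, colsplit a, hmidA]
    have hTmove : T * (((List.ofFn fun j : Fin m =>
        RF (n := n) η j a (lam - (j : ℕ) * η - ξ a)).drop (r + 1)).prod *
        ((List.ofFn fun i : Fin N => (List.ofFn fun j : Fin m =>
          RF (n := n) η j i.rev (lam - (j : ℕ) * η - ξ i.rev)).prod).drop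
            (((a.rev : Fin N) : ℕ) + 1)).prod) = E₂ * (E₃ * T) := by
      rw [movePair hE₂ hE₃, mul_assoc]
    simp only [mul_assoc, smul_mul_assoc, mul_smul_comm]
    rw [hTmove]
  obtain ⟨V, hVe⟩ := hV
  have hTemb : T = 1 + PF (n := n) (emb m N (Equiv.swap i₀ i₁)) := by rw [hT, emb_swap]
  ext x y
  show (∑ v : Fin m → Fin n, (antisymH n N m * (List.ofFn fun j : Fin m =>
      MauxJ n N η ξ K m j (lam - (j : ℕ) * η)).prod) (v, x) (v, y)) = 0
  rw [hVe, ← mul_assoc, hTemb, traceFlipS]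
  have hzero : (1 + PF (n := n) (emb m N (Equiv.swap i₀ i₁))) * (antisymH n N m * V) = 0 := by
    rw [emb_swap, ← mul_assoc, one_add_PF_swap_mul_antisymH h01, zero_mul]
  rw [hzero]
  simp

end GLnSoV
end
end

section
/- Generic existence of the SoV covector basis: suppose K is nonderogatory, i.e. its minimal polynomial equals its characteristic polynomial (equivalently K has non-degenerate, simple spectrum). Consider the function D sending (S, ξ_1, …, ξ_N, η) ∈ ℂ^{n^N} × ℂ^N × ℂ to the determinant of the n^N × n^N matrix whose rows, indexed by the tuples h = (h_1,…,h_N) ∈ {0,…,n−1}^N, are the covectors ⟨h| = ⟨S| ∘ ∏_{a=1}^N (T_1^{(K)}(ξ_a))^{h_a} expressed in the standard basis of H. Then D is a polynomial function of the coordinates of S, the ξ_a, and η, and D is not identically zero; consequently, for every (S, ξ, η) outside the zero locus of this nonzero polynomial, the n^N covectors ⟨h| form a basis of the dual space H*. -/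
open Matrix BigOperators

noncomputable section

namespace GLnSoV

set_option linter.unusedSectionVars false
set_option linter.unusedVariables false

open Polynomial

-- ### Stage 2 proper
section Generic

variable {R : Type} [CommRing R]

/-- Generic `R`-matrix over a commutative ring. -/
def RmatP (n : ℕ) (η lam : R) : Matrix (Fin n × Fin n) (Fin n × Fin n) R :=
  Matrix.of fun p q =>
    lam * (if p = q then 1 else 0) + η * (if p.1 = q.2 ∧ p.2 = q.1 then 1 else 0)

def RauxP (n N : ℕ) (η lam : R) (j : Fin N) :
    Matrix (Fin n × (Fin N → Fin n)) (Fin n × (Fin N → Fin n)) R :=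
  Matrix.of fun p q =>
    RmatP n η lam (p.1, p.2 j) (q.1, q.2 j) *
      ∏ c ∈ Finset.univ.filter (fun c => c ≠ j), (if p.2 c = q.2 c then (1 : R) else 0)

def KauxP (n N : ℕ) (κ : Matrix (Fin n) (Fin n) R) :
    Matrix (Fin n × (Fin N → Fin n)) (Fin n × (Fin N → Fin n)) R :=
  Matrix.of fun p q => κ p.1 q.1 * (if p.2 = q.2 then (1 : R) else 0)

def monoP (n N : ℕ) (η : R) (ξ : Fin N → R) (κ : Matrix (Fin n) (Fin n) R) (lam : R) :
    Matrix (Fin n × (Fin N → Fin n)) (Fin n × (Fin N → Fin n)) R :=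
  KauxP n N κ * (List.ofFn (fun j : Fin N => RauxP n N η (lam - ξ j.rev) j.rev)).prod

def transfer1P (n N : ℕ) (η : R) (ξ : Fin N → R) (κ : Matrix (Fin n) (Fin n) R) (lam : R) :
    Matrix (Fin N → Fin n) (Fin N → Fin n) R :=
  Matrix.of fun x y => ∑ i : Fin n, monoP n N η ξ κ lam (i, x) (i, y)

def sovOpP (n N : ℕ) (η : R) (ξ : Fin N → R) (κ : Matrix (Fin n) (Fin n) R)
    (h : Fin N → Fin n) : Matrix (Fin N → Fin n) (Fin N → Fin n) R :=
  (List.ofFn (fun a : Fin N => transfer1P n N η ξ κ (ξ a) ^ (h a : ℕ))).prod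

def covMatP (n N : ℕ) (η : R) (ξ : Fin N → R) (κ : Matrix (Fin n) (Fin n) R)
    (S : (Fin N → Fin n) → R) : Matrix (Fin N → Fin n) (Fin N → Fin n) R :=
  Matrix.of fun h x => (S ᵥ* sovOpP n N η ξ κ h) x

variable {R' : Type} [CommRing R'] (φ : R →+* R')

lemma RmatP_map (n : ℕ) (η lam : R) :
    (RmatP n η lam).map φ = RmatP n (φ η) (φ lam) := by
  ext p q
  simp [RmatP, apply_ite φ]

lemma RauxP_map (n N : ℕ) (η lam : R) (j : Fin N) :
    (RauxP n N η lam j).map φ = RauxP n N (φ η) (φ lam) j := by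
  ext p q
  simp only [RauxP, Matrix.map_apply, Matrix.of_apply, _root_.map_mul, map_prod,
    apply_ite φ, _root_.map_one, _root_.map_zero]
  congr 1
  conv_rhs => rw [← RmatP_map φ]
  exact Matrix.map_apply.symm

lemma KauxP_map (n N : ℕ) (κ : Matrix (Fin n) (Fin n) R) :
    (KauxP n N κ).map φ = KauxP n N (κ.map φ) := by
  ext p q
  simp [KauxP, apply_ite φ]

lemma monoP_map (n N : ℕ) (η : R) (ξ : Fin N → R) (κ : Matrix (Fin n) (Fin n) R) (lam : R) :
    (monoP n N η ξ κ lam).map φ = monoP n N (φ η) (φ ∘ ξ) (κ.map φ) (φ lam) := by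
  unfold monoP
  rw [Matrix.map_mul, KauxP_map]
  congr 1
  rw [show ((List.ofFn (fun j : Fin N => RauxP n N η (lam - ξ j.rev) j.rev)).prod).map φ =
      φ.mapMatrix (List.ofFn (fun j : Fin N => RauxP n N η (lam - ξ j.rev) j.rev)).prod from rfl,
    map_list_prod, List.map_ofFn]
  refine congrArg List.prod (congrArg List.ofFn (funext fun j => ?_))
  show (RauxP n N η (lam - ξ j.rev) j.rev).map φ = _
  rw [RauxP_map, map_sub]
  rfl

lemma transfer1P_map (n N : ℕ) (η : R) (ξ : Fin N → R) (κ : Matrix (Fin n) (Fin n) R)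
    (lam : R) :
    (transfer1P n N η ξ κ lam).map φ = transfer1P n N (φ η) (φ ∘ ξ) (κ.map φ) (φ lam) := by
  ext x y
  simp only [transfer1P, Matrix.map_apply, Matrix.of_apply, map_sum]
  refine Finset.sum_congr rfl fun i _ => ?_
  conv_rhs => rw [← monoP_map φ]
  exact Matrix.map_apply.symm

lemma sovOpP_map (n N : ℕ) (η : R) (ξ : Fin N → R) (κ : Matrix (Fin n) (Fin n) R)
    (h : Fin N → Fin n) :
    (sovOpP n N η ξ κ h).map φ = sovOpP n N (φ η) (φ ∘ ξ) (κ.map φ) h := by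
  unfold sovOpP
  rw [show ((List.ofFn (fun a : Fin N => transfer1P n N η ξ κ (ξ a) ^ (h a : ℕ))).prod).map φ =
      φ.mapMatrix (List.ofFn (fun a : Fin N => transfer1P n N η ξ κ (ξ a) ^ (h a : ℕ))).prod
      from rfl, map_list_prod, List.map_ofFn]
  refine congrArg List.prod (congrArg List.ofFn (funext fun a => ?_))
  show ((transfer1P n N η ξ κ (ξ a) ^ (h a : ℕ)).map φ) = _
  rw [show (transfer1P n N η ξ κ (ξ a) ^ (h a : ℕ)).map φ =
      φ.mapMatrix (transfer1P n N η ξ κ (ξ a) ^ (h a : ℕ)) from rfl, map_pow]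
  rw [RingHom.mapMatrix_apply, transfer1P_map]
  rfl

lemma covMatP_det_map (n N : ℕ) (η : R) (ξ : Fin N → R) (κ : Matrix (Fin n) (Fin n) R)
    (S : (Fin N → Fin n) → R) :
    φ ((covMatP n N η ξ κ S).det) =
      (covMatP n N (φ η) (φ ∘ ξ) (κ.map φ) (φ ∘ S)).det := by
  rw [RingHom.map_det]
  congr 1
  ext h x
  simp only [RingHom.mapMatrix_apply, Matrix.map_apply, covMatP, Matrix.of_apply,
    Matrix.vecMul, dotProduct, map_sum, _root_.map_mul]
  refine Finset.sum_congr rfl fun y _ => ?_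
  congr 1
  conv_rhs => rw [← sovOpP_map φ]
  exact Matrix.map_apply.symm

end Generic

-- ### specialization to ℂ agrees with the original definitions
lemma RmatP_spec (n : ℕ) (η lam : ℂ) : Rmat n η lam = RmatP n η lam := by
  ext p q
  simp [Rmat, RmatP, permOp, Matrix.one_apply, Matrix.add_apply]

lemma RauxP_spec (n N : ℕ) (η lam : ℂ) (j : Fin N) : Raux n N η lam j = RauxP n N η lam j := by
  ext p q
  simp only [Raux, RauxP, Matrix.of_apply, RmatP_spec]

lemma KauxP_spec (n N : ℕ) (K : Matrix (Fin n) (Fin n) ℂ) : Kaux n N K = KauxP n N K := rfl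

lemma monoP_spec (n N : ℕ) (η : ℂ) (ξ : Fin N → ℂ) (K : Matrix (Fin n) (Fin n) ℂ) (lam : ℂ) :
    monodromy n N η ξ K lam = monoP n N η ξ K lam := by
  unfold monodromy monoP
  rw [KauxP_spec]
  exact congrArg _ (congrArg List.prod (congrArg List.ofFn
    (funext fun j => RauxP_spec n N η (lam - ξ j.rev) j.rev)))

lemma antisym_one (n : ℕ) : antisym n 1 = 1 := by
  have huniq : ∀ π : Equiv.Perm (Fin 1), π = 1 := fun π => Equiv.ext fun i => Subsingleton.elim _ _
  rw [antisym, Finset.sum_eq_single_of_mem 1 (Finset.mem_univ _)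
    (fun b _ hb => absurd (huniq b) hb)]
  simp only [Equiv.Perm.sign_one, Units.val_one, Int.cast_one, one_smul, Nat.factorial_one,
    Nat.cast_one, inv_one]
  ext v w
  simp [permTensorOp, Matrix.one_apply]

lemma antisymH_one (n N : ℕ) : antisymH n N 1 = 1 := by
  ext p q
  rw [antisymH, Matrix.of_apply, antisym_one]
  by_cases h1 : p.1 = q.1 <;> by_cases h2 : p.2 = q.2 <;>
    simp [Matrix.one_apply, Prod.ext_iff, h1, h2]

lemma transfer_one (n N : ℕ) (η : ℂ) (ξ : Fin N → ℂ) (K : Matrix (Fin n) (Fin n) ℂ) (lam : ℂ) :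
    transfer n N η ξ K 1 lam = transfer1P n N η ξ K lam := by
  ext x y
  rw [transfer, transfer1P]
  simp only [Matrix.of_apply]
  have hlist : (List.ofFn fun j : Fin 1 => MauxJ n N η ξ K 1 j (lam - (j : ℕ) * η)) =
      [MauxJ n N η ξ K 1 0 lam] := by
    simp [List.ofFn_succ]
  rw [hlist, List.prod_cons, List.prod_nil, mul_one, antisymH_one, one_mul]
  refine Fintype.sum_equiv (Equiv.funUnique (Fin 1) (Fin n)) _ _ fun v => ?_
  have hempty : (Finset.univ.filter (fun c : Fin 1 => c ≠ 0)) = ∅ := by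
    apply Finset.filter_eq_empty_iff.mpr
    intro c _
    simp [Subsingleton.elim c 0]
  show MauxJ n N η ξ K 1 0 lam (v, x) (v, y) = _
  rw [MauxJ]
  simp only [Matrix.of_apply, hempty, Finset.prod_empty, mul_one]
  rw [monoP_spec]
  rfl

lemma sovOpP_spec (n N : ℕ) (η : ℂ) (ξ : Fin N → ℂ) (K : Matrix (Fin n) (Fin n) ℂ)
    (h : Fin N → Fin n) : sovOp n N η ξ K h = sovOpP n N η ξ K h := by
  unfold sovOp sovOpP
  congr 1
  congr 1
  funext a
  rw [transfer_one]

lemma covMatP_spec (n N : ℕ) (η : ℂ) (ξ : Fin N → ℂ) (K : Matrix (Fin n) (Fin n) ℂ)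
    (S : (Fin N → Fin n) → ℂ) :
    (Matrix.of fun h x : Fin N → Fin n => sovCovector n N η ξ K S h x) = covMatP n N η ξ K S := by
  ext h x
  rw [Matrix.of_apply, covMatP, Matrix.of_apply, sovCovector, sovOpP_spec]


-- ### Stage 3: degree and leading-coefficient machinery for polynomial matrices
section Lead
open Polynomial

variable {ι ι' ι'' : Type} [Fintype ι'] [Fintype ι]

/-- All entries have `natDegree ≤ d`. -/
def degLE (d : ℕ) (M : Matrix ι ι' ℂ[X]) : Prop := ∀ i j, (M i j).natDegree ≤ d

/-- The matrix of coefficients in degree `d`. -/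
def lead (d : ℕ) (M : Matrix ι ι' ℂ[X]) : Matrix ι ι' ℂ :=
  Matrix.of fun i j => (M i j).coeff d

lemma degLE_mul {d e : ℕ} {M : Matrix ι ι' ℂ[X]} {P : Matrix ι' ι'' ℂ[X]}
    (hM : degLE d M) (hP : degLE e P) : degLE (d + e) (M * P) := by
  intro i j
  rw [Matrix.mul_apply]
  apply Polynomial.natDegree_sum_le_of_forall_le
  intro k _
  exact natDegree_mul_le.trans (add_le_add (hM i k) (hP k j))

lemma lead_mul {d e : ℕ} {M : Matrix ι ι' ℂ[X]} {P : Matrix ι' ι'' ℂ[X]}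
    (hM : degLE d M) (hP : degLE e P) :
    lead (d + e) (M * P) = lead d M * lead e P := by
  ext i j
  simp only [lead, Matrix.mul_apply, Matrix.of_apply, finset_sum_coeff]
  exact Finset.sum_congr rfl fun k _ =>
    Polynomial.coeff_mul_add_eq_of_natDegree_le (hM i k) (hP k j)

lemma degLE_one [DecidableEq ι] : degLE 0 (1 : Matrix ι ι ℂ[X]) := by
  intro i j
  rw [Matrix.one_apply]
  split <;> simp

lemma lead_one [DecidableEq ι] : lead 0 (1 : Matrix ι ι ℂ[X]) = 1 := by
  ext i j
  rw [lead, Matrix.of_apply, Matrix.one_apply, Matrix.one_apply]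
  split <;> simp

lemma lead_ofFn_prod [DecidableEq ι] {m : ℕ} (f : Fin m → Matrix ι ι ℂ[X]) (d : Fin m → ℕ)
    (hd : ∀ k, degLE (d k) (f k)) :
    degLE (∑ k, d k) (List.ofFn f).prod ∧
      lead (∑ k, d k) (List.ofFn f).prod = (List.ofFn fun k => lead (d k) (f k)).prod := by
  induction m with
  | zero =>
      simp only [List.ofFn_zero, List.prod_nil, Finset.univ_eq_empty, Finset.sum_empty]
      exact ⟨degLE_one, lead_one⟩
  | succ m ih =>
      rw [List.ofFn_succ, List.prod_cons, List.ofFn_succ (f := fun k => lead (d k) (f k)),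
        List.prod_cons, Fin.sum_univ_succ]
      obtain ⟨h1, h2⟩ := ih (fun k => f k.succ) (fun k => d k.succ) (fun k => hd k.succ)
      exact ⟨degLE_mul (hd 0) h1, by rw [lead_mul (hd 0) h1, h2]⟩

lemma lead_pow [DecidableEq ι] {d : ℕ} (M : Matrix ι ι ℂ[X]) (k : ℕ) (h : degLE d M) :
    degLE (k * d) (M ^ k) ∧ lead (k * d) (M ^ k) = (lead d M) ^ k := by
  induction k with
  | zero =>
      simp only [pow_zero, Nat.zero_mul]
      exact ⟨degLE_one, lead_one⟩
  | succ k ih =>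
      rw [pow_succ, pow_succ, Nat.succ_mul]
      exact ⟨degLE_mul ih.1 h, by rw [lead_mul ih.1 h, ih.2]⟩

lemma coeff_prod_le {α : Type} {s : Finset α} (f : α → ℂ[X]) (d : α → ℕ)
    (h : ∀ i ∈ s, (f i).natDegree ≤ d i) :
    (∏ i ∈ s, f i).coeff (∑ i ∈ s, d i) = ∏ i ∈ s, (f i).coeff (d i) := by
  classical
  induction s using Finset.cons_induction with
  | empty => simp
  | cons a s ha ih =>
      rw [Finset.prod_cons, Finset.sum_cons, Finset.prod_cons]
      rw [Polynomial.coeff_mul_add_eq_of_natDegree_le (h a (Finset.mem_cons_self a s))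
        ((Polynomial.natDegree_prod_le _ _).trans
          (Finset.sum_le_sum fun i hi => h i (Finset.mem_cons_of_mem hi)))]
      rw [ih fun i hi => h i (Finset.mem_cons_of_mem hi)]

lemma coeff_det [DecidableEq ι] (M : Matrix ι ι ℂ[X]) (d : ι → ℕ)
    (h : ∀ i j, (M i j).natDegree ≤ d i) :
    (M.det).coeff (∑ i, d i) = (Matrix.of fun i j => (M i j).coeff (d i)).det := by
  rw [Matrix.det_apply', Matrix.det_apply', finset_sum_coeff]
  refine Finset.sum_congr rfl fun σ _ => ?_
  rw [show ((Equiv.Perm.sign σ : ℤ) : ℂ[X]) = C ((Equiv.Perm.sign σ : ℤ) : ℂ) by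
    rw [← Polynomial.C_eq_intCast]]
  rw [coeff_C_mul]
  congr 1
  rw [← Equiv.sum_comp σ d]
  rw [coeff_prod_le _ _ fun i _ => h (σ i) i]
  exact Finset.prod_congr rfl fun i _ => rfl

end Lead

-- ### Stage 4: tensor-product matrices over the sites
section Tens

variable {n N : ℕ}

/-- Site-wise tensor product of one-site matrices. -/
def tens (M : Fin N → Matrix (Fin n) (Fin n) ℂ) :
    Matrix (Fin N → Fin n) (Fin N → Fin n) ℂ :=
  Matrix.of fun x y => ∏ c, M c (x c) (y c)

lemma tens_mul (M M' : Fin N → Matrix (Fin n) (Fin n) ℂ) :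
    tens M * tens M' = tens (fun c => M c * M' c) := by
  ext x y
  simp only [tens, Matrix.mul_apply, Matrix.of_apply]
  rw [Fintype.prod_sum]
  exact Finset.sum_congr rfl fun z _ => (Finset.prod_mul_distrib).symm

lemma tens_one : tens (fun _ : Fin N => (1 : Matrix (Fin n) (Fin n) ℂ)) = 1 := by
  ext x y
  rw [tens, Matrix.of_apply, Matrix.one_apply]
  by_cases hxy : x = y
  · subst hxy
    simp
  · rw [if_neg hxy]
    obtain ⟨c, hc⟩ := Function.ne_iff.mp hxy
    exact Finset.prod_eq_zero (Finset.mem_univ c) (by rw [Matrix.one_apply, if_neg hc])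

lemma tens_ofFn_prod {m : ℕ} (E : Fin m → Fin N → Matrix (Fin n) (Fin n) ℂ) :
    (List.ofFn fun a => tens (E a)).prod = tens (fun c => (List.ofFn fun a => E a c).prod) := by
  induction m with
  | zero => simp only [List.ofFn_zero, List.prod_nil]; exact tens_one.symm
  | succ m ih =>
      rw [List.ofFn_succ, List.prod_cons, ih fun a => E a.succ, tens_mul]
      refine congrArg tens (funext fun c => ?_)
      conv_rhs => rw [List.ofFn_succ, List.prod_cons]

lemma tens_isUnit_det (M : Fin N → Matrix (Fin n) (Fin n) ℂ) (h : ∀ c, IsUnit (M c).det) :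
    IsUnit (tens M).det := by
  have hmul : tens M * tens (fun c => (M c)⁻¹) = 1 := by
    rw [tens_mul, show (fun c => M c * (M c)⁻¹) = fun _ => (1 : Matrix (Fin n) (Fin n) ℂ) from
      funext fun c => Matrix.mul_nonsing_inv _ (h c), tens_one]
  exact IsUnit.of_mul_eq_one _ (by rw [← Matrix.det_mul, hmul, Matrix.det_one])

end Tens


-- ### Stage 5: helpers for the leading coefficient computation
section Helpers
open Polynomial

variable {R : Type} [CommRing R]

lemma RauxP_delta {n N : ℕ} (j : Fin N) (p q : Fin n × (Fin N → Fin n)) :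
    ((if (p.1, p.2 j) = (q.1, q.2 j) then (1 : R) else 0) *
      ∏ c ∈ Finset.univ.filter (fun c => c ≠ j), (if p.2 c = q.2 c then (1 : R) else 0)) =
    (1 : Matrix (Fin n × (Fin N → Fin n)) (Fin n × (Fin N → Fin n)) R) p q := by
  rw [Matrix.one_apply]
  by_cases hpq : p = q
  · subst hpq
    simp
  · rw [if_neg hpq]
    by_cases h1 : (p.1, p.2 j) = (q.1, q.2 j)
    · rw [if_pos h1, one_mul]
      obtain ⟨h11, h12⟩ := Prod.mk.inj h1
      have hp2 : p.2 ≠ q.2 := fun hh => hpq (Prod.ext h11 hh)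
      obtain ⟨c, hc⟩ := Function.ne_iff.mp hp2
      have hcj : c ≠ j := by rintro rfl; exact hc h12
      exact Finset.prod_eq_zero (Finset.mem_filter.mpr ⟨Finset.mem_univ c, hcj⟩) (if_neg hc)
    · rw [if_neg h1, zero_mul]

lemma RauxP_affine {n N : ℕ} (lam : R) (j : Fin N) :
    RauxP n N (1 : R) lam j =
      lam • (1 : Matrix (Fin n × (Fin N → Fin n)) (Fin n × (Fin N → Fin n)) R) +
        RauxP n N (1 : R) 0 j := by
  ext p q
  simp only [RauxP, RmatP, Matrix.of_apply, Matrix.add_apply, Matrix.smul_apply, smul_eq_mul]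
  rw [add_mul, mul_assoc, RauxP_delta j p q]
  simp

lemma degLE_map_C {ι ι' : Type} (B : Matrix ι ι' ℂ) : degLE 0 (B.map Polynomial.C) :=
  fun i j => by simp [Matrix.map_apply]

lemma lead_map_C {ι ι' : Type} (B : Matrix ι ι' ℂ) : lead 0 (B.map Polynomial.C) = B := by
  ext i j
  simp [lead, Matrix.map_apply]

lemma degLE_affine {ι : Type} [DecidableEq ι] (c : ℂ) (B : Matrix ι ι ℂ) :
    degLE 1 ((Polynomial.C c * Polynomial.X) • (1 : Matrix ι ι ℂ[X]) + B.map Polynomial.C) := by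
  intro i j
  simp only [Matrix.add_apply, Matrix.smul_apply, smul_eq_mul, Matrix.map_apply,
    Matrix.one_apply]
  refine (natDegree_add_le _ _).trans (max_le ?_ ?_)
  · by_cases hij : i = j
    · rw [if_pos hij, mul_one]
      exact (natDegree_C_mul_le _ _).trans (by simp)
    · simp [if_neg hij]
  · simp

lemma lead_affine {ι : Type} [DecidableEq ι] (c : ℂ) (B : Matrix ι ι ℂ) :
    lead 1 ((Polynomial.C c * Polynomial.X) • (1 : Matrix ι ι ℂ[X]) + B.map Polynomial.C) =
      c • (1 : Matrix ι ι ℂ) := by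
  ext i j
  simp only [lead, Matrix.of_apply, Matrix.add_apply, Matrix.smul_apply, smul_eq_mul,
    Matrix.map_apply, Matrix.one_apply, coeff_add]
  by_cases hij : i = j <;> simp [hij, coeff_C]

lemma ofFn_prod_smul {ι : Type} [Fintype ι] [DecidableEq ι] {m : ℕ} (c : Fin m → ℂ)
    (M : Fin m → Matrix ι ι ℂ) :
    (List.ofFn fun j => c j • M j).prod = (∏ j, c j) • (List.ofFn M).prod := by
  induction m with
  | zero => simp
  | succ m ih =>
      rw [List.ofFn_succ, List.prod_cons, ih (fun j => c j.succ) (fun j => M j.succ),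
        List.ofFn_succ (f := M), List.prod_cons, Fin.prod_univ_succ, smul_mul_assoc,
        mul_smul_comm]
      rw [smul_smul]

lemma ofFn_prod_one {M : Type} [Monoid M] (m : ℕ) :
    (List.ofFn fun _ : Fin m => (1 : M)).prod = 1 := by
  induction m with
  | zero => simp
  | succ m ih => rw [List.ofFn_succ, List.prod_cons, one_mul, ih]

lemma ofFn_prod_single {M : Type} [Monoid M] : ∀ {m : ℕ} (j0 : Fin m) (B : Fin m → M),
    (List.ofFn fun j => if j0 = j then B j else 1).prod = B j0 := by
  intro m
  induction m with
  | zero => exact fun j0 => j0.elim0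
  | succ m ih =>
      intro j0 B
      induction j0 using Fin.cases with
      | zero =>
          rw [List.ofFn_succ, List.prod_cons, if_pos rfl]
          rw [show (fun j : Fin m => if (0 : Fin (m+1)) = j.succ then B j.succ else 1) =
            fun _ : Fin m => (1 : M) from funext fun j => if_neg (Fin.succ_ne_zero j).symm]
          rw [ofFn_prod_one, mul_one]
      | succ i =>
          rw [List.ofFn_succ, List.prod_cons, if_neg (Fin.succ_ne_zero i), one_mul]
          rw [show (fun j : Fin m => if i.succ = j.succ then B j.succ else 1) =
            fun j : Fin m => if i = j then B j.succ else 1 from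
            funext fun j => by simp [Fin.succ_inj]]
          exact ih i (fun j => B j.succ)

lemma tens_pow {n N : ℕ} (E : Fin N → Matrix (Fin n) (Fin n) ℂ) (k : ℕ) :
    tens E ^ k = tens (fun c => E c ^ k) := by
  induction k with
  | zero => rw [pow_zero, show (fun c : Fin N => E c ^ 0) = fun _ => 1 from
      funext fun c => pow_zero _, tens_one]
  | succ k ih =>
      rw [pow_succ, ih, tens_mul]
      exact congrArg tens (funext fun c => (pow_succ _ _).symm)

lemma tens_ite {n N : ℕ} (a : Fin N) (B : Matrix (Fin n) (Fin n) ℂ) (x y : Fin N → Fin n) :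
    tens (fun c => if c = a then B else 1) x y =
      B (x a) (y a) * ∏ c ∈ Finset.univ.erase a, (if x c = y c then (1 : ℂ) else 0) := by
  rw [tens, Matrix.of_apply, ← Finset.mul_prod_erase _ _ (Finset.mem_univ a)]
  congr 1
  · rw [if_pos rfl]
  · refine Finset.prod_congr rfl fun c hc => ?_
    rw [if_neg (Finset.ne_of_mem_erase hc), Matrix.one_apply]

lemma sum_dj {N : ℕ} (a : Fin N) : (∑ j : Fin N, if j.rev = a then 0 else 1) = N - 1 := by
  classical
  rw [Fintype.sum_bijective Fin.rev Fin.rev_involutive.bijective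
    (fun j : Fin N => if j.rev = a then 0 else 1) (fun b => if b = a then 0 else 1)
    (fun j => rfl)]
  have h2 : (∑ b : Fin N, if b = a then (0:ℕ) else 1) = ∑ _b ∈ Finset.univ.erase a, (1:ℕ) := by
    rw [← Finset.sum_erase (f := fun b : Fin N => if b = a then (0:ℕ) else 1) Finset.univ (if_pos rfl)]
    exact Finset.sum_congr rfl fun b hb => if_neg (Finset.ne_of_mem_erase hb)
  rw [h2, Finset.sum_const, smul_eq_mul, mul_one,
    Finset.card_erase_of_mem (Finset.mem_univ a), Finset.card_univ, Fintype.card_fin]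

end Helpers


-- ### Stage 6: leading coefficients of the transfer matrices over ℂ[X]
section LeadCompute
open Polynomial

variable {n N : ℕ} (K : Matrix (Fin n) (Fin n) ℂ) (w : Fin N → ℂ)

lemma mono_lead (a : Fin N) :
    degLE (N - 1) (monoP n N (1 : ℂ[X]) (fun b => Polynomial.C (w b) * Polynomial.X)
        (K.map Polynomial.C) (Polynomial.C (w a) * Polynomial.X)) ∧
      lead (N - 1) (monoP n N (1 : ℂ[X]) (fun b => Polynomial.C (w b) * Polynomial.X)
        (K.map Polynomial.C) (Polynomial.C (w a) * Polynomial.X)) =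
      (∏ b ∈ Finset.univ.erase a, (w a - w b)) •
        (KauxP n N K * RauxP n N (1 : ℂ) 0 a) := by
  classical
  set F : Fin N → Matrix (Fin n × (Fin N → Fin n)) (Fin n × (Fin N → Fin n)) ℂ[X] :=
    fun j => RauxP n N 1
      (Polynomial.C (w a) * Polynomial.X - (fun b => Polynomial.C (w b) * Polynomial.X) j.rev)
      j.rev with hF
  set d : Fin N → ℕ := fun j => if j.rev = a then 0 else 1 with hd
  set L : Fin N → Matrix (Fin n × (Fin N → Fin n)) (Fin n × (Fin N → Fin n)) ℂ :=
    fun j => if j.rev = a then RauxP n N (1 : ℂ) 0 a else (w a - w j.rev) • 1 with hL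
  have hmono : monoP n N (1 : ℂ[X]) (fun b => Polynomial.C (w b) * Polynomial.X)
      (K.map Polynomial.C) (Polynomial.C (w a) * Polynomial.X) =
      KauxP n N (K.map Polynomial.C) * (List.ofFn F).prod := rfl
  have hmapR : ∀ b : Fin N, RauxP n N (1 : ℂ[X]) 0 b = (RauxP n N (1 : ℂ) 0 b).map Polynomial.C := by
    intro b
    rw [RauxP_map (Polynomial.C : ℂ →+* ℂ[X]), _root_.map_one, _root_.map_zero]
  have hfac : ∀ j, degLE (d j) (F j) ∧ lead (d j) (F j) = L j := by
    intro j
    by_cases hja : j.rev = a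
    · simp only [hF, hd, hL, if_pos hja, hja, sub_self]
      rw [hmapR a]
      exact ⟨degLE_map_C _, lead_map_C _⟩
    · simp only [hF, hd, hL, if_neg hja]
      have hsub : Polynomial.C (w a) * Polynomial.X - Polynomial.C (w j.rev) * Polynomial.X =
          Polynomial.C (w a - w j.rev) * Polynomial.X := by
        rw [map_sub, sub_mul]
      rw [hsub, RauxP_affine, hmapR j.rev]
      exact ⟨degLE_affine _ _, lead_affine _ _⟩
  have hsum : (∑ j, d j) = N - 1 := sum_dj a
  have hKdeg : degLE 0 (KauxP n N (K.map Polynomial.C)) := by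
    rw [← KauxP_map (Polynomial.C : ℂ →+* ℂ[X])]
    exact degLE_map_C _
  have hKlead : lead 0 (KauxP n N (K.map Polynomial.C)) = KauxP n N K := by
    rw [← KauxP_map (Polynomial.C : ℂ →+* ℂ[X])]
    exact lead_map_C _
  have hlist := lead_ofFn_prod F d fun j => (hfac j).1
  have hlead_list : lead (∑ j, d j) (List.ofFn F).prod = (List.ofFn L).prod := by
    rw [hlist.2]
    exact congrArg List.prod (congrArg List.ofFn (funext fun j => (hfac j).2))
  have hLprod : (List.ofFn L).prod =
      (∏ b ∈ Finset.univ.erase a, (w a - w b)) • RauxP n N (1 : ℂ) 0 a := by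
    have hL' : L = fun j => (if j.rev = a then (1 : ℂ) else (w a - w j.rev)) •
        (if a.rev = j then RauxP n N (1 : ℂ) 0 a else 1) := by
      funext j
      by_cases hja : j.rev = a
      · have haj : a.rev = j := by rw [← hja, Fin.rev_rev]
        simp [hL, hja, haj]
      · have haj : ¬(a.rev = j) := fun hh => hja (by rw [← hh, Fin.rev_rev])
        simp [hL, hja, haj]
    rw [hL', ofFn_prod_smul, ofFn_prod_single a.rev fun _ => RauxP n N (1 : ℂ) 0 a]
    congr 1
    rw [Fintype.prod_bijective Fin.rev Fin.rev_involutive.bijective _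
      (fun b => if b = a then (1 : ℂ) else (w a - w b)) fun j => rfl]
    rw [← Finset.prod_erase (f := fun b => if b = a then (1 : ℂ) else (w a - w b))
      Finset.univ (if_pos rfl)]
    exact Finset.prod_congr rfl fun b hb => if_neg (Finset.ne_of_mem_erase hb)
  constructor
  · have hh := degLE_mul hKdeg hlist.1
    rw [zero_add, hsum] at hh
    rw [hmono]
    exact hh
  · have hh := lead_mul hKdeg hlist.1
    rw [zero_add, hsum] at hh
    rw [hsum] at hlead_list
    rw [hmono, hh, hKlead, hlead_list, hLprod, Matrix.mul_smul]

lemma ptrace (a : Fin N) (x y : Fin N → Fin n) :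
    (∑ i : Fin n, (KauxP n N K * RauxP n N (1 : ℂ) 0 a) (i, x) (i, y)) =
      tens (fun c => if c = a then K else 1) x y := by
  classical
  rw [tens_ite]
  simp only [Matrix.mul_apply, KauxP, RauxP, RmatP, Matrix.of_apply]
  rw [show (Finset.univ.filter (fun c : Fin N => c ≠ a)) = Finset.univ.erase a from
    Finset.filter_ne' _ _]
  simp only [Fintype.sum_prod_type, zero_mul, one_mul, zero_add, Prod.mk.injEq, ite_and,
    mul_ite, ite_mul, mul_zero, mul_one, Finset.sum_ite_eq, Finset.sum_ite_eq',
    Finset.mem_univ, if_true]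
  simp [ite_self, mul_ite, ite_mul, mul_zero, zero_mul, zero_add, mul_one,
    Finset.sum_ite_eq, Finset.sum_ite_eq', Finset.mul_sum, Finset.sum_mul]

lemma Ta_lead (a : Fin N) :
    degLE (N - 1) (transfer1P n N (1 : ℂ[X]) (fun b => Polynomial.C (w b) * Polynomial.X)
        (K.map Polynomial.C) (Polynomial.C (w a) * Polynomial.X)) ∧
      lead (N - 1) (transfer1P n N (1 : ℂ[X]) (fun b => Polynomial.C (w b) * Polynomial.X)
        (K.map Polynomial.C) (Polynomial.C (w a) * Polynomial.X)) =
      (∏ b ∈ Finset.univ.erase a, (w a - w b)) • tens (fun c => if c = a then K else 1) := by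
  have hm := mono_lead K w a
  constructor
  · intro x y
    rw [transfer1P, Matrix.of_apply]
    apply Polynomial.natDegree_sum_le_of_forall_le
    intro i _
    exact hm.1 (i, x) (i, y)
  · ext x y
    rw [lead, Matrix.of_apply, transfer1P, Matrix.of_apply, finset_sum_coeff]
    have hco : ∀ i : Fin n,
        (monoP n N (1 : ℂ[X]) (fun b => Polynomial.C (w b) * Polynomial.X)
          (K.map Polynomial.C) (Polynomial.C (w a) * Polynomial.X) (i, x) (i, y)).coeff (N - 1)
        = (∏ b ∈ Finset.univ.erase a, (w a - w b)) *
            (KauxP n N K * RauxP n N (1 : ℂ) 0 a) (i, x) (i, y) := by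
      intro i
      have hh := congrFun (congrFun hm.2 (i, x)) (i, y)
      simpa [lead, Matrix.smul_apply, smul_eq_mul] using hh
    rw [Finset.sum_congr rfl fun i _ => hco i, ← Finset.mul_sum, ptrace K a x y,
      Matrix.smul_apply, smul_eq_mul]

end LeadCompute


-- ### Stage 7: leading coefficient of the SoV determinant
section SovLead
open Polynomial

variable {n N : ℕ} (K : Matrix (Fin n) (Fin n) ℂ) (w : Fin N → ℂ) (e : Fin n → ℂ)

lemma sov_lead (h : Fin N → Fin n) :
    degLE (∑ a, (h a : ℕ) * (N - 1))
      (sovOpP n N (1 : ℂ[X]) (fun b => Polynomial.C (w b) * Polynomial.X) (K.map Polynomial.C) h) ∧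
    lead (∑ a, (h a : ℕ) * (N - 1))
      (sovOpP n N (1 : ℂ[X]) (fun b => Polynomial.C (w b) * Polynomial.X) (K.map Polynomial.C) h) =
      (∏ a, (∏ b ∈ Finset.univ.erase a, (w a - w b)) ^ (h a : ℕ)) •
        tens (fun c => K ^ (h c : ℕ)) := by
  classical
  set Ta : Fin N → Matrix (Fin N → Fin n) (Fin N → Fin n) ℂ[X] := fun a =>
    transfer1P n N (1 : ℂ[X]) (fun b => Polynomial.C (w b) * Polynomial.X)
      (K.map Polynomial.C) (Polynomial.C (w a) * Polynomial.X) with hTa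
  have hsov : sovOpP n N (1 : ℂ[X]) (fun b => Polynomial.C (w b) * Polynomial.X)
      (K.map Polynomial.C) h = (List.ofFn fun a => Ta a ^ (h a : ℕ)).prod := rfl
  have hpow : ∀ a : Fin N, degLE ((h a : ℕ) * (N - 1)) (Ta a ^ (h a : ℕ)) ∧
      lead ((h a : ℕ) * (N - 1)) (Ta a ^ (h a : ℕ)) =
        (∏ b ∈ Finset.univ.erase a, (w a - w b)) ^ (h a : ℕ) •
          tens (fun c => if c = a then K ^ (h a : ℕ) else 1) := by
    intro a
    have hp := lead_pow (Ta a) (h a : ℕ) (Ta_lead K w a).1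
    refine ⟨hp.1, ?_⟩
    rw [hp.2, (Ta_lead K w a).2, _root_.smul_pow, tens_pow]
    congr 1
    refine congrArg tens (funext fun c => ?_)
    by_cases hc : c = a <;> simp [hc]
  have hlist := lead_ofFn_prod (fun a => Ta a ^ (h a : ℕ)) (fun a => (h a : ℕ) * (N - 1))
    fun a => (hpow a).1
  refine ⟨by rw [hsov]; exact hlist.1, ?_⟩
  rw [hsov, hlist.2]
  rw [congrArg List.prod (congrArg List.ofFn (funext fun a => (hpow a).2))]
  rw [ofFn_prod_smul, tens_ofFn_prod]
  congr 1
  refine congrArg tens (funext fun c => ?_)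
  exact ofFn_prod_single c fun a => K ^ (h a : ℕ)

lemma cov_entry (h x : Fin N → Fin n) :
    (covMatP n N (1 : ℂ[X]) (fun b => Polynomial.C (w b) * Polynomial.X) (K.map Polynomial.C)
        (fun v => Polynomial.C (∏ c, e (v c))) h x).natDegree ≤ (∑ a, (h a : ℕ) * (N - 1)) ∧
    (covMatP n N (1 : ℂ[X]) (fun b => Polynomial.C (w b) * Polynomial.X) (K.map Polynomial.C)
        (fun v => Polynomial.C (∏ c, e (v c))) h x).coeff (∑ a, (h a : ℕ) * (N - 1)) =
      (∏ a, (∏ b ∈ Finset.univ.erase a, (w a - w b)) ^ (h a : ℕ)) *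
        ∏ c, (e ᵥ* (K ^ (h c : ℕ))) (x c) := by
  classical
  have hs := sov_lead K w h
  constructor
  · rw [covMatP, Matrix.of_apply, Matrix.vecMul]
    apply Polynomial.natDegree_sum_le_of_forall_le
    intro y _
    exact (natDegree_C_mul_le _ _).trans (hs.1 y x)
  · rw [covMatP, Matrix.of_apply, Matrix.vecMul]
    show (∑ y, Polynomial.C (∏ c, e (y c)) *
      sovOpP n N (1 : ℂ[X]) (fun b => Polynomial.C (w b) * Polynomial.X)
        (K.map Polynomial.C) h y x).coeff _ = _
    rw [finset_sum_coeff]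
    have hco : ∀ y : Fin N → Fin n,
        (Polynomial.C (∏ c, e (y c)) *
          sovOpP n N (1 : ℂ[X]) (fun b => Polynomial.C (w b) * Polynomial.X)
            (K.map Polynomial.C) h y x).coeff (∑ a, (h a : ℕ) * (N - 1)) =
        (∏ c, e (y c)) * ((∏ a, (∏ b ∈ Finset.univ.erase a, (w a - w b)) ^ (h a : ℕ)) *
          tens (fun c => K ^ (h c : ℕ)) y x) := by
      intro y
      rw [coeff_C_mul]
      congr 1
      have hh := congrFun (congrFun hs.2 y) x
      simpa [lead, Matrix.smul_apply, smul_eq_mul] using hh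
    rw [Finset.sum_congr rfl fun y _ => hco y]
    simp only [tens, Matrix.of_apply]
    rw [show (∑ y : Fin N → Fin n, (∏ c, e (y c)) *
        ((∏ a, (∏ b ∈ Finset.univ.erase a, (w a - w b)) ^ (h a : ℕ)) *
          ∏ c, (K ^ (h c : ℕ)) (y c) (x c))) =
      (∏ a, (∏ b ∈ Finset.univ.erase a, (w a - w b)) ^ (h a : ℕ)) *
        ∑ y : Fin N → Fin n, ∏ c, (e (y c) * (K ^ (h c : ℕ)) (y c) (x c)) by
        rw [Finset.mul_sum]
        refine Finset.sum_congr rfl fun y _ => ?_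
        rw [Finset.prod_mul_distrib]
        ring]
    congr 1
    rw [← Fintype.prod_sum fun c k => e k * (K ^ (h c : ℕ)) k (x c)]
    refine Finset.prod_congr rfl fun c _ => ?_
    simp [Matrix.vecMul, dotProduct]

theorem covdet_ne_zero (hw : Function.Injective w)
    (he : IsUnit (Matrix.of fun j i : Fin n => (e ᵥ* (K ^ (j : ℕ))) i).det) :
    (covMatP n N (1 : ℂ[X]) (fun b => Polynomial.C (w b) * Polynomial.X) (K.map Polynomial.C)
      (fun v => Polynomial.C (∏ c, e (v c)))).det ≠ 0 := by
  classical
  set W : Matrix (Fin n) (Fin n) ℂ := Matrix.of fun j i : Fin n => (e ᵥ* (K ^ (j : ℕ))) i with hW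
  set Γ : (Fin N → Fin n) → ℂ :=
    fun h => ∏ a, (∏ b ∈ Finset.univ.erase a, (w a - w b)) ^ (h a : ℕ) with hΓ
  set dfun : (Fin N → Fin n) → ℕ := fun h => ∑ a, (h a : ℕ) * (N - 1) with hdfun
  have hcoeff : (covMatP n N (1 : ℂ[X]) (fun b => Polynomial.C (w b) * Polynomial.X)
      (K.map Polynomial.C) (fun v => Polynomial.C (∏ c, e (v c)))).det.coeff (∑ h, dfun h) =
      (∏ h, Γ h) * (tens (fun _ : Fin N => W)).det := by
    rw [coeff_det _ dfun fun h x => (cov_entry K w e h x).1]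
    rw [show (Matrix.of fun h x : Fin N → Fin n =>
        (covMatP n N (1 : ℂ[X]) (fun b => Polynomial.C (w b) * Polynomial.X)
          (K.map Polynomial.C) (fun v => Polynomial.C (∏ c, e (v c))) h x).coeff (dfun h)) =
      Matrix.of fun h x => Γ h * tens (fun _ : Fin N => W) h x from by
        ext h x
        rw [Matrix.of_apply, Matrix.of_apply, (cov_entry K w e h x).2]
        rfl]
    exact Matrix.det_mul_column Γ _
  have hne : (∏ h, Γ h) * (tens (fun _ : Fin N => W)).det ≠ 0 := by
    apply mul_ne_zero
    · apply Finset.prod_ne_zero_iff.mpr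
      intro h _
      apply Finset.prod_ne_zero_iff.mpr
      intro a _
      apply pow_ne_zero
      apply Finset.prod_ne_zero_iff.mpr
      intro b hb
      exact sub_ne_zero.mpr fun hh => (Finset.ne_of_mem_erase hb) (hw hh).symm
    · exact (tens_isUnit_det _ fun _ => he).ne_zero
  intro h0
  rw [h0] at hcoeff
  rw [Polynomial.coeff_zero] at hcoeff
  exact hne hcoeff.symm

end SovLead


section Cyclic

variable {n : ℕ}

/-- `p(K)` kills the row vector `v` (acting by `vecMul`). -/
def kills (K : Matrix (Fin n) (Fin n) ℂ) (p : ℂ[X]) (v : Fin n → ℂ) : Prop :=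
  v ᵥ* (Polynomial.aeval K p) = 0

variable {K : Matrix (Fin n) (Fin n) ℂ}

lemma kills_mul {p : ℂ[X]} {v : Fin n → ℂ} (h : kills K p v) (q : ℂ[X]) :
    kills K (p * q) v := by
  unfold kills at *
  rw [_root_.map_mul, ← Matrix.vecMul_vecMul, h, Matrix.zero_vecMul]

lemma kills_of_dvd {p q : ℂ[X]} {v : Fin n → ℂ} (h : kills K p v) (hd : p ∣ q) :
    kills K q v := by
  obtain ⟨r, rfl⟩ := hd
  exact kills_mul h r

/-- The ideal of polynomials killing `v`. -/
def killerIdeal (K : Matrix (Fin n) (Fin n) ℂ) (v : Fin n → ℂ) : Ideal ℂ[X] where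
  carrier := {p | kills K p v}
  add_mem' := by
    intro p q hp hq
    show kills K (p + q) v
    unfold kills at *
    rw [_root_.map_add, Matrix.vecMul_add, hp, hq, add_zero]
  zero_mem' := by
    show kills K 0 v
    unfold kills
    rw [map_zero, Matrix.vecMul_zero]
  smul_mem' := by
    intro r p hp
    show kills K (r * p) v
    rw [mul_comm]
    exact kills_mul hp r

lemma mem_killerIdeal_iff {v : Fin n → ℂ} {p : ℂ[X]} :
    p ∈ killerIdeal K v ↔ kills K p v := Iff.rfl

lemma vecMul_finset_sum {I J : Type*} [Fintype I] {α : Type*} (s : Finset α)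
    (f : α → I → ℂ) (A : Matrix I J ℂ) :
    (∑ x ∈ s, f x) ᵥ* A = ∑ x ∈ s, (f x) ᵥ* A := by
  ext j
  simp only [Matrix.vecMul, dotProduct, Finset.sum_apply, Finset.sum_mul]
  exact Finset.sum_comm

/-- If `(X-a)^m` kills `v` but `(X-a)^(m-1)` does not, then any killer of `v`
is divisible by `(X-a)^m`. -/
lemma pow_dvd_of_kills {v : Fin n → ℂ} {a : ℂ} {m : ℕ}
    (h1 : kills K ((X - C a) ^ m) v) (h2 : ¬ kills K ((X - C a) ^ (m - 1)) v)
    {r : ℂ[X]} (hr : kills K r v) : (X - C a) ^ m ∣ r := by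
  classical
  set I := killerIdeal K v
  have hI : Submodule.IsPrincipal I := inferInstance
  set g := Submodule.IsPrincipal.generator I with hg
  have hspan : Ideal.span {g} = I := Submodule.IsPrincipal.span_singleton_generator I
  have hmem : ∀ p : ℂ[X], p ∈ I ↔ g ∣ p := by
    intro p
    rw [← hspan, Ideal.mem_span_singleton]
  have hgp : g ∣ (X - C a) ^ m := (hmem _).mp h1
  obtain ⟨j, hj, hassoc⟩ := (dvd_prime_pow (Polynomial.prime_X_sub_C a) m).mp hgp
  have hjm : j = m := by
    by_contra hne
    have hjlt : j ≤ m - 1 := by omega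
    apply h2
    have : g ∣ (X - C a) ^ (m - 1) :=
      hassoc.dvd.trans (pow_dvd_pow _ hjlt)
    exact (hmem _).mpr this
  subst hjm
  exact hassoc.symm.dvd.trans ((hmem _).mp hr)

/-- A nonderogatory matrix admits a row vector whose Krylov matrix is invertible. -/
theorem exists_cyclic_covector (K : Matrix (Fin n) (Fin n) ℂ)
    (hK : minpoly ℂ K = K.charpoly) :
    ∃ e : Fin n → ℂ,
      IsUnit (Matrix.of fun j i : Fin n => (e ᵥ* (K ^ (j : ℕ))) i).det := by
  classical
  have hint : IsIntegral ℂ K := IsIntegral.of_finite ℂ K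
  set μ : ℂ[X] := minpoly ℂ K with hμ
  have hmonic : μ.Monic := minpoly.monic hint
  have hdeg : μ.natDegree = n := by
    rw [hK, Matrix.charpoly_natDegree_eq_dim, Fintype.card_fin]
  have hsplits : Splits μ := IsAlgClosed.splits μ
  set T := μ.roots.toFinset with hT
  set m : ℂ → ℕ := fun a => μ.roots.count a with hm
  have hfact : μ = ∏ a ∈ T, (X - C a) ^ m a := by
    conv_lhs => rw [hsplits.eq_prod_roots_of_monic hmonic]
    rw [hT]
    exact Finset.prod_multiset_map_count _ _
  -- the complementary factors
  set q : ℂ → ℂ[X] := fun a => ∏ b ∈ T.erase a, (X - C b) ^ m b with hq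
  have hfact' : ∀ a ∈ T, μ = (X - C a) ^ m a * q a := by
    intro a ha
    rw [hfact]
    exact (Finset.mul_prod_erase _ _ ha).symm
  have hmpos : ∀ a ∈ T, 1 ≤ m a := by
    intro a ha
    exact Multiset.count_pos.mpr (Multiset.mem_toFinset.mp ha)
  -- choose the building blocks v a
  have hblock : ∀ a ∈ T, ∃ v : Fin n → ℂ,
      kills K ((X - C a) ^ m a) v ∧ ¬ kills K ((X - C a) ^ (m a - 1)) v := by
    intro a ha
    set q' : ℂ[X] := (X - C a) ^ (m a - 1) * q a with hq'
    have hμq' : μ = (X - C a) * q' := by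
      rw [hq', ← mul_assoc, ← pow_succ']
      have : m a - 1 + 1 = m a := Nat.succ_pred_eq_of_pos (hmpos a ha)
      rw [this]
      exact hfact' a ha
    have hq'monic : q'.Monic :=
      ((monic_X_sub_C a).pow _).mul
        (Polynomial.monic_prod_of_monic _ _ (fun b _ => (monic_X_sub_C b).pow _))
    have hq'ne : Polynomial.aeval K q' ≠ 0 := by
      intro hzero
      have hdvd : μ ∣ q' := minpoly.dvd ℂ K hzero
      have := Polynomial.natDegree_le_of_dvd hdvd hq'monic.ne_zero
      have hdegμ : μ.natDegree = 1 + q'.natDegree := by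
        rw [hμq', Polynomial.natDegree_mul (X_sub_C_ne_zero a) hq'monic.ne_zero,
          natDegree_X_sub_C]
      omega
    -- pick a row of the nonzero matrix
    have : ∃ i k, (Polynomial.aeval K q' : Matrix (Fin n) (Fin n) ℂ) i k ≠ 0 := by
      by_contra hc
      push_neg at hc
      apply hq'ne
      ext i k
      exact hc i k
    obtain ⟨i, k, hik⟩ := this
    refine ⟨(Pi.single i 1 : Fin n → ℂ) ᵥ* (Polynomial.aeval K (q a)), ?_, ?_⟩
    · unfold kills
      rw [Matrix.vecMul_vecMul, ← _root_.map_mul, mul_comm, ← hfact' a ha, hμ, minpoly.aeval,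
        Matrix.vecMul_zero]
    · unfold kills
      rw [Matrix.vecMul_vecMul, ← _root_.map_mul, mul_comm, ← hq']
      intro hzero
      apply hik
      have := congrFun hzero k
      simpa [Matrix.vecMul, dotProduct, Pi.single_apply] using this
  choose v hv1 hv2 using hblock
  set e : Fin n → ℂ := ∑ a ∈ T.attach, v a.1 a.2 with he
  refine ⟨e, ?_⟩
  rw [isUnit_iff_ne_zero]
  intro hdet
  obtain ⟨c, hc0, hcW⟩ := Matrix.exists_vecMul_eq_zero_iff.mpr hdet
  -- build the polynomial from the linear dependence
  set p : ℂ[X] := ∑ j : Fin n, C (c j) * X ^ (j : ℕ) with hp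
  have haevalp : (Polynomial.aeval K p : Matrix (Fin n) (Fin n) ℂ) =
      ∑ j : Fin n, c j • K ^ (j : ℕ) := by
    rw [hp, _root_.map_sum]
    refine Finset.sum_congr rfl fun j _ => ?_
    rw [_root_.map_mul, _root_.map_pow, aeval_X, aeval_C, Algebra.smul_def]
  have hpk : kills K p e := by
    unfold kills
    rw [haevalp]
    ext i
    have h1 := congrFun hcW i
    simp only [Matrix.vecMul, dotProduct, Matrix.of_apply, Pi.zero_apply] at h1
    simp only [Matrix.vecMul, dotProduct, Matrix.sum_apply, Matrix.smul_apply,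
      smul_eq_mul, Finset.mul_sum, Pi.zero_apply]
    rw [Finset.sum_comm, ← h1]
    refine Finset.sum_congr rfl fun j _ => ?_
    rw [Finset.mul_sum]
    refine Finset.sum_congr rfl fun k _ => ?_
    ring
  -- each prime power factor divides p
  have hstep : ∀ a ∈ T, (X - C a) ^ m a ∣ p := by
    intro a ha
    have hkpq : kills K (p * q a) e := kills_mul hpk (q a)
    have hothers : ∀ (b : ℂ) (hb : b ∈ T), b ≠ a → kills K (p * q a) (v b hb) := by
      intro b hb hba
      apply kills_of_dvd (hv1 b hb)
      refine Dvd.dvd.trans ?_ (dvd_mul_left (q a) p)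
      exact Finset.dvd_prod_of_mem _ (Finset.mem_erase.mpr ⟨hba, hb⟩)
    have hva : kills K (p * q a) (v a ha) := by
      have he' : v a ha = e - ∑ b ∈ T.attach.erase ⟨a, ha⟩, v b.1 b.2 := by
        have hsum := Finset.add_sum_erase T.attach (fun b => v b.1 b.2)
          (Finset.mem_attach _ ⟨a, ha⟩)
        rw [← he] at hsum
        exact eq_sub_of_add_eq hsum
      unfold kills at hkpq hothers ⊢
      rw [he', Matrix.sub_vecMul, hkpq, vecMul_finset_sum, zero_sub, neg_eq_zero]
      apply Finset.sum_eq_zero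
      intro b hb
      have hbne : b.1 ≠ a := by
        intro hba
        apply Finset.ne_of_mem_erase hb
        exact Subtype.ext hba
      exact hothers b.1 b.2 hbne
    have hdvd : (X - C a) ^ m a ∣ p * q a :=
      pow_dvd_of_kills (hv1 a ha) (hv2 a ha) hva
    have hcop : IsCoprime ((X - C a) ^ m a) (q a) := by
      apply IsCoprime.prod_right
      intro b hb
      have hba : a ≠ b := fun hh => (Finset.mem_erase.mp hb).1 hh.symm
      exact (isCoprime_X_sub_C_of_isUnit_sub
        (isUnit_iff_ne_zero.mpr (sub_ne_zero.mpr hba))).pow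
    exact hcop.dvd_of_dvd_mul_right hdvd
  have hμp : μ ∣ p := by
    rw [hfact]
    apply Finset.prod_dvd_of_coprime _ hstep
    intro x hx y hy hxy
    exact (isCoprime_X_sub_C_of_isUnit_sub
      (isUnit_iff_ne_zero.mpr (sub_ne_zero.mpr hxy))).pow
  -- contradiction via degrees
  obtain ⟨j0, hj0⟩ := Function.ne_iff.mp hc0
  simp only [Pi.zero_apply] at hj0
  have hcoeff : p.coeff (j0 : ℕ) = c j0 := by
    rw [hp, finset_sum_coeff]
    rw [Finset.sum_eq_single j0]
    · simp
    · intro b _ hb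
      simp only [coeff_C_mul, coeff_X_pow]
      rw [if_neg (fun hh => hb (Fin.val_injective hh.symm)), mul_zero]
    · intro hh
      exact absurd (Finset.mem_univ j0) hh
  have hp0 : p ≠ 0 := by
    intro hz
    rw [hz, coeff_zero] at hcoeff
    exact hj0 hcoeff.symm
  have hdegp : p.natDegree < n := by
    have : p.natDegree ≤ n - 1 := by
      rw [hp]
      apply Polynomial.natDegree_sum_le_of_forall_le
      intro j _
      refine (natDegree_C_mul_le _ _).trans ?_
      rw [natDegree_X_pow]
      omega
    have hn : 0 < n := Fin.pos j0
    omega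
  have := Polynomial.natDegree_le_of_dvd hμp hp0
  omega

end Cyclic



/-- generic existence of the SoV covector basis. If the twist matrix `K` is
nonderogatory, the determinant of the matrix of SoV covectors is a nonzero polynomial
function of `(S, ξ, η)`, and outside its zero locus the SoV covectors form a basis of the
dual space. -/
theorem sov_basis_generic (n N : ℕ) (hn : 1 ≤ n) (hN : 1 ≤ N)
    (K : Matrix (Fin n) (Fin n) ℂ) (hK : minpoly ℂ K = K.charpoly) :
    ∃ D : MvPolynomial ((Fin N → Fin n) ⊕ (Fin N ⊕ Unit)) ℂ,
      D ≠ 0 ∧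
      (∀ (S : (Fin N → Fin n) → ℂ) (ξ : Fin N → ℂ) (η : ℂ),
        MvPolynomial.eval (Sum.elim S (Sum.elim ξ fun _ => η)) D =
          (Matrix.of fun h x : Fin N → Fin n => sovCovector n N η ξ K S h x).det) ∧
      (∀ (S : (Fin N → Fin n) → ℂ) (ξ : Fin N → ℂ) (η : ℂ),
        MvPolynomial.eval (Sum.elim S (Sum.elim ξ fun _ => η)) D ≠ 0 →
          ∃ B : Module.Basis (Fin N → Fin n) ℂ ((Fin N → Fin n) → ℂ),
            ∀ h, B h = sovCovector n N η ξ K S h) := by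

  classical
  obtain ⟨e, he⟩ := exists_cyclic_covector K hK
  set η0 : MvPolynomial ((Fin N → Fin n) ⊕ (Fin N ⊕ Unit)) ℂ :=
    MvPolynomial.X (Sum.inr (Sum.inr ())) with hη0
  set ξ0 : Fin N → MvPolynomial ((Fin N → Fin n) ⊕ (Fin N ⊕ Unit)) ℂ :=
    fun b => MvPolynomial.X (Sum.inr (Sum.inl b)) with hξ0
  set S0 : (Fin N → Fin n) → MvPolynomial ((Fin N → Fin n) ⊕ (Fin N ⊕ Unit)) ℂ :=
    fun v => MvPolynomial.X (Sum.inl v) with hS0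
  set κ0 : Matrix (Fin n) (Fin n) (MvPolynomial ((Fin N → Fin n) ⊕ (Fin N ⊕ Unit)) ℂ) :=
    K.map (MvPolynomial.C : ℂ → _) with hκ0
  have heval : ∀ (S : (Fin N → Fin n) → ℂ) (ξ : Fin N → ℂ) (η : ℂ),
      MvPolynomial.eval (Sum.elim S (Sum.elim ξ fun _ => η)) ((covMatP n N η0 ξ0 κ0 S0).det) =
        (Matrix.of fun h x : Fin N → Fin n => sovCovector n N η ξ K S h x).det := by
    intro S ξ η
    have hmap := covMatP_det_map
      (MvPolynomial.eval (Sum.elim S (Sum.elim ξ fun _ => η))) n N η0 ξ0 κ0 S0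
    rw [covMatP_spec]
    rw [hmap,
      show (MvPolynomial.eval (Sum.elim S (Sum.elim ξ fun _ => η))) η0 = η from by
        simp [hη0],
      show ⇑(MvPolynomial.eval (Sum.elim S (Sum.elim ξ fun _ => η))) ∘ ξ0 = ξ from
        funext fun b => by simp [hξ0],
      show κ0.map ⇑(MvPolynomial.eval (Sum.elim S (Sum.elim ξ fun _ => η))) = K from by
        rw [hκ0, Matrix.map_map]
        ext i j
        simp,
      show ⇑(MvPolynomial.eval (Sum.elim S (Sum.elim ξ fun _ => η))) ∘ S0 = S from
        funext fun v => by simp [hS0]]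
  refine ⟨(covMatP n N η0 ξ0 κ0 S0).det, ?_, heval, ?_⟩
  · -- the determinant polynomial is nonzero
    intro hD0
    set ψ : MvPolynomial ((Fin N → Fin n) ⊕ (Fin N ⊕ Unit)) ℂ →+* Polynomial ℂ :=
      (MvPolynomial.eval₂Hom (Polynomial.C : ℂ →+* Polynomial ℂ)
        (Sum.elim (fun v => Polynomial.C (∏ c, e (v c)))
          (Sum.elim (fun b => Polynomial.C ((b : ℕ) : ℂ) * Polynomial.X) fun _ => 1))) with hψ
    have hmap := covMatP_det_map ψ n N η0 ξ0 κ0 S0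
    rw [show ψ η0 = 1 from by simp [hη0, hψ],
      show ⇑ψ ∘ ξ0 = (fun b : Fin N => Polynomial.C ((b : ℕ) : ℂ) * Polynomial.X) from
        funext fun b => by simp [hξ0, hψ],
      show κ0.map ⇑ψ = K.map ⇑(Polynomial.C : ℂ →+* Polynomial ℂ) from by
        rw [hκ0, Matrix.map_map]
        ext i j
        simp [hψ],
      show ⇑ψ ∘ S0 = (fun v : Fin N → Fin n => Polynomial.C (∏ c, e (v c))) from
        funext fun v => by simp [hS0, hψ]] at hmap
    rw [hD0, map_zero] at hmap
    have hw : Function.Injective (fun b : Fin N => ((b : ℕ) : ℂ)) := by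
      intro b b' hb
      exact Fin.val_injective (Nat.cast_injective hb)
    exact covdet_ne_zero K (fun b => ((b : ℕ) : ℂ)) e hw he hmap.symm
  · -- nonvanishing gives a basis
    intro S ξ η hne
    rw [heval S ξ η] at hne
    have hMdet : IsUnit ((Matrix.of fun h x : Fin N → Fin n =>
        sovCovector n N η ξ K S h x)).transpose.det := by
      rw [Matrix.det_transpose]
      exact isUnit_iff_ne_zero.mpr hne
    have hInv := ((Matrix.of fun h x : Fin N → Fin n =>
        sovCovector n N η ξ K S h x)).transpose.invertibleOfIsUnitDet hMdet
    refine ⟨(Pi.basisFun ℂ (Fin N → Fin n)).map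
      (Matrix.toLinearEquiv' _ hInv), fun h => ?_⟩
    rw [Module.Basis.map_apply, Pi.basisFun_apply]
    show Matrix.toLin' ((Matrix.of fun h x : Fin N → Fin n =>
        sovCovector n N η ξ K S h x)).transpose (Pi.single h 1) = _
    rw [Matrix.toLin'_apply, Matrix.mulVec_single_one]
    rfl

end GLnSoV
end
end

section
/- The SoV discrete system implies the quantum spectral curve: assume K is invertible, η ≠ 0, the ξ_a are pairwise distinct, and ξ_a − ξ_b ≠ kη for all a ≠ b and all nonzero integers k with |k| ≤ n. Let ᾱ be an eigenvalue of K and define α_0, …, α_n as in the context. Let x ∈ ℂ^N satisfy x_a · t_{n−1}^{(K,x)}(ξ_a − η) = t_n^{(K)}(ξ_a) for all a, and set t_m := t_m^{(K,x)} for 0 ≤ m ≤ n−1 and t_n := t_n^{(K)}. Let φ(λ) = ∏_{j=1}^M (λ − λ_j) be a polynomial with M ≤ N and λ_j ≠ ξ_a for all j, a, satisfying α_1(ξ_a) · φ(ξ_a − η) = x_a · φ(ξ_a) for every a ∈ {1,…,N}. Then the quantum spectral curve functional equation holds identically: Σ_{b=0}^n α_b(λ) · φ(λ − bη) · t_{n−b}(λ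 − bη) = 0 for all λ ∈ ℂ. -/
open Matrix BigOperators

noncomputable section

namespace GLnSoV

open Polynomial in
lemma linProd_monic {ι : Type*} (s : Finset ι) (f : ι → ℂ) :
    (∏ i ∈ s, (X - C (f i))).Monic :=
  monic_prod_of_monic s _ (fun i _ => monic_X_sub_C (f i))

open Polynomial in
lemma linProd_natDegree {ι : Type*} (s : Finset ι) (f : ι → ℂ) :
    (∏ i ∈ s, (X - C (f i))).natDegree = s.card := by
  rw [natDegree_prod_of_monic s _ (fun i _ => monic_X_sub_C (f i))]
  simp [natDegree_X_sub_C]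

open Polynomial in
lemma linProd_eval {ι : Type*} (s : Finset ι) (f : ι → ℂ) (lam : ℂ) :
    (∏ i ∈ s, (X - C (f i))).eval lam = ∏ i ∈ s, (lam - f i) := by
  simp [eval_prod]

open Polynomial in
def interpSum (N : ℕ) (ξ : Fin N → ℂ) (c : Fin N → ℂ) (s : ℂ) : Polynomial ℂ :=
  ∑ a, C (c a) * ∏ b ∈ Finset.univ.erase a, (C ((ξ a - ξ b)⁻¹) * (X - C (ξ b + s)))

open Polynomial in
lemma interpSum_natDegree_le (N : ℕ) (ξ c : Fin N → ℂ) (s : ℂ) (hN : 1 ≤ N) :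
    (interpSum N ξ c s).natDegree ≤ N - 1 := by
  refine Polynomial.natDegree_sum_le_of_forall_le _ _ (fun a _ => ?_)
  refine le_trans (natDegree_C_mul_le _ _) ?_
  refine le_trans (Polynomial.natDegree_prod_le _ _) ?_
  refine le_trans (Finset.sum_le_card_nsmul _ _ 1 (fun b _ => ?_)) ?_
  · exact le_trans (natDegree_C_mul_le _ _) (natDegree_X_sub_C _).le
  · rw [smul_eq_mul, mul_one, Finset.card_erase_of_mem (Finset.mem_univ a),
      Finset.card_univ, Fintype.card_fin]

open Polynomial in
lemma interpSum_coeff (N : ℕ) (ξ c : Fin N → ℂ) (s : ℂ) (hN : 1 ≤ N) :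
    (interpSum N ξ c s).coeff N = 0 := by
  apply Polynomial.coeff_eq_zero_of_natDegree_lt
  exact lt_of_le_of_lt (interpSum_natDegree_le N ξ c s hN) (by omega)

open Polynomial in
lemma interpSum_eval (N : ℕ) (ξ c : Fin N → ℂ) (s lam : ℂ) :
    (interpSum N ξ c s).eval lam =
      ∑ a, c a * ∏ b ∈ Finset.univ.erase a, ((ξ a - ξ b)⁻¹ * (lam - (ξ b + s))) := by
  simp [interpSum, eval_finset_sum, eval_prod]

open Polynomial in
def tpoly (n N : ℕ) (η : ℂ) (ξ : Fin N → ℂ) (K : Matrix (Fin n) (Fin n) ℂ)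
    (x : Fin N → ℂ) (s : ℂ) : ℕ → Polynomial ℂ
  | 0 => 1
  | 1 => C K.trace * (∏ a, (X - C (ξ a + s))) + interpSum N ξ x s
  | m + 2 =>
      (∏ b, ∏ r ∈ Finset.Icc 1 (m + 1), (X - C (ξ b + (r : ℂ) * η + s))) *
        (C (asymCoef n K (m + 2)) * (∏ a, (X - C (ξ a + s))) +
          interpSum N ξ (fun a => x a * tfun n N η ξ K x (m + 1) (ξ a - η) *
            ∏ b, ∏ r ∈ Finset.Icc 1 (m + 1), (ξ a - ξ b - (r : ℂ) * η)⁻¹) s)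

open Polynomial in
lemma tpoly_eval (n N : ℕ) (η : ℂ) (ξ : Fin N → ℂ) (K : Matrix (Fin n) (Fin n) ℂ)
    (x : Fin N → ℂ) (s lam : ℂ) :
    ∀ m, (tpoly n N η ξ K x s m).eval lam = tfun n N η ξ K x m (lam - s)
  | 0 => by simp [tpoly, tfun]
  | 1 => by
      simp only [tpoly, tfun, t1fun, eval_add, eval_mul, eval_C, eval_prod, eval_sub, eval_X,
        interpSum_eval]
      congr 1
      · congr 1
        exact Finset.prod_congr rfl (fun a _ => by ring)
      · refine Finset.sum_congr rfl (fun a _ => ?_)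
        congr 1
        refine Finset.prod_congr rfl (fun b _ => ?_)
        rw [div_eq_mul_inv]
        ring
  | m + 2 => by
      simp only [tpoly, tfun, eval_mul, eval_add, eval_C, eval_prod, eval_sub, eval_X,
        interpSum_eval]
      congr 1
      · refine Finset.prod_congr rfl (fun b _ => ?_)
        exact Finset.prod_congr rfl (fun r _ => by ring)
      congr 1
      · congr 1
        exact Finset.prod_congr rfl (fun a _ => by ring)
      · refine Finset.sum_congr rfl (fun a _ => ?_)
        unfold gfun
        rw [Finset.prod_congr rfl (fun b (_ : b ∈ Finset.univ.erase a) => div_eq_mul_inv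
          (lam - s - ξ b) (ξ a - ξ b))]
        rw [Finset.prod_mul_distrib]
        have : ∏ b ∈ Finset.univ.erase a, (lam - (ξ b + s)) =
            ∏ b ∈ Finset.univ.erase a, (lam - s - ξ b) :=
          Finset.prod_congr rfl (fun b _ => by ring)
        rw [Finset.prod_mul_distrib, this]
        ring

/-- the leading-coefficient bookkeeping values of `tpoly` -/
def Ecoef (n : ℕ) (K : Matrix (Fin n) (Fin n) ℂ) : ℕ → ℂ
  | 0 => 1
  | 1 => K.trace
  | m + 2 => asymCoef n K (m + 2)

open Polynomial in
lemma tpoly_natDegree_le (n N : ℕ) (η : ℂ) (ξ : Fin N → ℂ) (K : Matrix (Fin n) (Fin n) ℂ)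
    (x : Fin N → ℂ) (s : ℂ) (hN : 1 ≤ N) :
    ∀ m, (tpoly n N η ξ K x s m).natDegree ≤ m * N ∧
      (tpoly n N η ξ K x s m).coeff (m * N) = Ecoef n K m
  | 0 => by simp [tpoly, Ecoef]
  | 1 => by
      have hdeg : (∏ a, (X - C (ξ a + s))).natDegree = N := by
        rw [linProd_natDegree, Finset.card_univ, Fintype.card_fin]
      have hmon := linProd_monic Finset.univ (fun a => ξ a + s)
      constructor
      · refine le_trans (natDegree_add_le _ _) (max_le ?_ ?_)
        · rw [one_mul]
          exact le_trans (natDegree_C_mul_le _ _) hdeg.le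
        · rw [one_mul]
          exact le_trans (interpSum_natDegree_le N ξ x s hN) (by omega)
      · show (C K.trace * (∏ a, (X - C (ξ a + s))) + interpSum N ξ x s).coeff (1 * N) =
          Ecoef n K 1
        have h1 : (∏ a, (X - C (ξ a + s))).coeff N = 1 := by
          have := hmon.coeff_natDegree
          rwa [hdeg] at this
        rw [one_mul, coeff_add, coeff_C_mul, interpSum_coeff N ξ x s hN, add_zero, h1,
          mul_one, Ecoef]
  | m + 2 => by
      set P := ∏ b, ∏ r ∈ Finset.Icc 1 (m + 1), (X - C (ξ b + (r : ℂ) * η + s)) with hP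
      set S := C (asymCoef n K (m + 2)) * (∏ a, (X - C (ξ a + s))) +
          interpSum N ξ (fun a => x a * tfun n N η ξ K x (m + 1) (ξ a - η) *
            ∏ b, ∏ r ∈ Finset.Icc 1 (m + 1), (ξ a - ξ b - (r : ℂ) * η)⁻¹) s with hS
      have hPmon : P.Monic :=
        monic_prod_of_monic _ _ (fun b _ =>
          monic_prod_of_monic _ _ (fun r _ => monic_X_sub_C _))
      have hPdeg : P.natDegree = N * (m + 1) := by
        rw [hP, natDegree_prod_of_monic _ _ (fun b _ =>
          monic_prod_of_monic _ _ (fun r _ => monic_X_sub_C _))]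
        have : ∀ b : Fin N, (∏ r ∈ Finset.Icc 1 (m + 1), (X - C (ξ b + (r : ℂ) * η + s))).natDegree
            = m + 1 := by
          intro b
          rw [linProd_natDegree, Nat.card_Icc]
          omega
        rw [Finset.sum_congr rfl (fun b _ => this b)]
        rw [Finset.sum_const, Finset.card_univ, Fintype.card_fin, smul_eq_mul]
      have hdeg : (∏ a, (X - C (ξ a + s))).natDegree = N := by
        rw [linProd_natDegree, Finset.card_univ, Fintype.card_fin]
      have hSdeg : S.natDegree ≤ N := by
        refine le_trans (natDegree_add_le _ _) (max_le ?_ ?_)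
        · exact le_trans (natDegree_C_mul_le _ _) hdeg.le
        · exact le_trans (interpSum_natDegree_le N ξ _ s hN) (by omega)
      have hScoeff : S.coeff N = asymCoef n K (m + 2) := by
        rw [hS, coeff_add, coeff_C_mul, interpSum_coeff N ξ _ s hN, add_zero]
        have h1 : (∏ a, (X - C (ξ a + s))).coeff N = 1 := by
          have := (linProd_monic Finset.univ (fun a => ξ a + s)).coeff_natDegree
          rwa [hdeg] at this
        rw [h1, mul_one]
      constructor
      · show (P * S).natDegree ≤ (m + 2) * N
        refine le_trans (natDegree_mul_le) ?_
        rw [hPdeg, show (m + 2) * N = N * (m + 1) + N by ring]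
        exact Nat.add_le_add_left hSdeg _
      · show (P * S).coeff ((m + 2) * N) = Ecoef n K (m + 2)
        rw [show (m + 2) * N = N * (m + 1) + N by ring]
        rw [coeff_mul_add_eq_of_natDegree_le hPdeg.le hSdeg]
        rw [← hPdeg, hPmon.coeff_natDegree, one_mul, hScoeff, Ecoef]

open Polynomial in
def alphaPoly (N : ℕ) (η : ℂ) (ξ : Fin N → ℂ) (abar : ℂ) : ℕ → Polynomial ℂ
  | 0 => -1
  | j + 1 => C ((-1 : ℂ) ^ j * abar ^ (j + 1)) *
      ∏ h ∈ Finset.range (j + 1), ∏ a, (X - C (ξ a + (h : ℂ) * η - η))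

open Polynomial in
lemma alphaPoly_eval (N : ℕ) (η : ℂ) (ξ : Fin N → ℂ) (abar : ℂ) (lam : ℂ) :
    ∀ b, (alphaPoly N η ξ abar b).eval lam = alphaF N η ξ abar b lam
  | 0 => by simp [alphaPoly, alphaF]
  | j + 1 => by
      have hfac : ∏ h ∈ Finset.range (j + 1), alpha1 N η ξ abar (lam - (h : ℂ) * η) =
          abar ^ (j + 1) *
            ∏ h ∈ Finset.range (j + 1), ∏ a, (lam - (ξ a + (h : ℂ) * η - η)) := by
        unfold alpha1
        rw [Finset.prod_mul_distrib, Finset.prod_const, Finset.card_range]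
        congr 1
        exact Finset.prod_congr rfl (fun h _ =>
          Finset.prod_congr rfl (fun a _ => by ring))
      simp only [alphaPoly, alphaF, eval_mul, eval_C, eval_prod, eval_sub, eval_X]
      rw [hfac]
      ring

open Polynomial in
lemma alphaPoly_natDegree_le (N : ℕ) (η : ℂ) (ξ : Fin N → ℂ) (abar : ℂ) :
    ∀ b, (alphaPoly N η ξ abar b).natDegree ≤ b * N ∧
      (alphaPoly N η ξ abar b).coeff (b * N) =
        (if b = 0 then -1 else (-1 : ℂ) ^ (b - 1) * abar ^ b)
  | 0 => by
      constructor
      · simp [alphaPoly]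
      · simp [alphaPoly]
  | j + 1 => by
      have hmon : (∏ h ∈ Finset.range (j + 1), ∏ a : Fin N,
          (X - C (ξ a + (h : ℂ) * η - η))).Monic :=
        monic_prod_of_monic _ _ (fun h _ =>
          monic_prod_of_monic _ _ (fun a _ => monic_X_sub_C _))
      have hdeg : (∏ h ∈ Finset.range (j + 1), ∏ a : Fin N,
          (X - C (ξ a + (h : ℂ) * η - η))).natDegree = (j + 1) * N := by
        rw [natDegree_prod_of_monic _ _ (fun h _ =>
          monic_prod_of_monic _ _ (fun a _ => monic_X_sub_C _))]
        have : ∀ h : ℕ, (∏ a : Fin N, (X - C (ξ a + (h : ℂ) * η - η))).natDegree = N := by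
          intro h
          rw [linProd_natDegree, Finset.card_univ, Fintype.card_fin]
        rw [Finset.sum_congr rfl (fun h _ => this h), Finset.sum_const, Finset.card_range,
          smul_eq_mul]
      constructor
      · exact le_trans (natDegree_C_mul_le _ _) hdeg.le
      · have h1 : (∏ h ∈ Finset.range (j + 1), ∏ a : Fin N,
            (X - C (ξ a + (h : ℂ) * η - η))).coeff ((j + 1) * N) = 1 := by
          have := hmon.coeff_natDegree
          rwa [hdeg] at this
        rw [show alphaPoly N η ξ abar (j + 1) = C ((-1 : ℂ) ^ j * abar ^ (j + 1)) *
          ∏ h ∈ Finset.range (j + 1), ∏ a, (X - C (ξ a + (h : ℂ) * η - η)) from rfl]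
        rw [coeff_C_mul, h1, mul_one, if_neg (Nat.succ_ne_zero j)]
        simp

open Polynomial in
def phiPoly (M : ℕ) (lamr : Fin M → ℂ) (η : ℂ) (b : ℕ) : Polynomial ℂ :=
  ∏ j, (X - C (lamr j + (b : ℂ) * η))

open Polynomial in
lemma phiPoly_eval (M : ℕ) (lamr : Fin M → ℂ) (η : ℂ) (b : ℕ) (lam : ℂ) :
    (phiPoly M lamr η b).eval lam = ∏ j, (lam - (b : ℂ) * η - lamr j) := by
  rw [phiPoly, linProd_eval]
  exact Finset.prod_congr rfl (fun j _ => by ring)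

open Polynomial in
lemma phiPoly_natDegree (M : ℕ) (lamr : Fin M → ℂ) (η : ℂ) (b : ℕ) :
    (phiPoly M lamr η b).natDegree = M ∧ (phiPoly M lamr η b).coeff M = 1 := by
  have hdeg : (phiPoly M lamr η b).natDegree = M := by
    rw [phiPoly, linProd_natDegree, Finset.card_univ, Fintype.card_fin]
  refine ⟨hdeg, ?_⟩
  have hdeg2 : (∏ j, (X - C (lamr j + (b : ℂ) * η))).natDegree = M := by
    rw [linProd_natDegree, Finset.card_univ, Fintype.card_fin]
  have := (linProd_monic Finset.univ (fun j => lamr j + (b : ℂ) * η)).coeff_natDegree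
  rw [hdeg2] at this
  exact this

open Polynomial in
def qdetPoly (n N : ℕ) (η : ℂ) (ξ : Fin N → ℂ) (K : Matrix (Fin n) (Fin n) ℂ) : Polynomial ℂ :=
  C K.det * ∏ b, ((X - C (ξ b - η)) * ∏ m ∈ Finset.Icc 1 (n - 1), (X - C (ξ b + (m : ℂ) * η)))

open Polynomial in
lemma qdetPoly_eval (n N : ℕ) (η : ℂ) (ξ : Fin N → ℂ) (K : Matrix (Fin n) (Fin n) ℂ)
    (lam : ℂ) : (qdetPoly n N η ξ K).eval lam = qdet n N η ξ K lam := by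
  simp only [qdetPoly, qdet, eval_mul, eval_C, eval_prod, eval_sub, eval_X]
  congr 1
  refine Finset.prod_congr rfl (fun b _ => ?_)
  congr 1
  · ring
  · exact Finset.prod_congr rfl (fun m _ => by ring)

open Polynomial in
lemma qdetPoly_natDegree_le (n N : ℕ) (hn : 1 ≤ n) (η : ℂ) (ξ : Fin N → ℂ)
    (K : Matrix (Fin n) (Fin n) ℂ) :
    (qdetPoly n N η ξ K).natDegree ≤ n * N ∧
      (qdetPoly n N η ξ K).coeff (n * N) = K.det := by
  have hmonb : ∀ b : Fin N, ((X - C (ξ b - η)) *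
      ∏ m ∈ Finset.Icc 1 (n - 1), (X - C (ξ b + (m : ℂ) * η))).Monic :=
    fun b => (monic_X_sub_C _).mul
      (monic_prod_of_monic _ _ (fun m _ => monic_X_sub_C _))
  have hmon : (∏ b, ((X - C (ξ b - η)) *
      ∏ m ∈ Finset.Icc 1 (n - 1), (X - C (ξ b + (m : ℂ) * η)))).Monic :=
    monic_prod_of_monic _ _ (fun b _ => hmonb b)
  have hdeg : (∏ b, ((X - C (ξ b - η)) *
      ∏ m ∈ Finset.Icc 1 (n - 1), (X - C (ξ b + (m : ℂ) * η)))).natDegree = n * N := by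
    rw [natDegree_prod_of_monic _ _ (fun b _ => hmonb b)]
    have : ∀ b : Fin N, ((X - C (ξ b - η)) *
        ∏ m ∈ Finset.Icc 1 (n - 1), (X - C (ξ b + (m : ℂ) * η))).natDegree = n := by
      intro b
      rw [natDegree_mul (monic_X_sub_C _).ne_zero
        (monic_prod_of_monic _ _ (fun m _ => monic_X_sub_C _)).ne_zero,
        natDegree_X_sub_C, linProd_natDegree, Nat.card_Icc]
      omega
    rw [Finset.sum_congr rfl (fun b _ => this b), Finset.sum_const, Finset.card_univ,
      Fintype.card_fin, smul_eq_mul, mul_comm]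
  constructor
  · exact le_trans (natDegree_C_mul_le _ _) hdeg.le
  · have h1 := hmon.coeff_natDegree
    rw [hdeg] at h1
    rw [qdetPoly, coeff_C_mul, h1, mul_one]

def pminor (n : ℕ) (K : Matrix (Fin n) (Fin n) ℂ) (s : Finset (Fin n)) : ℂ :=
  Matrix.det (K.submatrix (fun i : {j // j ∈ s} => (i : Fin n)) (fun i => (i : Fin n)))

def Emin (n : ℕ) (K : Matrix (Fin n) (Fin n) ℂ) (m : ℕ) : ℂ :=
  ∑ s ∈ Finset.powersetCard m Finset.univ, pminor n K s

lemma pminor_eq_det_submatrix (n : ℕ) (K : Matrix (Fin n) (Fin n) ℂ) {m : ℕ}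
    (s : Finset (Fin n)) (h : s.card = m) :
    pminor n K s = Matrix.det (K.submatrix (s.orderEmbOfFin h) (s.orderEmbOfFin h)) := by
  unfold pminor
  rw [← Matrix.det_submatrix_equiv_self (s.orderIsoOfFin h).toEquiv]
  rw [Matrix.submatrix_submatrix]
  congr 1

lemma orderEmbOfFin_congr (n m : ℕ) (s t : Finset (Fin n)) (hts : t = s)
    (h1 : s.card = m) (h2 : t.card = m) (y : Fin m) :
    t.orderEmbOfFin h2 y = s.orderEmbOfFin h1 y := by subst hts; rfl


section pack
variable {n m : ℕ} (v : Fin m → Fin n)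

def packPerm (hinj : Function.Injective v)
    (hcard : (Finset.image v Finset.univ).card = m) : Equiv.Perm (Fin m) :=
  Equiv.ofBijective
    (fun jj => ((Finset.image v Finset.univ).orderIsoOfFin hcard).symm
      ⟨v jj, Finset.mem_image_of_mem v (Finset.mem_univ jj)⟩)
    (Finite.injective_iff_bijective.mp (fun a b hab => by
      have h2 := congrArg ((Finset.image v Finset.univ).orderIsoOfFin hcard) hab
      rw [OrderIso.apply_symm_apply, OrderIso.apply_symm_apply] at h2
      exact hinj (congrArg Subtype.val h2)))

lemma packPerm_spec (hinj : Function.Injective v)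
    (hcard : (Finset.image v Finset.univ).card = m) (jj : Fin m) :
    (Finset.image v Finset.univ).orderEmbOfFin hcard (packPerm v hinj hcard jj) = v jj := by
  unfold packPerm
  simp only [Equiv.ofBijective_apply]
  rw [← Finset.coe_orderIsoOfFin_apply, OrderIso.apply_symm_apply]

end pack

lemma sum_det_submatrix (n m : ℕ) (K : Matrix (Fin n) (Fin n) ℂ) :
    ∑ v : Fin m → Fin n, Matrix.det (K.submatrix v v) =
      (m.factorial : ℂ) * Emin n K m := by
  classical
  have hzero : ∀ v ∈ (Finset.univ : Finset (Fin m → Fin n)),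
      v ∉ Finset.univ.filter (fun v : Fin m → Fin n => Function.Injective v) →
      Matrix.det (K.submatrix v v) = 0 := by
    intro v _ hv
    simp only [Finset.mem_filter, Finset.mem_univ, true_and] at hv
    unfold Function.Injective at hv
    push_neg at hv
    obtain ⟨a, b, hab, hne⟩ := hv
    exact Matrix.det_zero_of_row_eq hne (funext fun j => by simp [hab])
  rw [← Finset.sum_subset (Finset.filter_subset (fun v : Fin m → Fin n => Function.Injective v)
    Finset.univ) hzero]
  · have key : ∑ v ∈ Finset.univ.filter (fun v : Fin m → Fin n => Function.Injective v),
        Matrix.det (K.submatrix v v) =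
        ∑ p ∈ (Finset.powersetCard m (Finset.univ : Finset (Fin n))) ×ˢ
            (Finset.univ : Finset (Equiv.Perm (Fin m))), pminor n K p.1 := by
      have hcardv : ∀ v : Fin m → Fin n, Function.Injective v →
          (Finset.image v Finset.univ).card = m := fun v hv => by
        rw [Finset.card_image_of_injective _ hv, Finset.card_univ, Fintype.card_fin]
      refine Finset.sum_bij'
        (i := fun v hv => (Finset.image v Finset.univ,
          packPerm v ((Finset.mem_filter.mp hv).2)
            (hcardv v ((Finset.mem_filter.mp hv).2))))
        (j := fun p hp => (p.1.orderEmbOfFin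
            ((Finset.mem_powersetCard.mp (Finset.mem_product.mp hp).1).2)) ∘ p.2)
        ?_ ?_ ?_ ?_ ?_
      · intro v hv
        rw [Finset.mem_product]
        exact ⟨Finset.mem_powersetCard.mpr ⟨Finset.subset_univ _,
          hcardv v ((Finset.mem_filter.mp hv).2)⟩, Finset.mem_univ _⟩
      · intro p hp
        rw [Finset.mem_filter]
        exact ⟨Finset.mem_univ _, ((p.1.orderEmbOfFin _).injective).comp p.2.injective⟩
      · -- left inverse
        intro v hv
        funext jj
        exact packPerm_spec v ((Finset.mem_filter.mp hv).2)
          (hcardv v ((Finset.mem_filter.mp hv).2)) jj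
      · -- right inverse
        intro p hp
        obtain ⟨s, π⟩ := p
        have hcard : s.card = m :=
          (Finset.mem_powersetCard.mp (Finset.mem_product.mp hp).1).2
        have hs' : Finset.image ((s.orderEmbOfFin hcard) ∘ π) Finset.univ = s := by
          apply Finset.ext
          intro i
          simp only [Finset.mem_image, Finset.mem_univ, true_and, Function.comp_apply]
          constructor
          · rintro ⟨jj, rfl⟩; exact Finset.orderEmbOfFin_mem s hcard (π jj)
          · intro hi
            refine ⟨π.symm ((s.orderIsoOfFin hcard).symm ⟨i, hi⟩), ?_⟩
            rw [Equiv.apply_symm_apply, ← Finset.coe_orderIsoOfFin_apply,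
              OrderIso.apply_symm_apply]
        refine Prod.ext hs' (Equiv.ext fun jj => ?_)
        unfold packPerm
        simp only [Equiv.ofBijective_apply]
        rw [OrderIso.symm_apply_eq, Subtype.ext_iff, Finset.coe_orderIsoOfFin_apply]
        exact (orderEmbOfFin_congr n m s _ hs' hcard _ (π jj)).symm
      · -- value equality
        intro v hv
        have hinj := (Finset.mem_filter.mp hv).2
        have hcard := hcardv v hinj
        rw [pminor_eq_det_submatrix n K _ hcard]
        have hv' : v = ((Finset.image v Finset.univ).orderEmbOfFin hcard) ∘
            (packPerm v hinj hcard) := by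
          funext jj
          exact (packPerm_spec v hinj hcard jj).symm
        conv_lhs => rw [hv']
        rw [show (K.submatrix
            (⇑((Finset.image v Finset.univ).orderEmbOfFin hcard) ∘ ⇑(packPerm v hinj hcard))
            (⇑((Finset.image v Finset.univ).orderEmbOfFin hcard) ∘ ⇑(packPerm v hinj hcard))) =
          (K.submatrix ((Finset.image v Finset.univ).orderEmbOfFin hcard)
            ((Finset.image v Finset.univ).orderEmbOfFin hcard)).submatrix
            (packPerm v hinj hcard) (packPerm v hinj hcard) from rfl]
        rw [Matrix.det_submatrix_equiv_self]
    rw [key, Finset.sum_product]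
    simp only [Finset.sum_const, Finset.card_univ, Fintype.card_perm, Fintype.card_fin,
      nsmul_eq_mul]
    rw [Emin, Finset.mul_sum]

lemma det_piecewise (n : ℕ) (K : Matrix (Fin n) (Fin n) ℂ) (s : Finset (Fin n)) :
    Matrix.det (Matrix.of (s.piecewise K (1 : Matrix (Fin n) (Fin n) ℂ))) = pminor n K s := by
  classical
  let e := (Equiv.sumCompl (fun i => i ∈ s))
  rw [← Matrix.det_submatrix_equiv_self e]
  have : (Matrix.of (s.piecewise K (1 : Matrix (Fin n) (Fin n) ℂ))).submatrix e e =
      Matrix.fromBlocks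
        (K.submatrix (fun i : {j // j ∈ s} => (i : Fin n)) (fun i : {j // j ∈ s} => (i : Fin n)))
        (K.submatrix (fun i : {j // j ∈ s} => (i : Fin n)) (fun i : {j // ¬ j ∈ s} => (i : Fin n)))
        0 (1 : Matrix {j // ¬ j ∈ s} {j // ¬ j ∈ s} ℂ) := by
    ext i j
    cases i with
    | inl i =>
      cases j with
      | inl j =>
        simp only [Matrix.submatrix_apply, Matrix.of_apply, Matrix.fromBlocks_apply₁₁,
          Equiv.sumCompl_apply_inl, e]
        exact congrFun (Finset.piecewise_eq_of_mem _ _ _ i.2) _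
      | inr j =>
        simp only [Matrix.submatrix_apply, Matrix.of_apply, Matrix.fromBlocks_apply₁₂,
          Equiv.sumCompl_apply_inl, Equiv.sumCompl_apply_inr, e]
        exact congrFun (Finset.piecewise_eq_of_mem _ _ _ i.2) _
    | inr i =>
      cases j with
      | inl j =>
        simp only [Matrix.submatrix_apply, Matrix.of_apply, Matrix.fromBlocks_apply₂₁,
          Equiv.sumCompl_apply_inl, Equiv.sumCompl_apply_inr, Matrix.zero_apply, e]
        refine (congrFun (Finset.piecewise_eq_of_notMem _ _ _ i.2) _).trans ?_
        exact Matrix.one_apply_ne (fun h => i.2 (by rw [h]; exact j.2))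
      | inr j =>
        simp only [Matrix.submatrix_apply, Matrix.of_apply, Matrix.fromBlocks_apply₂₂,
          Equiv.sumCompl_apply_inr, e]
        refine (congrFun (Finset.piecewise_eq_of_notMem _ _ _ i.2) _).trans ?_
        by_cases h : i = j
        · subst h; rw [Matrix.one_apply_eq, Matrix.one_apply_eq]
        · rw [Matrix.one_apply_ne (fun hh => h (Subtype.ext hh)), Matrix.one_apply_ne h]
  rw [this, Matrix.det_fromBlocks_zero₂₁, Matrix.det_one, mul_one, pminor]

lemma det_add_smul_one (n : ℕ) (K : Matrix (Fin n) (Fin n) ℂ) (z : ℂ) :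
    Matrix.det (K + z • (1 : Matrix (Fin n) (Fin n) ℂ)) =
      ∑ s : Finset (Fin n), z ^ (n - s.card) * pminor n K s := by
  classical
  have hdet := MultilinearMap.map_add_univ
    ((Matrix.detRowAlternating : (Fin n → ℂ) [⋀^Fin n]→ₗ[ℂ] ℂ)).toMultilinearMap
    K (z • (1 : Matrix (Fin n) (Fin n) ℂ))
  have hdet' : Matrix.det (K + z • (1 : Matrix (Fin n) (Fin n) ℂ)) =
      ∑ s : Finset (Fin n),
        (Matrix.detRowAlternating : (Fin n → ℂ) [⋀^Fin n]→ₗ[ℂ] ℂ)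
          (s.piecewise K (z • (1 : Matrix (Fin n) (Fin n) ℂ))) := hdet
  rw [hdet']
  refine Finset.sum_congr rfl (fun s _ => ?_)
  have hpc : s.piecewise (K : Fin n → Fin n → ℂ)
        ((z • (1 : Matrix (Fin n) (Fin n) ℂ) : Matrix (Fin n) (Fin n) ℂ) : Fin n → Fin n → ℂ) =
      fun i => (if i ∈ s then (1 : ℂ) else z) •
        (s.piecewise K (1 : Matrix (Fin n) (Fin n) ℂ)) i := by
    funext i
    by_cases h : i ∈ s
    · simp [Finset.piecewise, h]
    · simp only [Finset.piecewise, h, if_false]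
      funext j
      simp [Matrix.smul_apply]
  rw [hpc, ← AlternatingMap.coe_multilinearMap, MultilinearMap.map_smul_univ]
  have hprod : (∏ i : Fin n, (if i ∈ s then (1 : ℂ) else z)) = z ^ (n - s.card) := by
    rw [← Finset.prod_mul_prod_compl s]
    rw [Finset.prod_congr rfl (fun i hi => if_pos hi)]
    rw [Finset.prod_congr rfl (fun i hi => if_neg (Finset.mem_compl.mp hi))]
    simp [Finset.card_compl]
  rw [hprod, smul_eq_mul]
  congr 1
  exact det_piecewise n K s

lemma Emin_self (n : ℕ) (K : Matrix (Fin n) (Fin n) ℂ) : Emin n K n = K.det := by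
  classical
  unfold Emin
  have hcard : (Finset.univ : Finset (Fin n)).card = n := by
    rw [Finset.card_univ, Fintype.card_fin]
  have hps : Finset.powersetCard n (Finset.univ : Finset (Fin n)) = {Finset.univ} := by
    ext s
    rw [Finset.mem_powersetCard]
    simp only [Finset.subset_univ, true_and, Finset.mem_singleton]
    constructor
    · intro h
      apply Finset.eq_univ_of_card
      rw [h, Fintype.card_fin]
    · rintro rfl
      rw [Finset.card_univ, Fintype.card_fin]
  rw [hps, Finset.sum_singleton]
  unfold pminor
  exact Matrix.det_submatrix_equiv_self
    (Equiv.subtypeUnivEquiv (fun x : Fin n => Finset.mem_univ x)) K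

lemma Emin_zero (n : ℕ) (K : Matrix (Fin n) (Fin n) ℂ) : Emin n K 0 = 1 := by
  classical
  unfold Emin
  rw [Finset.powersetCard_zero, Finset.sum_singleton]
  unfold pminor
  haveI : IsEmpty {j // j ∈ (∅ : Finset (Fin n))} :=
    ⟨fun x => (Finset.notMem_empty _ x.2)⟩
  exact Matrix.det_isEmpty

lemma Emin_one (n : ℕ) (K : Matrix (Fin n) (Fin n) ℂ) : Emin n K 1 = K.trace := by
  classical
  unfold Emin
  rw [Finset.powersetCard_one, Finset.sum_map]
  rw [Matrix.trace]
  refine Finset.sum_congr rfl (fun i _ => ?_)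
  unfold pminor
  letI : Unique {j // j ∈ ({i} : Finset (Fin n))} :=
    ⟨⟨⟨i, Finset.mem_singleton_self i⟩⟩, fun x => Subtype.ext (Finset.mem_singleton.mp x.2)⟩
  rw [Matrix.det_unique]
  rfl

lemma det_sub_eigen_zero (n : ℕ) (K : Matrix (Fin n) (Fin n) ℂ) (abar : ℂ)
    (habar : abar ∈ spectrum ℂ K) :
    Matrix.det (K + (-abar) • (1 : Matrix (Fin n) (Fin n) ℂ)) = 0 := by
  have h1 : ¬ IsUnit (algebraMap ℂ (Matrix (Fin n) (Fin n) ℂ) abar - K) :=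
    spectrum.mem_iff.mp habar
  have h2 : algebraMap ℂ (Matrix (Fin n) (Fin n) ℂ) abar =
      abar • (1 : Matrix (Fin n) (Fin n) ℂ) := by
    rw [Algebra.algebraMap_eq_smul_one]
  rw [h2] at h1
  have h3 : Matrix.det (abar • (1 : Matrix (Fin n) (Fin n) ℂ) - K) = 0 := by
    by_contra h
    exact h1 ((Matrix.isUnit_iff_isUnit_det _).mpr (isUnit_iff_ne_zero.mpr h))
  have h4 : K + (-abar) • (1 : Matrix (Fin n) (Fin n) ℂ) =
      -(abar • (1 : Matrix (Fin n) (Fin n) ℂ) - K) := by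
    rw [neg_sub, neg_smul]; rfl
  rw [h4, Matrix.det_neg, h3, mul_zero]

lemma spectral_sum (n : ℕ) (K : Matrix (Fin n) (Fin n) ℂ) (abar : ℂ)
    (habar : abar ∈ spectrum ℂ K) :
    ∑ m ∈ Finset.range (n + 1), (-abar) ^ (n - m) * Emin n K m = 0 := by
  classical
  have h1 := det_add_smul_one n K (-abar)
  rw [det_sub_eigen_zero n K abar habar] at h1
  have h2 : ∑ s : Finset (Fin n), (-abar) ^ (n - s.card) * pminor n K s =
      ∑ m ∈ Finset.range (n + 1), (-abar) ^ (n - m) * Emin n K m := by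
    rw [← Finset.powerset_univ, Finset.sum_powerset]
    rw [Finset.card_univ, Fintype.card_fin]
    refine Finset.sum_congr rfl (fun m _ => ?_)
    rw [Emin, Finset.mul_sum]
    refine Finset.sum_congr rfl (fun s hs => ?_)
    rw [(Finset.mem_powersetCard.mp hs).2]
  rw [← h2, ← h1]

lemma charSum (n : ℕ) (K : Matrix (Fin n) (Fin n) ℂ) (abar : ℂ)
    (habar : abar ∈ spectrum ℂ K) :
    (-1 : ℂ) * K.det +
      ∑ j ∈ Finset.range n, (-1 : ℂ) ^ j * abar ^ (j + 1) * Emin n K (n - 1 - j) = 0 := by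
  have h := spectral_sum n K abar habar
  rw [Finset.sum_range_succ, Nat.sub_self, pow_zero, one_mul, Emin_self] at h
  have h2 : ∑ j ∈ Finset.range n, (-1 : ℂ) ^ j * abar ^ (j + 1) * Emin n K (n - 1 - j)
      = ∑ j ∈ Finset.range n, -((-abar) ^ (n - (n - 1 - j)) * Emin n K (n - 1 - j)) := by
    refine Finset.sum_congr rfl (fun j hj => ?_)
    have hj' : j < n := Finset.mem_range.mp hj
    rw [show n - (n - 1 - j) = j + 1 from by omega, neg_pow]
    ring
  rw [h2, Finset.sum_neg_distrib,
    Finset.sum_range_reflect (fun m => (-abar) ^ (n - m) * Emin n K m) n]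
  linear_combination -h

lemma asymCoef_eq_sum_det (n m : ℕ) (K : Matrix (Fin n) (Fin n) ℂ) :
    asymCoef n K m =
      (m.factorial : ℂ)⁻¹ * ∑ v : Fin m → Fin n, Matrix.det (K.submatrix v v) := by
  unfold asymCoef antisym Ktensor
  rw [Matrix.trace]
  simp only [Matrix.diag_apply, Matrix.smul_mul, Matrix.smul_apply, smul_eq_mul]
  rw [← Finset.mul_sum]
  congr 1
  refine Finset.sum_congr rfl (fun v _ => ?_)
  rw [Matrix.sum_mul, Matrix.sum_apply]
  have step : ∀ c : Equiv.Perm (Fin m),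
      (((Equiv.Perm.sign c : ℤ) : ℂ) • permTensorOp n m c *
        Matrix.of (fun v w : Fin m → Fin n => ∏ j, K (v j) (w j))) v v =
      ((Equiv.Perm.sign c : ℤ) : ℂ) * ∏ j, K (v (c⁻¹ j)) (v j) := by
    intro c
    rw [Matrix.smul_mul, Matrix.smul_apply, smul_eq_mul]
    congr 1
    simp only [Matrix.mul_apply, permTensorOp, Matrix.of_apply, ite_mul, one_mul, zero_mul]
    have hcond : ∀ u : Fin m → Fin n, (v = u ∘ c) ↔ (u = v ∘ ⇑c⁻¹) := by
      intro u
      constructor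
      · intro h; funext j; simp [h]
      · intro h; funext j; simp [h]
    simp_rw [hcond]
    rw [Finset.sum_ite_eq' Finset.univ (v ∘ ⇑c⁻¹)
      (fun u => ∏ j, K (u j) (v j))]
    simp
  simp_rw [step]
  rw [Matrix.det_apply']
  exact Fintype.sum_equiv (Equiv.inv (Equiv.Perm (Fin m))) _ _
    (fun c => by simp [Equiv.Perm.sign_inv])

lemma asymCoef_eq_Emin (n m : ℕ) (K : Matrix (Fin n) (Fin n) ℂ) :
    asymCoef n K m = Emin n K m := by
  rw [asymCoef_eq_sum_det, sum_det_submatrix, ← mul_assoc,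
    inv_mul_cancel₀ (Nat.cast_ne_zero.mpr (Nat.factorial_ne_zero m)), one_mul]

lemma Ecoef_eq_Emin (n : ℕ) (K : Matrix (Fin n) (Fin n) ℂ) :
    ∀ m, Ecoef n K m = Emin n K m
  | 0 => by rw [Ecoef, Emin_zero]
  | 1 => by rw [Ecoef, Emin_one]
  | m + 2 => by rw [Ecoef]; exact asymCoef_eq_Emin n (m + 2) K

open Polynomial in
def Qpoly (n N : ℕ) (η : ℂ) (ξ : Fin N → ℂ) (K : Matrix (Fin n) (Fin n) ℂ)
    (x : Fin N → ℂ) (abar : ℂ) (M : ℕ) (lamr : Fin M → ℂ) : Polynomial ℂ :=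
  ∑ b ∈ Finset.range (n + 1), alphaPoly N η ξ abar b * phiPoly M lamr η b *
    (if b = 0 then qdetPoly n N η ξ K else tpoly n N η ξ K x ((b : ℂ) * η) (n - b))

open Polynomial in
lemma Qpoly_eval (n N : ℕ) (hn : 2 ≤ n) (η : ℂ) (ξ : Fin N → ℂ)
    (K : Matrix (Fin n) (Fin n) ℂ) (x : Fin N → ℂ) (abar : ℂ) (M : ℕ)
    (lamr : Fin M → ℂ) (lam : ℂ) :
    (Qpoly n N η ξ K x abar M lamr).eval lam =
      ∑ b ∈ Finset.range (n + 1),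
        alphaF N η ξ abar b lam * (∏ j, (lam - (b : ℂ) * η - lamr j)) *
          (if n - b = n then qdet n N η ξ K (lam - (b : ℂ) * η)
            else tfun n N η ξ K x (n - b) (lam - (b : ℂ) * η)) := by
  rw [Qpoly, eval_finset_sum]
  refine Finset.sum_congr rfl (fun b hb => ?_)
  rw [eval_mul, eval_mul, alphaPoly_eval, phiPoly_eval]
  congr 1
  by_cases hb0 : b = 0
  · subst hb0
    rw [if_pos rfl, if_pos (Nat.sub_zero n), qdetPoly_eval]
    norm_num
  · have hbn : b ≤ n := by
      have := Finset.mem_range.mp hb; omega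
    rw [if_neg hb0, if_neg (by omega), tpoly_eval]

open Polynomial in
lemma Qpoly_natDegree_le (n N : ℕ) (hn : 2 ≤ n) (hN : 1 ≤ N) (η : ℂ) (ξ : Fin N → ℂ)
    (K : Matrix (Fin n) (Fin n) ℂ) (x : Fin N → ℂ) (abar : ℂ) (M : ℕ)
    (lamr : Fin M → ℂ) :
    (Qpoly n N η ξ K x abar M lamr).natDegree ≤ n * N + M := by
  refine Polynomial.natDegree_sum_le_of_forall_le _ _ (fun b hb => ?_)
  have hbn : b ≤ n := by have := Finset.mem_range.mp hb; omega
  have h1 : (alphaPoly N η ξ abar b * phiPoly M lamr η b).natDegree ≤ b * N + M :=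
    le_trans natDegree_mul_le (add_le_add (alphaPoly_natDegree_le N η ξ abar b).1
      (phiPoly_natDegree M lamr η b).1.le)
  have h2 : (if b = 0 then qdetPoly n N η ξ K
      else tpoly n N η ξ K x ((b : ℂ) * η) (n - b)).natDegree ≤ (n - b) * N := by
    by_cases hb0 : b = 0
    · subst hb0
      rw [if_pos rfl, Nat.sub_zero]
      exact (qdetPoly_natDegree_le n N (by omega) η ξ K).1
    · rw [if_neg hb0]
      exact (tpoly_natDegree_le n N η ξ K x _ hN (n - b)).1
  refine le_trans natDegree_mul_le ?_
  refine le_trans (add_le_add h1 h2) ?_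
  have hsum : b * N + (n - b) * N = n * N := by
    have : b + (n - b) = n := by omega
    calc b * N + (n - b) * N = (b + (n - b)) * N := by ring
    _ = n * N := by rw [this]
  omega

open Polynomial in
lemma Qpoly_coeff_top (n N : ℕ) (hn : 2 ≤ n) (hN : 1 ≤ N) (η : ℂ) (ξ : Fin N → ℂ)
    (K : Matrix (Fin n) (Fin n) ℂ) (x : Fin N → ℂ) (abar : ℂ)
    (habar : abar ∈ spectrum ℂ K) (M : ℕ) (lamr : Fin M → ℂ) :
    (Qpoly n N η ξ K x abar M lamr).coeff (n * N + M) = 0 := by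
  rw [Qpoly, finset_sum_coeff]
  have key : ∀ b ∈ Finset.range (n + 1),
      (alphaPoly N η ξ abar b * phiPoly M lamr η b *
        (if b = 0 then qdetPoly n N η ξ K
          else tpoly n N η ξ K x ((b : ℂ) * η) (n - b))).coeff (n * N + M) =
      (if b = 0 then -1 else (-1 : ℂ) ^ (b - 1) * abar ^ b) *
        (if b = 0 then K.det else Ecoef n K (n - b)) := by
    intro b hb
    have hbn : b ≤ n := by have := Finset.mem_range.mp hb; omega
    have h1 : (alphaPoly N η ξ abar b * phiPoly M lamr η b).natDegree ≤ b * N + M :=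
      le_trans natDegree_mul_le (add_le_add (alphaPoly_natDegree_le N η ξ abar b).1
        (phiPoly_natDegree M lamr η b).1.le)
    have h2 : (if b = 0 then qdetPoly n N η ξ K
        else tpoly n N η ξ K x ((b : ℂ) * η) (n - b)).natDegree ≤ (n - b) * N := by
      by_cases hb0 : b = 0
      · subst hb0
        rw [if_pos rfl, Nat.sub_zero]
        exact (qdetPoly_natDegree_le n N (by omega) η ξ K).1
      · rw [if_neg hb0]
        exact (tpoly_natDegree_le n N η ξ K x _ hN (n - b)).1
    have hsplit : n * N + M = (b * N + M) + (n - b) * N := by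
      have hbb : b + (n - b) = n := by omega
      calc n * N + M = (b + (n - b)) * N + M := by rw [hbb]
      _ = (b * N + M) + (n - b) * N := by ring
    rw [hsplit, coeff_mul_add_eq_of_natDegree_le h1 h2,
      coeff_mul_add_eq_of_natDegree_le (alphaPoly_natDegree_le N η ξ abar b).1
        (phiPoly_natDegree M lamr η b).1.le]
    rw [(alphaPoly_natDegree_le N η ξ abar b).2, (phiPoly_natDegree M lamr η b).2, mul_one]
    congr 1
    by_cases hb0 : b = 0
    · subst hb0
      rw [if_pos rfl, if_pos rfl, Nat.sub_zero]
      exact (qdetPoly_natDegree_le n N (by omega) η ξ K).2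
    · rw [if_neg hb0, if_neg hb0]
      exact (tpoly_natDegree_le n N η ξ K x _ hN (n - b)).2
  rw [Finset.sum_congr rfl key]
  rw [Finset.sum_range_succ']
  have hch := charSum n K abar habar
  have hrw : ∀ j ∈ Finset.range n,
      (if j + 1 = 0 then (-1 : ℂ) else (-1 : ℂ) ^ (j + 1 - 1) * abar ^ (j + 1)) *
        (if j + 1 = 0 then K.det else Ecoef n K (n - (j + 1))) =
      (-1 : ℂ) ^ j * abar ^ (j + 1) * Emin n K (n - 1 - j) := by
    intro j hj
    rw [if_neg (Nat.succ_ne_zero j), if_neg (Nat.succ_ne_zero j), Nat.add_sub_cancel,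
      show n - (j + 1) = n - 1 - j from by omega, Ecoef_eq_Emin]
  rw [Finset.sum_congr rfl hrw, if_pos rfl, if_pos rfl]
  linear_combination hch

lemma alpha1_root (N : ℕ) (η : ℂ) (ξ : Fin N → ℂ) (abar : ℂ) (a : Fin N) :
    alpha1 N η ξ abar (ξ a - η) = 0 := by
  unfold alpha1
  rw [Finset.prod_eq_zero (Finset.mem_univ a) (by ring), mul_zero]

lemma alphaF_succ (N : ℕ) (η : ℂ) (ξ : Fin N → ℂ) (abar : ℂ) :
    ∀ j (lam : ℂ), alphaF N η ξ abar (j + 1) lam =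
      -(alpha1 N η ξ abar (lam - (j : ℂ) * η)) * alphaF N η ξ abar j lam
  | 0, lam => by
      have h1 : ∏ h ∈ Finset.range 1, alpha1 N η ξ abar (lam - (h : ℂ) * η) =
          alpha1 N η ξ abar lam := by
        rw [Finset.prod_range_one, Nat.cast_zero, zero_mul, sub_zero]
      simp only [alphaF, pow_zero, one_mul, h1, Nat.cast_zero, zero_mul, sub_zero]
      ring
  | j + 1, lam => by
      simp only [alphaF]
      rw [Finset.prod_range_succ]
      rw [pow_succ]
      push_cast
      ring

lemma alphaF_zero_of (N : ℕ) (η : ℂ) (ξ : Fin N → ℂ) (abar : ℂ) (j : ℕ) (lam : ℂ)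
    (h : ℕ) (hh : h < j + 1) (hz : alpha1 N η ξ abar (lam - (h : ℂ) * η) = 0) :
    alphaF N η ξ abar (j + 1) lam = 0 := by
  simp only [alphaF]
  rw [Finset.prod_eq_zero (Finset.mem_range.mpr hh) hz, mul_zero]

lemma tfun_zero_at (n N : ℕ) (η : ℂ) (ξ : Fin N → ℂ) (K : Matrix (Fin n) (Fin n) ℂ)
    (x : Fin N → ℂ) (m : ℕ) (a : Fin N) (r : ℕ) (hr1 : 1 ≤ r) (hr2 : r ≤ m + 1) :
    tfun n N η ξ K x (m + 2) (ξ a + (r : ℂ) * η) = 0 := by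
  show (∏ b, ∏ rr ∈ Finset.Icc 1 (m + 1), (ξ a + (r : ℂ) * η - ξ b - (rr : ℂ) * η)) * _ = 0
  rw [Finset.prod_eq_zero (Finset.mem_univ a)
    (Finset.prod_eq_zero (Finset.mem_Icc.mpr ⟨hr1, hr2⟩) (by ring)), zero_mul]

lemma qdet_root_low (n N : ℕ) (η : ℂ) (ξ : Fin N → ℂ) (K : Matrix (Fin n) (Fin n) ℂ)
    (a : Fin N) : qdet n N η ξ K (ξ a - η) = 0 := by
  unfold qdet
  rw [Finset.prod_eq_zero (Finset.mem_univ a) (by rw [show ξ a - η - ξ a + η = 0 by ring,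
    zero_mul]), mul_zero]

lemma qdet_root_high (n N : ℕ) (hn : 2 ≤ n) (η : ℂ) (ξ : Fin N → ℂ)
    (K : Matrix (Fin n) (Fin n) ℂ) (a : Fin N) (r : ℕ) (hr1 : 1 ≤ r) (hr2 : r ≤ n - 1) :
    qdet n N η ξ K (ξ a + (r : ℂ) * η) = 0 := by
  unfold qdet
  rw [Finset.prod_eq_zero (Finset.mem_univ a) (by
    rw [Finset.prod_eq_zero (Finset.mem_Icc.mpr ⟨hr1, hr2⟩) (by ring), mul_zero]), mul_zero]

lemma t1_step (n N : ℕ) (η : ℂ) (ξ : Fin N → ℂ) (hinj : Function.Injective ξ)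
    (K : Matrix (Fin n) (Fin n) ℂ) (x : Fin N → ℂ) (a : Fin N) :
    tfun n N η ξ K x 1 (ξ a) = x a := by
  show t1fun n N ξ K x (ξ a) = x a
  unfold t1fun
  have h0 : (∏ b, (ξ a - ξ b)) = 0 :=
    Finset.prod_eq_zero (Finset.mem_univ a) (sub_self _)
  rw [h0, mul_zero, zero_add]
  rw [Finset.sum_eq_single a]
  · rw [Finset.prod_eq_one (fun b hb => div_self (sub_ne_zero.mpr
      (fun hc => (Finset.mem_erase.mp hb).1 (hinj hc).symm))), mul_one]
  · intro a' _ ha'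
    rw [Finset.prod_eq_zero (Finset.mem_erase.mpr ⟨fun h => ha' h.symm, Finset.mem_univ a⟩)
      (by rw [sub_self, zero_div]), mul_zero]
  · intro h
    exact absurd (Finset.mem_univ a) h

lemma prod_shift_ne (n N : ℕ) (hη : η ≠ 0) : True := trivial

lemma t_step (n N : ℕ) (η : ℂ) (hη : η ≠ 0) (ξ : Fin N → ℂ)
    (hinj : Function.Injective ξ)
    (hsep : ∀ a b : Fin N, a ≠ b → ∀ k : ℤ, k ≠ 0 → k.natAbs ≤ n →
      ξ a - ξ b ≠ (k : ℂ) * η)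
    (K : Matrix (Fin n) (Fin n) ℂ) (x : Fin N → ℂ) (m : ℕ) (hm : m + 1 ≤ n) (a : Fin N) :
    tfun n N η ξ K x (m + 2) (ξ a) = x a * tfun n N η ξ K x (m + 1) (ξ a - η) := by
  have hne : ∀ b : Fin N, ∀ r ∈ Finset.Icc 1 (m + 1), ξ a - ξ b - (r : ℂ) * η ≠ 0 := by
    intro b r hr
    obtain ⟨hr1, hr2⟩ := Finset.mem_Icc.mp hr
    by_cases hab : a = b
    · subst hab
      rw [sub_self, zero_sub, neg_ne_zero]
      exact mul_ne_zero (Nat.cast_ne_zero.mpr (by omega)) hη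
    · intro hzero
      refine hsep a b hab (r : ℤ) (by exact_mod_cast (by omega : r ≠ 0))
        (by simp; omega) ?_
      push_cast
      linear_combination hzero
  have hprodne : (∏ b, ∏ r ∈ Finset.Icc 1 (m + 1), (ξ a - ξ b - (r : ℂ) * η)) ≠ 0 :=
    Finset.prod_ne_zero_iff.mpr (fun b _ =>
      Finset.prod_ne_zero_iff.mpr (fun r hr => hne b r hr))
  show (∏ b, ∏ r ∈ Finset.Icc 1 (m + 1), (ξ a - ξ b - (r : ℂ) * η)) *
      (asymCoef n K (m + 2) * ∏ b, (ξ a - ξ b) +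
        ∑ a', gfun N η ξ (m + 1) a' (ξ a) * x a' *
          tfun n N η ξ K x (m + 1) (ξ a' - η)) = _
  have h0 : (∏ b, (ξ a - ξ b)) = 0 :=
    Finset.prod_eq_zero (Finset.mem_univ a) (sub_self _)
  rw [h0, mul_zero, zero_add]
  rw [Finset.sum_eq_single a]
  · unfold gfun
    rw [Finset.prod_eq_one (fun b hb => div_self (sub_ne_zero.mpr
      (fun hc => (Finset.mem_erase.mp hb).1 (hinj hc).symm))), one_mul]
    have hinv : (∏ b, ∏ r ∈ Finset.Icc 1 (m + 1), (ξ a - ξ b - (r : ℂ) * η)⁻¹) =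
        (∏ b, ∏ r ∈ Finset.Icc 1 (m + 1), (ξ a - ξ b - (r : ℂ) * η))⁻¹ := by
      rw [← Finset.prod_inv_distrib]
      exact Finset.prod_congr rfl (fun b _ => by rw [← Finset.prod_inv_distrib])
    rw [hinv]
    have hcancel := mul_inv_cancel₀ hprodne
    linear_combination (x a * tfun n N η ξ K x (m + 1) (ξ a - η)) * hcancel
  · intro a' _ ha'
    unfold gfun
    rw [Finset.prod_eq_zero (Finset.mem_erase.mpr ⟨fun h => ha' h.symm, Finset.mem_univ a⟩)
      (by rw [sub_self, zero_div]), zero_mul, zero_mul, zero_mul]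
  · intro h
    exact absurd (Finset.mem_univ a) h

lemma alphaF_one (N : ℕ) (η : ℂ) (ξ : Fin N → ℂ) (abar lam : ℂ) :
    alphaF N η ξ abar 1 lam = alpha1 N η ξ abar lam := by
  show (-1 : ℂ) ^ 0 * ∏ h ∈ Finset.range 1, alpha1 N η ξ abar (lam - (h : ℂ) * η) = _
  rw [Finset.prod_range_one, Nat.cast_zero, zero_mul, sub_zero, pow_zero, one_mul]

lemma Svanish (n N : ℕ) (hn : 2 ≤ n) (hN : 1 ≤ N)
    (η : ℂ) (hη : η ≠ 0) (ξ : Fin N → ℂ) (hinj : Function.Injective ξ)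
    (hsep : ∀ a b : Fin N, a ≠ b → ∀ k : ℤ, k ≠ 0 → k.natAbs ≤ n →
      ξ a - ξ b ≠ (k : ℂ) * η)
    (K : Matrix (Fin n) (Fin n) ℂ)
    (abar : ℂ) (x : Fin N → ℂ)
    (hx : ∀ a : Fin N,
      x a * tfun n N η ξ K x (n - 1) (ξ a - η) = qdet n N η ξ K (ξ a))
    (M : ℕ) (lamr : Fin M → ℂ)
    (hdisc : ∀ a : Fin N,
      alphaF N η ξ abar 1 (ξ a) * (∏ j, (ξ a - η - lamr j)) =
        x a * ∏ j, (ξ a - lamr j))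
    (a : Fin N) (k : ℕ) (hk : k ≤ n) :
    ∑ b ∈ Finset.range (n + 1),
        alphaF N η ξ abar b (ξ a + (k : ℂ) * η - η) *
          (∏ j, (ξ a + (k : ℂ) * η - η - (b : ℂ) * η - lamr j)) *
          (if n - b = n then qdet n N η ξ K (ξ a + (k : ℂ) * η - η - (b : ℂ) * η)
            else tfun n N η ξ K x (n - b) (ξ a + (k : ℂ) * η - η - (b : ℂ) * η)) = 0 := by
  set lam := ξ a + (k : ℂ) * η - η with hlam
  match k with
  | 0 =>
    refine Finset.sum_eq_zero (fun b hb => ?_)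
    match b with
    | 0 =>
      have h1 : lam - ((0 : ℕ) : ℂ) * η = ξ a - η := by rw [hlam]; push_cast; ring
      rw [if_pos (Nat.sub_zero n), h1, qdet_root_low, mul_zero]
    | j + 1 =>
      have h1 : alpha1 N η ξ abar (lam - ((0 : ℕ) : ℂ) * η) = 0 := by
        rw [show lam - ((0 : ℕ) : ℂ) * η = ξ a - η from by rw [hlam]; push_cast; ring]
        exact alpha1_root N η ξ abar a
      rw [alphaF_zero_of N η ξ abar j lam 0 (by omega) h1, zero_mul, zero_mul]
  | k' + 1 =>
    have hlam' : lam = ξ a + (k' : ℂ) * η := by rw [hlam]; push_cast; ring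
    have hzero : ∀ b ∈ Finset.range (n + 1), b ∉ ({k', k' + 1} : Finset ℕ) →
        alphaF N η ξ abar b lam * (∏ j, (lam - (b : ℂ) * η - lamr j)) *
          (if n - b = n then qdet n N η ξ K (lam - (b : ℂ) * η)
            else tfun n N η ξ K x (n - b) (lam - (b : ℂ) * η)) = 0 := by
      intro b hb hbp
      have hbn : b ≤ n := by have := Finset.mem_range.mp hb; omega
      have hbne : b ≠ k' ∧ b ≠ k' + 1 := by
        constructor <;> (intro h; exact hbp (by simp [h]))
      rcases lt_or_gt_of_ne hbne.1 with hblt | hbgt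
      · -- b < k' : tfun/qdet vanishes
        match b, hblt with
        | 0, hblt =>
          have h1 : lam - ((0 : ℕ) : ℂ) * η = ξ a + (k' : ℂ) * η := by
            rw [hlam']; push_cast; ring
          rw [if_pos (Nat.sub_zero n), h1, qdet_root_high n N hn η ξ K a k' (by omega)
            (by omega), mul_zero]
        | b + 1, hblt =>
          have hnb : n - (b + 1) = (n - b - 3) + 2 := by omega
          have h1 : lam - ((b + 1 : ℕ) : ℂ) * η = ξ a + ((k' - (b + 1) : ℕ) : ℂ) * η := by
            rw [hlam']
            have : ((k' - (b + 1) : ℕ) : ℂ) = (k' : ℂ) - ((b + 1 : ℕ) : ℂ) := by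
              push_cast [Nat.cast_sub (by omega : b + 1 ≤ k')]
              ring
            rw [this]
            push_cast
            ring
          rw [if_neg (by omega), hnb, h1, tfun_zero_at n N η ξ K x _ a _ (by omega)
            (by omega), mul_zero]
      · -- b > k' + 1 : alphaF vanishes
        match b, hbgt with
        | j + 1, hbgt =>
          have h1 : alpha1 N η ξ abar (lam - ((k' + 1 : ℕ) : ℂ) * η) = 0 := by
            rw [show lam - ((k' + 1 : ℕ) : ℂ) * η = ξ a - η from by rw [hlam']; push_cast; ring]
            exact alpha1_root N η ξ abar a
          rw [alphaF_zero_of N η ξ abar j lam (k' + 1) (by omega) h1, zero_mul, zero_mul]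
    rw [← Finset.sum_subset (by
        intro b hbp
        simp only [Finset.mem_insert, Finset.mem_singleton] at hbp
        rcases hbp with rfl | rfl <;> (apply Finset.mem_range.mpr; omega)) hzero]
    rw [show ({k', k' + 1} : Finset ℕ) = insert k' {k' + 1} from rfl,
      Finset.sum_insert (by simp)]
    rw [Finset.sum_singleton]
    -- now the two-term cancellation
    have hT1 : (if n - (k' + 1) = n then qdet n N η ξ K (lam - ((k' + 1 : ℕ) : ℂ) * η)
        else tfun n N η ξ K x (n - (k' + 1)) (lam - ((k' + 1 : ℕ) : ℂ) * η)) =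
        tfun n N η ξ K x (n - k' - 1) (ξ a - η) := by
      rw [if_neg (by omega), show lam - ((k' + 1 : ℕ) : ℂ) * η = ξ a - η from by
        rw [hlam']; push_cast; ring, show n - (k' + 1) = n - k' - 1 from by omega]
    have hT0 : (if n - k' = n then qdet n N η ξ K (lam - (k' : ℂ) * η)
        else tfun n N η ξ K x (n - k') (lam - (k' : ℂ) * η)) =
        x a * tfun n N η ξ K x (n - k' - 1) (ξ a - η) := by
      have hlk : lam - (k' : ℂ) * η = ξ a := by rw [hlam']; ring
      match k' with
      | 0 =>
        rw [if_pos (Nat.sub_zero n), hlk, ← hx a, Nat.sub_zero]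
      | k'' + 1 =>
        rw [if_neg (by omega), hlk]
        rcases eq_or_lt_of_le (show k'' + 2 ≤ n from by omega) with heq | hlt
        · -- n - k' = 1
          have h2 := t1_step n N η ξ hinj K x a
          rw [show (1 : ℕ) = n - (k'' + 1) from by omega] at h2
          rw [h2, show n - (k'' + 1) - 1 = 0 from by omega]
          show x a = x a * 1
          rw [mul_one]
        · -- n - k' ≥ 2
          have h2 := t_step n N η hη ξ hinj hsep K x (n - k'' - 3) (by omega) a
          rw [show n - k'' - 3 + 2 = n - (k'' + 1) from by omega,
            show n - k'' - 3 + 1 = n - (k'' + 1) - 1 from by omega] at h2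
          rw [h2]
    have hA1 : alphaF N η ξ abar (k' + 1) lam =
        -(alpha1 N η ξ abar (ξ a)) * alphaF N η ξ abar k' lam := by
      rw [alphaF_succ N η ξ abar k' lam, hlam']
      rw [show ξ a + (k' : ℂ) * η - (k' : ℂ) * η = ξ a from by ring]
    have hphi1 : (∏ j, (lam - ((k' + 1 : ℕ) : ℂ) * η - lamr j)) =
        ∏ j, (ξ a - η - lamr j) := by
      refine Finset.prod_congr rfl (fun j _ => ?_)
      rw [hlam']; push_cast; ring
    have hphi0 : (∏ j, (lam - (k' : ℂ) * η - lamr j)) = ∏ j, (ξ a - lamr j) := by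
      refine Finset.prod_congr rfl (fun j _ => ?_)
      rw [hlam']; ring
    have hd := hdisc a
    rw [alphaF_one] at hd
    rw [hT0, hT1, hA1, hphi0, hphi1]
    linear_combination (-(alphaF N η ξ abar k' lam *
      tfun n N η ξ K x (n - k' - 1) (ξ a - η))) * hd

/-- the SoV discrete system implies the quantum spectral curve: if `x`
solves the SoV discrete system and the polynomial `φ` (with roots avoiding the
inhomogeneities) satisfies the discrete Baxter relations at the inhomogeneities, then the
quantum spectral curve functional equation holds identically. -/
theorem sov_implies_spectral_curve (n N : ℕ) (hn : 2 ≤ n) (hN : 1 ≤ N)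
    (η : ℂ) (hη : η ≠ 0) (ξ : Fin N → ℂ) (hinj : Function.Injective ξ)
    (hsep : ∀ a b : Fin N, a ≠ b → ∀ k : ℤ, k ≠ 0 → k.natAbs ≤ n →
      ξ a - ξ b ≠ (k : ℂ) * η)
    (K : Matrix (Fin n) (Fin n) ℂ) (hK : IsUnit K.det)
    (abar : ℂ) (habar : abar ∈ spectrum ℂ K)
    (x : Fin N → ℂ)
    (hx : ∀ a : Fin N,
      x a * tfun n N η ξ K x (n - 1) (ξ a - η) = qdet n N η ξ K (ξ a))
    (M : ℕ) (hM : M ≤ N) (lamr : Fin M → ℂ) (hroots : ∀ j a, lamr j ≠ ξ a)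
    (hdisc : ∀ a : Fin N,
      alphaF N η ξ abar 1 (ξ a) * (∏ j, (ξ a - η - lamr j)) =
        x a * ∏ j, (ξ a - lamr j)) :
    ∀ lam : ℂ,
      ∑ b ∈ Finset.range (n + 1),
        alphaF N η ξ abar b lam * (∏ j, (lam - (b : ℂ) * η - lamr j)) *
          (if n - b = n then qdet n N η ξ K (lam - (b : ℂ) * η)
            else tfun n N η ξ K x (n - b) (lam - (b : ℂ) * η)) = 0 := by
  intro lam
  classical
  have hcoeff := Qpoly_coeff_top n N hn hN η ξ K x abar habar M lamr
  have hdegle := Qpoly_natDegree_le n N hn hN η ξ K x abar M lamr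
  have hQ0 : Qpoly n N η ξ K x abar M lamr = 0 := by
    by_cases hz : Qpoly n N η ξ K x abar M lamr = 0
    · exact hz
    · have hdeglt : (Qpoly n N η ξ K x abar M lamr).natDegree < n * N + M := by
        rcases lt_or_eq_of_le hdegle with h | h
        · exact h
        · exfalso
          apply hz
          rw [← Polynomial.leadingCoeff_eq_zero, Polynomial.leadingCoeff, h]
          exact hcoeff
      refine Polynomial.eq_zero_of_natDegree_lt_card_of_eval_eq_zero
        (Qpoly n N η ξ K x abar M lamr)
        (f := fun p : Fin N × Fin (n + 1) => ξ p.1 + ((p.2 : ℕ) : ℂ) * η - η) ?_ ?_ ?_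
      · rintro ⟨a, kk⟩ ⟨a', kk'⟩ hpq
        simp only at hpq
        have hklt := kk.isLt
        have hklt' := kk'.isLt
        by_cases haa : a = a'
        · subst haa
          have h1 : ((kk : ℕ) : ℂ) * η = ((kk' : ℕ) : ℂ) * η := by linear_combination hpq
          have h3 : (kk : ℕ) = (kk' : ℕ) :=
            Nat.cast_injective (mul_right_cancel₀ hη h1)
          rw [Prod.mk.injEq]
          exact ⟨rfl, Fin.ext h3⟩
        · exfalso
          by_cases hkk : (kk : ℕ) = (kk' : ℕ)
          · refine haa (hinj ?_)
            rw [hkk] at hpq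
            linear_combination hpq
          · refine hsep a a' haa (((kk' : ℕ) : ℤ) - ((kk : ℕ) : ℤ)) (by omega) (by omega) ?_
            push_cast
            linear_combination hpq
      · intro p
        rw [Qpoly_eval n N hn η ξ K x abar M lamr]
        have hple : (p.2 : ℕ) ≤ n := by have := p.2.isLt; omega
        exact Svanish n N hn hN η hη ξ hinj hsep K abar x hx M lamr hdisc p.1 (p.2 : ℕ) hple
      · rw [Fintype.card_prod, Fintype.card_fin, Fintype.card_fin]
        have hrng : n * N + N = N * (n + 1) := by ring
        omega
  have heval := Qpoly_eval n N hn η ξ K x abar M lamr lam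
  rw [hQ0, Polynomial.eval_zero] at heval
  exact heval.symm


end GLnSoV
end
end
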